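/- arXiv:1910.04057 — 13 statements merged into one kernel-verified Lean document; each statement's English description precedes it below -/
import Mathlib

section
/- Let f : ℝ^p → ℝ be μ-strongly convex and L-smooth with 0 < μ ≤ L, let x⋆ be its (unique) minimizer, and let 0 < α ≤ 1/L. Then for every x ∈ ℝ^p, ‖x − α∇f(x) − x⋆‖ ≤ (1 − μα)‖x − x⋆‖. -/
open RealInnerProductSpace


lemma descent {p : ℕ} (L : ℝ) (hL : 0 ≤ L) (f : EuclideanSpace ℝ (Fin p) → ℝ)
    (hdiff : Differentiable ℝ f)
    (hsmooth : ∀ x y, ‖gradient f x - gradient f y‖ ≤ L * ‖x - y‖)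
    (x y : EuclideanSpace ℝ (Fin p)) :
    f y ≤ f x + ⟪gradient f x, y - x⟫ + L / 2 * ‖y - x‖ ^ 2 := by
  set d := y - x with hd
  have hline : ∀ t : ℝ, HasDerivAt (fun t : ℝ => f (x + t • d)) ⟪gradient f (x + t • d), d⟫ t := by
    intro t
    have h1 : HasDerivAt (fun t : ℝ => x + t • d) d t := by
      simpa using (hasDerivAt_id t).smul_const d |>.const_add x
    have h2 := ((hdiff (x + t • d)).hasGradientAt).hasFDerivAt
    have h3 := h2.comp_hasDerivAt t h1
    simp only [InnerProductSpace.toDual_apply_apply] at h3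
    exact h3
  have hgradcont : Continuous (gradient f) := by
    rcases eq_or_lt_of_le hL with h | h
    · have : ∀ a b, gradient f a = gradient f b := by
        intro a b
        have := hsmooth a b
        rw [← h] at this
        have h0 : ‖gradient f a - gradient f b‖ = 0 := le_antisymm (by simpa using this) (norm_nonneg _)
        rwa [norm_eq_zero, sub_eq_zero] at h0
      exact (continuous_const (y := gradient f 0)).congr fun a => (this 0 a)
    · exact (LipschitzWith.of_dist_le_mul (K := ⟨L, hL⟩) (by
        intro a b; simp only [dist_eq_norm]; exact hsmooth a b)).continuous
  have hcont : Continuous fun t : ℝ => ⟪gradient f (x + t • d), d⟫ := by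
    exact (hgradcont.comp (by continuity)).inner continuous_const
  have hftc : f y - f x = ∫ t in (0:ℝ)..1, ⟪gradient f (x + t • d), d⟫ := by
    have := intervalIntegral.integral_eq_sub_of_hasDerivAt (a := (0:ℝ)) (b := 1)
      (f := fun t : ℝ => f (x + t • d)) (f' := fun t => ⟪gradient f (x + t • d), d⟫)
      (fun t _ => hline t) (hcont.intervalIntegrable 0 1)
    rw [this]
    simp [hd]
  have hbound : (∫ t in (0:ℝ)..1, ⟪gradient f (x + t • d), d⟫)
      ≤ ∫ t in (0:ℝ)..1, (⟪gradient f x, d⟫ + L * t * ‖d‖ ^ 2) := by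
    apply intervalIntegral.integral_mono_on (by norm_num) (hcont.intervalIntegrable 0 1)
      ((by continuity : Continuous fun t : ℝ => ⟪gradient f x, d⟫ + L * t * ‖d‖^2).intervalIntegrable 0 1)
    intro t ht
    rcases ht with ⟨ht0, _⟩
    have : ⟪gradient f (x + t • d) - gradient f x, d⟫ ≤ L * t * ‖d‖ ^ 2 := by
      calc ⟪gradient f (x + t • d) - gradient f x, d⟫ ≤ ‖gradient f (x + t • d) - gradient f x‖ * ‖d‖ :=
            real_inner_le_norm _ _
        _ ≤ (L * ‖(x + t • d) - x‖) * ‖d‖ := by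
            apply mul_le_mul_of_nonneg_right (hsmooth _ _) (norm_nonneg _)
        _ = L * t * ‖d‖ ^ 2 := by
            simp [norm_smul, abs_of_nonneg ht0]
            ring
    have expand : ⟪gradient f (x + t • d), d⟫ = ⟪gradient f x, d⟫ + ⟪gradient f (x + t • d) - gradient f x, d⟫ := by
      rw [← inner_add_left]
      simp
    rw [expand]; linarith
  have hval : (∫ t in (0:ℝ)..1, (⟪gradient f x, d⟫ + L * t * ‖d‖ ^ 2)) = ⟪gradient f x, d⟫ + L / 2 * ‖d‖ ^ 2 := by
    rw [intervalIntegral.integral_add (intervalIntegrable_const)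
      (g := fun t : ℝ => L * t * ‖d‖ ^ 2) (((continuous_const.mul continuous_id').mul continuous_const).intervalIntegrable 0 1)]
    have : (∫ t in (0:ℝ)..1, L * t * ‖d‖ ^ 2) = L / 2 * ‖d‖ ^ 2 := by
      have : (fun t : ℝ => L * t * ‖d‖ ^ 2) = fun t : ℝ => (L * ‖d‖ ^ 2) * t := by
        funext t; ring
      rw [this, intervalIntegral.integral_const_mul, integral_id]
      ring
    rw [this]; simp
  linarith [hftc, hbound, hval.le, hval.ge]


lemma cocoercive {p : ℕ} (K : ℝ) (hK : 0 ≤ K) (h : EuclideanSpace ℝ (Fin p) → ℝ)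
    (G : EuclideanSpace ℝ (Fin p) → EuclideanSpace ℝ (Fin p))
    (Dh : ∀ x y, h y ≤ h x + ⟪G x, y - x⟫ + K / 2 * ‖y - x‖ ^ 2)
    (Ch : ∀ x y, h y ≥ h x + ⟪G x, y - x⟫)
    (a b : EuclideanSpace ℝ (Fin p)) :
    ‖G b - G a‖ ^ 2 ≤ K * ⟪G b - G a, b - a⟫ := by
  set u := G b - G a with hu
  -- key sublemma: one-sided bound
  have key : ∀ (a b : EuclideanSpace ℝ (Fin p)) (t : ℝ), 0 ≤ t →
      (t - K * t ^ 2 / 2) * ‖G b - G a‖ ^ 2 ≤ h b - h a - ⟪G a, b - a⟫ := by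
    intro a b t ht
    set v := G b - G a with hv
    set z := b - t • v with hz
    have h1 : h z ≥ h a + ⟪G a, z - a⟫ := Ch a z
    have h2 : h z ≤ h b + ⟪G b, z - b⟫ + K / 2 * ‖z - b‖ ^ 2 := Dh b z
    have hzb : z - b = -(t • v) := by rw [hz]; abel
    have e1 : ⟪G b, z - b⟫ = ⟪G a, z - b⟫ - t * ‖v‖ ^ 2 := by
      have hv2 : ⟪v, z - b⟫ = -(t * ‖v‖ ^ 2) := by
        rw [hzb, inner_neg_right, real_inner_smul_right, real_inner_self_eq_norm_sq]
      have hsub := inner_sub_left (𝕜 := ℝ) (G b) (G a) (z - b)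
      rw [← hv] at hsub
      linarith [hsub, hv2]
    have e2 : ‖z - b‖ ^ 2 = t ^ 2 * ‖v‖ ^ 2 := by
      rw [hzb, norm_neg, norm_smul]
      rw [Real.norm_eq_abs, abs_of_nonneg ht]
      ring
    have e3 : ⟪G a, z - a⟫ = ⟪G a, z - b⟫ + ⟪G a, b - a⟫ := by
      rw [← inner_add_right]
      congr 1; abel
    rw [e1, e2] at h2
    rw [e3] at h1
    nlinarith [h1, h2]
  have k1 := key a b
  have k2 := key b a
  have hsum : ∀ t : ℝ, 0 ≤ t → 2 * (t - K * t ^ 2 / 2) * ‖u‖ ^ 2 ≤ ⟪u, b - a⟫ := by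
    intro t ht
    have h1 := k1 t ht
    have h2 := k2 t ht
    have hnorm : ‖G a - G b‖ = ‖u‖ := by rw [hu, norm_sub_rev]
    rw [hnorm] at h2
    have e : (h b - h a - ⟪G a, b - a⟫) + (h a - h b - ⟪G b, a - b⟫) = ⟪u, b - a⟫ := by
      have : ⟪G b, a - b⟫ = - ⟪G b, b - a⟫ := by
        rw [← inner_neg_right]; congr 1; abel
      rw [this, hu, inner_sub_left]
      ring
    nlinarith [h1, h2]
  rcases eq_or_lt_of_le hK with hK0 | hKpos
  · subst hK0
    have hu0 : ‖u‖ ^ 2 = 0 := by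
      by_contra hne
      have hpos : 0 < ‖u‖ ^ 2 := lt_of_le_of_ne (by positivity) (Ne.symm hne)
      have hC : 0 ≤ ⟪u, b - a⟫ := by simpa using hsum 0 le_rfl
      set t := (⟪u, b - a⟫ + 1) / (2 * ‖u‖ ^ 2) with hts
      have ht : 0 ≤ t := by positivity
      have heq : 2 * (t - 0 * t ^ 2 / 2) * ‖u‖ ^ 2 = ⟪u, b - a⟫ + 1 := by
        rw [hts]
        have hu' : ‖u‖ ≠ 0 := fun h0 => hne (by rw [h0]; ring)
        field_simp
        ring
      linarith [hsum t ht, heq.ge, heq.le]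
    rw [hu0]
    simp
  · have := hsum (1 / K) (by positivity)
    have hexp : 2 * (1 / K - K * (1 / K) ^ 2 / 2) = 1 / K := by
      field_simp; ring
    rw [hexp] at this
    rw [div_mul_eq_mul_div, div_le_iff₀ hKpos] at this
    linarith [this]


set_option maxHeartbeats 1000000 in
/-- One step of gradient descent on a `μ`-strongly convex and `L`-smooth function
with step size `0 < α ≤ 1/L` contracts the distance to the minimizer by `1 - μα`. -/
theorem gradient_descent_contraction {p : ℕ} (μ L α : ℝ)
    (hμ : 0 < μ) (hμL : μ ≤ L)
    (f : EuclideanSpace ℝ (Fin p) → ℝ)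
    (hdiff : Differentiable ℝ f)
    (hsmooth : ∀ x y, ‖gradient f x - gradient f y‖ ≤ L * ‖x - y‖)
    (hsc : ∀ x y, f y ≥ f x + ⟪gradient f x, y - x⟫ + μ / 2 * ‖x - y‖ ^ 2)
    (xstar : EuclideanSpace ℝ (Fin p)) (hmin : ∀ y, f xstar ≤ f y)
    (hα0 : 0 < α) (hα : α ≤ 1 / L)
    (x : EuclideanSpace ℝ (Fin p)) :
    ‖x - α • gradient f x - xstar‖ ≤ (1 - μ * α) * ‖x - xstar‖ := by
  have hL : 0 < L := lt_of_lt_of_le hμ hμL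
  have hαL : α * L ≤ 1 := by
    rw [le_div_iff₀ hL] at hα; linarith
  -- gradient at the minimizer vanishes
  have hg0 : gradient f xstar = 0 := by
    have h : IsLocalMin f xstar := Filter.Eventually.of_forall hmin
    have := h.fderiv_eq_zero
    simp [gradient, this]
  -- descent lemma for f
  have hD := descent L hL.le f hdiff hsmooth
  -- the auxiliary function h and its "gradient" G
  set h : EuclideanSpace ℝ (Fin p) → ℝ := fun z => f z - μ / 2 * ‖z‖ ^ 2 with hh
  set G : EuclideanSpace ℝ (Fin p) → EuclideanSpace ℝ (Fin p) :=
    fun z => gradient f z - μ • z with hG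
  have keysq : ∀ a b : EuclideanSpace ℝ (Fin p),
      ‖b‖ ^ 2 = ‖a‖ ^ 2 + 2 * ⟪a, b - a⟫ + ‖b - a‖ ^ 2 := by
    intro a b
    have := norm_add_sq_real a (b - a)
    simpa using this
  have hGinner : ∀ a b : EuclideanSpace ℝ (Fin p),
      ⟪G a, b - a⟫ = ⟪gradient f a, b - a⟫ - μ * ⟪a, b - a⟫ := by
    intro a b
    rw [hG]
    rw [inner_sub_left, real_inner_smul_left]
  have Dh : ∀ a b, h b ≤ h a + ⟪G a, b - a⟫ + (L - μ) / 2 * ‖b - a‖ ^ 2 := by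
    intro a b
    have h1 := hD a b
    have h2 := keysq a b
    have h3 := hGinner a b
    have h2' : μ / 2 * ‖b‖ ^ 2 = μ / 2 * ‖a‖ ^ 2 + μ * ⟪a, b - a⟫ + μ / 2 * ‖b - a‖ ^ 2 := by
      rw [h2]; ring
    rw [hh]
    simp only []
    rw [h3]
    linarith [h1, h2']
  have Ch : ∀ a b, h b ≥ h a + ⟪G a, b - a⟫ := by
    intro a b
    have h1 := hsc a b
    have h2 := keysq a b
    have h3 := hGinner a b
    have h4 : ‖a - b‖ = ‖b - a‖ := norm_sub_rev a b
    have h2' : μ / 2 * ‖b‖ ^ 2 = μ / 2 * ‖a‖ ^ 2 + μ * ⟪a, b - a⟫ + μ / 2 * ‖b - a‖ ^ 2 := by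
      rw [h2]; ring
    have h4sq : μ / 2 * ‖a - b‖ ^ 2 = μ / 2 * ‖b - a‖ ^ 2 := by rw [h4]
    rw [hh]
    simp only []
    rw [h3]
    linarith [h1, h2', h4sq]
  -- co-coercivity of G
  have hco := cocoercive (L - μ) (by linarith) h G Dh Ch xstar x
  set d := x - xstar with hd
  set g := gradient f x with hgdef
  have hGx : G x - G xstar = g - μ • d := by
    simp only [hG, hgdef, hg0, hd, sub_zero, smul_sub]
    abel
  rw [hGx] at hco
  -- expand the co-coercivity inequality
  have hexp1 : ‖g - μ • d‖ ^ 2 = ‖g‖ ^ 2 - 2 * μ * ⟪g, d⟫ + μ ^ 2 * ‖d‖ ^ 2 := by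
    rw [norm_sub_sq_real, norm_smul, real_inner_smul_right]
    rw [Real.norm_eq_abs, abs_of_pos hμ]
    ring
  have hexp2 : ⟪g - μ • d, d⟫ = ⟪g, d⟫ - μ * ‖d‖ ^ 2 := by
    rw [inner_sub_left, real_inner_smul_left, real_inner_self_eq_norm_sq]
  rw [hexp1, hexp2] at hco
  -- strong monotonicity: ⟪g, d⟫ ≥ μ ‖d‖²
  have hmono : ⟪g, d⟫ ≥ μ * ‖d‖ ^ 2 := by
    have h1 := hsc x xstar
    have h2 := hsc xstar x
    rw [hg0] at h2
    have h3 : ⟪g, xstar - x⟫ = - ⟪g, d⟫ := by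
      rw [hd, ← inner_neg_right]
      congr 1; abel
    have h4 : ‖xstar - x‖ = ‖d‖ := by rw [hd, norm_sub_rev]
    have h5 : ‖x - xstar‖ = ‖d‖ := rfl
    simp only [inner_zero_left] at h2
    rw [h3, h5] at h1
    rw [h4] at h2
    linarith
  -- squared target inequality
  have htgt : ‖d - α • g‖ ^ 2 ≤ ((1 - μ * α) * ‖d‖) ^ 2 := by
    have hexp3 : ‖d - α • g‖ ^ 2 = ‖d‖ ^ 2 - 2 * α * ⟪g, d⟫ + α ^ 2 * ‖g‖ ^ 2 := by
      rw [norm_sub_sq_real, norm_smul, real_inner_smul_right]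
      rw [Real.norm_eq_abs, abs_of_pos hα0, real_inner_comm]
      ring
    rw [hexp3]
    have hc : 0 ≤ 2 - α * (L + μ) := by
      have hαμ : α * μ ≤ α * L := mul_le_mul_of_nonneg_left hμL hα0.le
      linarith [hαL]
    have s0 : ‖g‖ ^ 2 ≤ (L - μ) * (⟪g, d⟫ - μ * ‖d‖ ^ 2) + 2 * μ * ⟪g, d⟫ - μ ^ 2 * ‖d‖ ^ 2 := by
      linarith [hco]
    have s1 := mul_le_mul_of_nonneg_left s0 (mul_nonneg hα0.le hα0.le)
    have s2 : 0 ≤ (α * (2 - α * (L + μ))) * (⟪g, d⟫ - μ * ‖d‖ ^ 2) :=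
      mul_nonneg (mul_nonneg hα0.le hc) (by linarith [hmono])
    linarith [s1, s2]
  have hrw : x - α • g - xstar = d - α • g := by rw [hd]; abel
  rw [hrw]
  have h1mu : 0 ≤ 1 - μ * α := by
    have hαμ : α * μ ≤ α * L := mul_le_mul_of_nonneg_left hμL hα0.le
    linarith [hαL]
  have hr : 0 ≤ (1 - μ * α) * ‖d‖ := mul_nonneg h1mu (norm_nonneg _)
  calc ‖d - α • g‖ = Real.sqrt (‖d - α • g‖ ^ 2) := (Real.sqrt_sq (norm_nonneg _)).symm
    _ ≤ Real.sqrt (((1 - μ * α) * ‖d‖) ^ 2) := Real.sqrt_le_sqrt htgt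
    _ = (1 - μ * α) * ‖d‖ := Real.sqrt_sq hr
end

section
/- Let W ∈ ℝ^{n×n} be doubly stochastic and suppose that ‖Wz − W_∞z‖ ≤ σ‖z − W_∞z‖ for all z ∈ ℝⁿ, where 0 < σ < 1. Let α ∈ ℝ and x, y ∈ ℝⁿ, and set x⁺ := Wx − αy. Then ‖x⁺ − W_∞x⁺‖² ≤ ((1+σ²)/2)·‖x − W_∞x‖² + (2α²/(1−σ²))·‖y − W_∞y‖². -/
/-- One (inner-loop) consensus update contracts the consensus error, with a
perturbation term coming from the gradient trackers. -/
theorem consensus_error_contraction {n : ℕ}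
    (W : Matrix (Fin n) (Fin n) ℝ)
    (hW_nonneg : ∀ i r, 0 ≤ W i r)
    (hW_row : ∀ i, ∑ r, W i r = 1)
    (hW_col : ∀ r, ∑ i, W i r = 1)
    (σ α : ℝ) (hσ0 : 0 < σ) (hσ1 : σ < 1) :
    let Winf : Matrix (Fin n) (Fin n) ℝ := Matrix.of fun _ _ => 1 / (n : ℝ)
    let T : EuclideanSpace ℝ (Fin n) →L[ℝ] EuclideanSpace ℝ (Fin n) :=
      Matrix.toEuclideanCLM (𝕜 := ℝ) W
    let S : EuclideanSpace ℝ (Fin n) →L[ℝ] EuclideanSpace ℝ (Fin n) :=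
      Matrix.toEuclideanCLM (𝕜 := ℝ) Winf
    (∀ z : EuclideanSpace ℝ (Fin n), ‖T z - S z‖ ≤ σ * ‖z - S z‖) →
      ∀ x y : EuclideanSpace ℝ (Fin n),
        ‖(T x - α • y) - S (T x - α • y)‖ ^ 2 ≤
          (1 + σ ^ 2) / 2 * ‖x - S x‖ ^ 2 +
            2 * α ^ 2 / (1 - σ ^ 2) * ‖y - S y‖ ^ 2 := by
  intro Winf T S hcontr x y
  -- Winf * W = Winf
  have hmul : Winf * W = Winf := by
    ext i j
    simp only [Winf, Matrix.mul_apply, Matrix.of_apply]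
    have : ∀ k : Fin n, 1 / (n : ℝ) * W k j = W k j / n := fun k => by ring
    rw [Finset.sum_congr rfl (fun k _ => this k), ← Finset.sum_div, hW_col]
  have hST : ∀ v : EuclideanSpace ℝ (Fin n), S (T v) = S v := by
    intro v
    have h1 : S * T = S := by
      simp only [S, T, ← map_mul, hmul]
    calc S (T v) = (S * T) v := rfl
      _ = S v := by rw [h1]
  have key : (T x - α • y) - S (T x - α • y)
      = (T x - S x) - α • (y - S y) := by
    rw [map_sub, map_smul, hST, smul_sub]
    abel
  rw [key]
  have hA : ‖T x - S x‖ ≤ σ * ‖x - S x‖ := hcontr x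
  have htri : ‖(T x - S x) - α • (y - S y)‖ ≤ ‖T x - S x‖ + ‖α • (y - S y)‖ :=
    norm_sub_le _ _
  set A := ‖T x - S x‖ with hAdef
  set B := ‖α • (y - S y)‖ with hBdef
  set X := ‖x - S x‖
  set Y := ‖y - S y‖
  have hX : 0 ≤ X := norm_nonneg _
  have hY : 0 ≤ Y := norm_nonneg _
  have hAn : 0 ≤ A := norm_nonneg _
  have hBn : 0 ≤ B := norm_nonneg _
  have hσ2 : 0 < 1 - σ ^ 2 := by nlinarith
  have hsq : ‖(T x - S x) - α • (y - S y)‖ ^ 2 ≤ (A + B) ^ 2 := by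
    have h := norm_nonneg ((T x - S x) - α • (y - S y))
    nlinarith
  have hB2 : B ^ 2 = α ^ 2 * Y ^ 2 := by
    rw [hBdef, norm_smul, Real.norm_eq_abs, mul_pow, sq_abs]
  refine hsq.trans ?_
  have hA2 : A ^ 2 ≤ σ ^ 2 * X ^ 2 := by nlinarith
  have hAB : A * B ≤ σ * X * B := mul_le_mul_of_nonneg_right hA hBn
  have goal' : (1 - σ ^ 2) * (A + B) ^ 2
      ≤ (1 - σ ^ 2) * ((1 + σ ^ 2) / 2 * X ^ 2) + 2 * α ^ 2 * Y ^ 2 := by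
    nlinarith [sq_nonneg ((1 - σ ^ 2) * X - 2 * σ * B), sq_nonneg B]
  rw [← sub_nonneg]
  have hrw : (1 + σ ^ 2) / 2 * X ^ 2 + 2 * α ^ 2 / (1 - σ ^ 2) * Y ^ 2 - (A + B) ^ 2
      = ((1 - σ ^ 2) * ((1 + σ ^ 2) / 2 * X ^ 2) + 2 * α ^ 2 * Y ^ 2
          - (1 - σ ^ 2) * (A + B) ^ 2) / (1 - σ ^ 2) := by
    field_simp
  rw [hrw]
  apply div_nonneg _ (le_of_lt hσ2)
  linarith
end

section
/- Let f : ℝ^p → ℝ be μ-strongly convex and L-smooth with 0 < μ ≤ L, let x⋆ be its (unique) minimizer, and let 0 < α ≤ 1/L. Then for every x ∈ ℝ^p and every (inexact gradient direction) g ∈ ℝ^p, ‖x − αg − x⋆‖² ≤ (1 − μα)‖x − x⋆‖² + (α/μ)‖∇f(x) − g‖². -/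
open InnerProductSpace intervalIntegral

variable {E : Type*} [NormedAddCommGroup E] [InnerProductSpace ℝ E] [CompleteSpace E]

lemma grad_cont (L : ℝ) (f : E → ℝ)
    (hs : ∀ x y, ‖gradient f x - gradient f y‖ ≤ L * ‖x - y‖) :
    Continuous (gradient f) := by
  have : LipschitzWith (Real.toNNReal L) (gradient f) := by
    apply LipschitzWith.of_dist_le_mul
    intro a b
    calc dist (gradient f a) (gradient f b) = ‖gradient f a - gradient f b‖ := by
          rw [dist_eq_norm]
      _ ≤ L * ‖a - b‖ := hs a b
      _ ≤ Real.toNNReal L * dist a b := by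
          rw [dist_eq_norm]
          exact mul_le_mul_of_nonneg_right (Real.le_coe_toNNReal L) (norm_nonneg _)
  exact this.continuous

lemma descent_lemma (L : ℝ) (f : E → ℝ) (hdiff : Differentiable ℝ f)
    (hs : ∀ x y, ‖gradient f x - gradient f y‖ ≤ L * ‖x - y‖) (w z : E) :
    f z ≤ f w + inner ℝ (gradient f w) (z - w) + L / 2 * ‖z - w‖ ^ 2 := by
  set v := z - w with hv
  have hline : ∀ t : ℝ, HasDerivAt (fun s : ℝ => f (w + s • v))
      (inner ℝ (gradient f (w + t • v)) v : ℝ) t := by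
    intro t
    have hc : HasDerivAt (fun s : ℝ => w + s • v) v t := by
      simpa using ((hasDerivAt_id t).smul_const v).const_add w
    have hf := (hdiff (w + t • v)).hasGradientAt.hasFDerivAt
    have := hf.comp_hasDerivAt t hc
    simpa [InnerProductSpace.toDual_apply_apply, Function.comp_def] using this
  have hcont : Continuous fun t : ℝ => (inner ℝ (gradient f (w + t • v)) v : ℝ) := by
    exact ((grad_cont L f hs).comp (by continuity)).inner continuous_const
  have key : f z - f w = ∫ t in (0:ℝ)..1, (inner ℝ (gradient f (w + t • v)) v : ℝ) := by
    have := intervalIntegral.integral_eq_sub_of_hasDerivAt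
      (f := fun s : ℝ => f (w + s • v))
      (f' := fun t : ℝ => (inner ℝ (gradient f (w + t • v)) v : ℝ))
      (fun t _ => hline t) (hcont.intervalIntegrable 0 1)
    simpa [hv] using this.symm
  have hbound : ∀ t ∈ Set.Icc (0:ℝ) 1,
      (inner ℝ (gradient f (w + t • v)) v : ℝ) ≤ inner ℝ (gradient f w) v + L * ‖v‖ ^ 2 * t := by
    intro t ht
    have h1 : (inner ℝ (gradient f (w + t • v)) v : ℝ) - inner ℝ (gradient f w) v
        = inner ℝ (gradient f (w + t • v) - gradient f w) v := by
      rw [inner_sub_left]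
    have h2 : (inner ℝ (gradient f (w + t • v) - gradient f w) v : ℝ)
        ≤ ‖gradient f (w + t • v) - gradient f w‖ * ‖v‖ := real_inner_le_norm _ _
    have h3 : ‖gradient f (w + t • v) - gradient f w‖ ≤ L * (t * ‖v‖) := by
      have := hs (w + t • v) w
      simpa [norm_smul, abs_of_nonneg ht.1] using this
    nlinarith [norm_nonneg v, norm_nonneg (gradient f (w + t • v) - gradient f w)]
  have hint : (∫ t in (0:ℝ)..1, (inner ℝ (gradient f (w + t • v)) v : ℝ))
      ≤ ∫ t in (0:ℝ)..1, (inner ℝ (gradient f w) v + L * ‖v‖ ^ 2 * t) := by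
    apply intervalIntegral.integral_mono_on (by norm_num) (hcont.intervalIntegrable 0 1)
    · exact (Continuous.intervalIntegrable (by continuity) 0 1)
    · exact hbound
  have hval : (∫ t in (0:ℝ)..1, (inner ℝ (gradient f w) v + L * ‖v‖ ^ 2 * t))
      = inner ℝ (gradient f w) v + L / 2 * ‖v‖ ^ 2 := by
    rw [intervalIntegral.integral_add (intervalIntegrable_const)
      ((by fun_prop : Continuous fun t : ℝ => L * ‖v‖ ^ 2 * t).intervalIntegrable 0 1),
      intervalIntegral.integral_const_mul, integral_id]
    simp
    ring
  linarith [key ▸ hint.trans_eq hval]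

lemma strong_cocoercive (μ L : ℝ) (hμ : 0 < μ) (hμL : μ ≤ L) (f : E → ℝ)
    (hdiff : Differentiable ℝ f)
    (hs : ∀ x y, ‖gradient f x - gradient f y‖ ≤ L * ‖x - y‖)
    (hsc : ∀ x y, f y ≥ f x + inner ℝ (gradient f x) (y - x) + μ / 2 * ‖x - y‖ ^ 2)
    (x y : E) :
    ‖gradient f x - gradient f y - μ • (x - y)‖ ^ 2
      ≤ (L - μ) * inner ℝ (gradient f x - gradient f y - μ • (x - y)) (x - y) := by
  set Gx := gradient f x with hGx
  set Gy := gradient f y with hGy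
  set q : E := Gx - Gy - μ • (x - y) with hq
  -- monotonicity from strong convexity
  have h1 := hsc x y
  have h2 := hsc y x
  have eA : (inner ℝ Gx (y - x) : ℝ) = -(inner ℝ Gx (x - y)) := by
    rw [show y - x = -(x - y) from by abel, inner_neg_right]
  have eB : ‖y - x‖ = ‖x - y‖ := norm_sub_rev _ _
  rw [eA] at h1
  rw [eB] at h2
  have hmono : (inner ℝ Gx (x - y) : ℝ) - inner ℝ Gy (x - y) ≥ μ * ‖x - y‖ ^ 2 := by
    linarith
  -- identities
  have idQ : ‖q‖ ^ 2 = (inner ℝ Gx q : ℝ) - inner ℝ Gy q - μ * inner ℝ (x - y) q := by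
    rw [← real_inner_self_eq_norm_sq]
    nth_rewrite 1 [hq]
    rw [inner_sub_left, inner_sub_left, real_inner_smul_left]
  have idqv : (inner ℝ q (x - y) : ℝ)
      = inner ℝ Gx (x - y) - inner ℝ Gy (x - y) - μ * ‖x - y‖ ^ 2 := by
    nth_rewrite 1 [hq]
    rw [inner_sub_left, inner_sub_left, real_inner_smul_left, real_inner_self_eq_norm_sq]
  rcases eq_or_lt_of_le hμL with hLμ | hLμ
  · -- L = μ : gradient difference equals μ • (x-y), q = 0
    have hΔ : ‖Gx - Gy‖ ≤ μ * ‖x - y‖ := by rw [hLμ]; exact hs x y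
    have eqQ : ‖q‖ ^ 2
        = ‖Gx - Gy‖ ^ 2 - 2 * (μ * (inner ℝ (Gx - Gy) (x - y) : ℝ)) + μ ^ 2 * ‖x - y‖ ^ 2 := by
      rw [hq, norm_sub_sq_real, real_inner_smul_right, norm_smul, Real.norm_eq_abs,
        mul_pow, sq_abs]
    have eqd : (inner ℝ (Gx - Gy) (x - y) : ℝ) = inner ℝ Gx (x - y) - inner ℝ Gy (x - y) :=
      inner_sub_left _ _ _
    have hq0 : ‖q‖ ^ 2 ≤ 0 := by
      nlinarith [norm_nonneg (Gx - Gy), norm_nonneg (x - y),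
        mul_self_le_mul_self (norm_nonneg (Gx - Gy)) hΔ]
    rw [← hLμ]
    simpa using hq0
  · -- μ < L
    set c : ℝ := (L - μ)⁻¹ with hc
    have hl : 0 < L - μ := sub_pos.mpr hLμ
    have hcpos : 0 < c := inv_pos.mpr hl
    have hlc : (L - μ) * c = 1 := mul_inv_cancel₀ (ne_of_gt hl)
    have I1 := descent_lemma L f hdiff hs x (x - c • q)
    have I2 := hsc y (x - c • q)
    have I3 := descent_lemma L f hdiff hs y (y + c • q)
    have I4 := hsc x (y + c • q)
    -- rewrite vector expressions into scalars
    have eqcq : ‖c • q‖ ^ 2 = c ^ 2 * ‖q‖ ^ 2 := by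
      rw [norm_smul, Real.norm_eq_abs, mul_pow, sq_abs]
    have eqvq : ‖(x - y) - c • q‖ ^ 2
        = ‖x - y‖ ^ 2 - 2 * (c * (inner ℝ (x - y) q : ℝ)) + c ^ 2 * ‖q‖ ^ 2 := by
      rw [norm_sub_sq_real, real_inner_smul_right, eqcq]
    have e1 : (inner ℝ Gx (x - c • q - x) : ℝ) = -(c * inner ℝ Gx q) := by
      rw [show x - c • q - x = -(c • q) from by abel, inner_neg_right, real_inner_smul_right]
    have e2 : ‖x - c • q - x‖ ^ 2 = c ^ 2 * ‖q‖ ^ 2 := by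
      rw [show x - c • q - x = -(c • q) from by abel, norm_neg, eqcq]
    have e3 : (inner ℝ Gy (x - c • q - y) : ℝ) = inner ℝ Gy (x - y) - c * inner ℝ Gy q := by
      rw [show x - c • q - y = (x - y) - c • q from by abel, inner_sub_right,
        real_inner_smul_right]
    have e4 : ‖y - (x - c • q)‖ ^ 2
        = ‖x - y‖ ^ 2 - 2 * (c * (inner ℝ (x - y) q : ℝ)) + c ^ 2 * ‖q‖ ^ 2 := by
      rw [show y - (x - c • q) = -((x - y) - c • q) from by abel, norm_neg, eqvq]
    have e5 : (inner ℝ Gy (y + c • q - y) : ℝ) = c * inner ℝ Gy q := by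
      rw [show y + c • q - y = c • q from by abel, real_inner_smul_right]
    have e6 : ‖y + c • q - y‖ ^ 2 = c ^ 2 * ‖q‖ ^ 2 := by
      rw [show y + c • q - y = c • q from by abel, eqcq]
    have e7 : (inner ℝ Gx (y + c • q - x) : ℝ) = c * inner ℝ Gx q - inner ℝ Gx (x - y) := by
      rw [show y + c • q - x = c • q - (x - y) from by abel, inner_sub_right,
        real_inner_smul_right]
    have e8 : ‖x - (y + c • q)‖ ^ 2
        = ‖x - y‖ ^ 2 - 2 * (c * (inner ℝ (x - y) q : ℝ)) + c ^ 2 * ‖q‖ ^ 2 := by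
      rw [show x - (y + c • q) = (x - y) - c • q from by abel, eqvq]
    rw [e1, e2] at I1
    rw [e3, e4] at I2
    rw [e5, e6] at I3
    rw [e7, e8] at I4
    -- combine
    have hc2 : (L - μ) * c ^ 2 = c := by
      rw [sq, ← mul_assoc, hlc, one_mul]
    have hc3 : (L - μ) * c ^ 2 * ‖q‖ ^ 2 = c * ‖q‖ ^ 2 := by rw [hc2]
    have idQc : c * ‖q‖ ^ 2
        = c * ((inner ℝ Gx q : ℝ) - inner ℝ Gy q - μ * inner ℝ (x - y) q) := by rw [idQ]
    have comm : (inner ℝ (x - y) q : ℝ) = inner ℝ q (x - y) := real_inner_comm _ _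
    have key : c * ‖q‖ ^ 2 ≤ (inner ℝ q (x - y) : ℝ) := by
      linarith [I1, I2, I3, I4, idQc, idqv, hc3, comm]
    have hmul := mul_le_mul_of_nonneg_left key (le_of_lt hl)
    have hlcq : (L - μ) * (c * ‖q‖ ^ 2) = ‖q‖ ^ 2 := by
      rw [← mul_assoc, hlc, one_mul]
    linarith [hmul, hlcq]

/-- A descent step along an inexact gradient direction `g` on a `μ`-strongly
convex and `L`-smooth function with step size `0 < α ≤ 1/L` contracts the
squared distance to the minimizer up to an error `(α/μ)‖∇f(x) − g‖²`. -/
theorem inexact_gradient_descent_contraction {p : ℕ} (μ L α : ℝ)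
    (hμ : 0 < μ) (hμL : μ ≤ L)
    (f : EuclideanSpace ℝ (Fin p) → ℝ)
    (hdiff : Differentiable ℝ f)
    (hsmooth : ∀ x y, ‖gradient f x - gradient f y‖ ≤ L * ‖x - y‖)
    (hsc : ∀ x y, f y ≥ f x + inner ℝ (gradient f x) (y - x) + μ / 2 * ‖x - y‖ ^ 2)
    (xstar : EuclideanSpace ℝ (Fin p)) (hmin : ∀ y, f xstar ≤ f y)
    (hα0 : 0 < α) (hα : α ≤ 1 / L)
    (x g : EuclideanSpace ℝ (Fin p)) :
    ‖x - α • g - xstar‖ ^ 2 ≤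
      (1 - μ * α) * ‖x - xstar‖ ^ 2 + (α / μ) * ‖gradient f x - g‖ ^ 2 := by
  have hL : 0 < L := lt_of_lt_of_le hμ hμL
  have hαL : α * L ≤ 1 := by
    have := (le_div_iff₀ hL).mp hα
    linarith
  have hαμ : α * μ ≤ 1 := by nlinarith
  have h1m : 0 ≤ 1 - α * μ := by linarith
  have hGs : gradient f xstar = 0 := by
    have hloc : IsLocalMin f xstar := Filter.Eventually.of_forall hmin
    have hfd := hloc.fderiv_eq_zero
    simp [gradient, hfd]
  have hco := strong_cocoercive μ L hμ hμL f hdiff hsmooth hsc x xstar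
  rw [hGs, sub_zero] at hco
  set d : EuclideanSpace ℝ (Fin p) := x - xstar with hd
  set G : EuclideanSpace ℝ (Fin p) := gradient f x with hG
  set q : EuclideanSpace ℝ (Fin p) := G - μ • d with hq
  set e : EuclideanSpace ℝ (Fin p) := G - g with he
  -- hco : ‖q‖^2 ≤ (L - μ) * ⟪q, d⟫
  have h1 := hsc x xstar
  have h2 := hsc xstar x
  rw [hGs] at h2
  have h2' : (inner ℝ (0 : EuclideanSpace ℝ (Fin p)) (x - xstar) : ℝ) = 0 := inner_zero_left _
  have eA : (inner ℝ G (xstar - x) : ℝ) = -(inner ℝ G d) := by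
    rw [show xstar - x = -d from by rw [hd]; abel, inner_neg_right]
  have eB : ‖xstar - x‖ = ‖d‖ := by rw [hd]; exact norm_sub_rev _ _
  rw [eA, ← hd] at h1
  rw [h2', eB] at h2
  have hGd : μ * ‖d‖ ^ 2 ≤ (inner ℝ G d : ℝ) := by linarith
  have idqd : (inner ℝ q d : ℝ) = inner ℝ G d - μ * ‖d‖ ^ 2 := by
    nth_rewrite 1 [hq]
    rw [inner_sub_left, real_inner_smul_left, real_inner_self_eq_norm_sq]
  have hqd : 0 ≤ (inner ℝ q d : ℝ) := by linarith
  set u : EuclideanSpace ℝ (Fin p) := (1 - α * μ) • d - α • q with hu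
  have exp : ‖u‖ ^ 2
      = (1 - α * μ) ^ 2 * ‖d‖ ^ 2 - 2 * ((1 - α * μ) * (α * (inner ℝ d q : ℝ)))
        + α ^ 2 * ‖q‖ ^ 2 := by
    rw [hu, norm_sub_sq_real, real_inner_smul_left, real_inner_smul_right, norm_smul,
      norm_smul, Real.norm_eq_abs, Real.norm_eq_abs, mul_pow, mul_pow, sq_abs, sq_abs]
  have comm : (inner ℝ d q : ℝ) = inner ℝ q d := real_inner_comm _ _
  rw [comm] at exp
  have s1 : α * ‖q‖ ^ 2 ≤ α * ((L - μ) * (inner ℝ q d : ℝ)) :=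
    mul_le_mul_of_nonneg_left hco hα0.le
  have s2 : α * ((L - μ) * (inner ℝ q d : ℝ)) ≤ (1 - α * μ) * (inner ℝ q d : ℝ) := by
    rw [← mul_assoc]
    exact mul_le_mul_of_nonneg_right (by nlinarith) hqd
  have s3 : α * (α * ‖q‖ ^ 2) ≤ α * ((1 - α * μ) * (inner ℝ q d : ℝ)) :=
    mul_le_mul_of_nonneg_left (s1.trans s2) hα0.le
  have hu2 : ‖u‖ ^ 2 ≤ ((1 - α * μ) * ‖d‖) ^ 2 := by
    rw [exp]
    have s4 : 0 ≤ α * ((1 - α * μ) * (inner ℝ q d : ℝ)) :=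
      mul_nonneg hα0.le (mul_nonneg h1m hqd)
    linarith [s3, s4]
  have hb : 0 ≤ (1 - α * μ) * ‖d‖ := mul_nonneg h1m (norm_nonneg d)
  have hu' : ‖u‖ ≤ (1 - α * μ) * ‖d‖ :=
    (pow_le_pow_iff_left₀ (norm_nonneg u) hb two_ne_zero).mp hu2
  have heq : x - α • g - xstar = u + α • e := by
    rw [hu, hq, he, hd]
    module
  have hn : ‖x - α • g - xstar‖ ≤ ‖u‖ + α * ‖e‖ := by
    rw [heq]
    refine (norm_add_le _ _).trans ?_
    rw [norm_smul, Real.norm_eq_abs, abs_of_pos hα0]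
  have hchain : ‖x - α • g - xstar‖ ≤ (1 - α * μ) * ‖d‖ + α * ‖e‖ := by linarith
  have hsq : ‖x - α • g - xstar‖ ^ 2 ≤ ((1 - α * μ) * ‖d‖ + α * ‖e‖) ^ 2 :=
    pow_le_pow_left₀ (norm_nonneg _) hchain 2
  have hdiv : μ * (α / μ) = α := by field_simp
  have hkey : 0 ≤ (1 - α * μ) * (α * (μ * ‖d‖ - ‖e‖) ^ 2) :=
    mul_nonneg h1m (mul_nonneg hα0.le (sq_nonneg _))
  have idty : μ * ((1 - μ * α) * ‖d‖ ^ 2 + (α / μ) * ‖e‖ ^ 2)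
      - μ * (((1 - α * μ) * ‖d‖ + α * ‖e‖) ^ 2)
      = (1 - α * μ) * (α * (μ * ‖d‖ - ‖e‖) ^ 2) := by
    field_simp
    ring
  have hmul : μ * (((1 - α * μ) * ‖d‖ + α * ‖e‖) ^ 2)
      ≤ μ * ((1 - μ * α) * ‖d‖ ^ 2 + (α / μ) * ‖e‖ ^ 2) := by linarith [idty, hkey]
  exact hsq.trans (le_of_mul_le_mul_left hmul hμ)
end

section
/- In the SVRG setup, for every reference vector x⋆ ∈ ℝ^p one has ∑_{i=1}^n (1/m_i)∑_{j=1}^{m_i} ‖v_{i,j} − ∇f_i(x_i)‖² ≤ 4L²∑_{i=1}^n ‖x_i − x̄‖² + 4nL²‖x̄ − x⋆‖² + 4L²∑_{i=1}^n ‖x⁰_i − x̄⁰‖² + 4nL²‖x̄⁰ − x⋆‖². -/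
open InnerProductSpace Finset

variable {F : Type*} [NormedAddCommGroup F] [InnerProductSpace ℝ F] [CompleteSpace F]

lemma gradient_avg {k : ℕ} (g : Fin k → F → ℝ) (hg : ∀ j, Differentiable ℝ (g j))
    (c : ℝ) (z : F) :
    gradient (fun w => c * ∑ j, g j w) z = c • ∑ j, gradient (g j) z := by
  have h1 : ∀ j, HasFDerivAt (g j) (toDual ℝ F (gradient (g j) z)) z := fun j =>
    (hasGradientAt_iff_hasFDerivAt).1 ((hg j z).hasGradientAt)
  have h2 : HasFDerivAt (fun w => c * ∑ j, g j w)
      (toDual ℝ F (c • ∑ j, gradient (g j) z)) z := by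
    have hs : HasFDerivAt (fun w => ∑ j, g j w)
        (∑ j, toDual ℝ F (gradient (g j) z)) z :=
      HasFDerivAt.fun_sum (fun j (_ : j ∈ Finset.univ) => h1 j)
    have := hs.const_mul c
    simpa [map_sum, map_smul, smul_eq_mul] using this
  exact (hasGradientAt_iff_hasFDerivAt.2 h2).gradient

lemma variance_le {k : ℕ} (hk : 0 < k) (b : Fin k → F) :
    ∑ j, ‖b j - (1/(k:ℝ)) • ∑ l, b l‖^2 ≤ ∑ j, ‖b j‖^2 := by
  set bb : F := (1/(k:ℝ)) • ∑ l, b l with hbb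
  have hk' : (k:ℝ) ≠ 0 := Nat.cast_ne_zero.2 hk.ne'
  have hsum : ∑ l, b l = (k:ℝ) • bb := by
    rw [hbb, smul_smul]
    field_simp
    rw [one_smul]
  have expand : ∀ j, ‖b j - bb‖^2 = ‖b j‖^2 - 2 * inner ℝ (b j) bb + ‖bb‖^2 :=
    fun j => by rw [← real_inner_self_eq_norm_sq, ← real_inner_self_eq_norm_sq,
      ← real_inner_self_eq_norm_sq, inner_sub_sub_self, real_inner_comm (b j) bb]; ring
  have hinner : ∑ j, inner ℝ (b j) bb = (k:ℝ) * ‖bb‖^2 := by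
    rw [← sum_inner, hsum, real_inner_smul_left, real_inner_self_eq_norm_sq]
  calc ∑ j, ‖b j - bb‖^2
      = ∑ j, ‖b j‖^2 - 2 * ((k:ℝ) * ‖bb‖^2) + (k:ℝ) * ‖bb‖^2 := by
        simp only [expand]
        rw [Finset.sum_add_distrib, Finset.sum_sub_distrib, ← Finset.mul_sum, hinner,
          Finset.sum_const, card_univ, Fintype.card_fin, nsmul_eq_mul]
    _ ≤ ∑ j, ‖b j‖^2 := by nlinarith [sq_nonneg ‖bb‖, (Nat.cast_pos (α := ℝ)).2 hk]

/-- Variance bound for the local SVRG gradients. -/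
theorem svrg_variance_bound {n p : ℕ} (hn : 0 < n)
    (m : Fin n → ℕ) (hm : ∀ i, 0 < m i) (L : ℝ)
    (f : (i : Fin n) → Fin (m i) → EuclideanSpace ℝ (Fin p) → ℝ)
    (hdiff : ∀ i j, Differentiable ℝ (f i j))
    (hsmooth : ∀ i j x y, ‖gradient (f i j) x - gradient (f i j) y‖ ≤ L * ‖x - y‖)
    (x x0 : Fin n → EuclideanSpace ℝ (Fin p))
    (xstar : EuclideanSpace ℝ (Fin p)) :
    let fi : Fin n → EuclideanSpace ℝ (Fin p) → ℝ :=
      fun i z => (1 / (m i : ℝ)) * ∑ j, f i j z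
    let v : (i : Fin n) → Fin (m i) → EuclideanSpace ℝ (Fin p) :=
      fun i j => gradient (f i j) (x i) - gradient (f i j) (x0 i) +
        gradient (fi i) (x0 i)
    let xbar : EuclideanSpace ℝ (Fin p) := (1 / (n : ℝ)) • ∑ i, x i
    let xbar0 : EuclideanSpace ℝ (Fin p) := (1 / (n : ℝ)) • ∑ i, x0 i
    ∑ i, (1 / (m i : ℝ)) * ∑ j, ‖v i j - gradient (fi i) (x i)‖ ^ 2 ≤
      4 * L ^ 2 * ∑ i, ‖x i - xbar‖ ^ 2 +
        4 * (n : ℝ) * L ^ 2 * ‖xbar - xstar‖ ^ 2 +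
        4 * L ^ 2 * ∑ i, ‖x0 i - xbar0‖ ^ 2 +
        4 * (n : ℝ) * L ^ 2 * ‖xbar0 - xstar‖ ^ 2 := by
  intro fi v xbar xbar0
  have hgradfi : ∀ i z, gradient (fi i) z = (1/(m i:ℝ)) • ∑ j, gradient (f i j) z :=
    fun i z => gradient_avg (f i) (hdiff i) _ z
  have key : ∀ i, (1/(m i:ℝ)) * ∑ j, ‖v i j - gradient (fi i) (x i)‖^2 ≤
      L^2 * ‖x i - x0 i‖^2 := by
    intro i
    have hmi : (0:ℝ) < (m i : ℝ) := Nat.cast_pos.2 (hm i)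
    set b : Fin (m i) → EuclideanSpace ℝ (Fin p) :=
      fun j => gradient (f i j) (x i) - gradient (f i j) (x0 i) with hb
    have hv : ∀ j, v i j - gradient (fi i) (x i) = b j - (1/(m i:ℝ)) • ∑ l, b l := by
      intro j
      have hvd : v i j = gradient (f i j) (x i) - gradient (f i j) (x0 i) +
          gradient (fi i) (x0 i) := rfl
      rw [hvd, hgradfi, hgradfi, hb]
      simp only [Finset.sum_sub_distrib, smul_sub]
      abel
    have h1 : ∑ j, ‖v i j - gradient (fi i) (x i)‖^2 ≤ ∑ j, ‖b j‖^2 := by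
      calc ∑ j, ‖v i j - gradient (fi i) (x i)‖^2
          = ∑ j, ‖b j - (1/(m i:ℝ)) • ∑ l, b l‖^2 := by
            exact Finset.sum_congr rfl fun j _ => by rw [hv j]
        _ ≤ ∑ j, ‖b j‖^2 := variance_le (hm i) b
    have h2 : ∑ j, ‖b j‖^2 ≤ (m i : ℝ) * (L^2 * ‖x i - x0 i‖^2) := by
      calc ∑ j, ‖b j‖^2 ≤ ∑ _j : Fin (m i), L^2 * ‖x i - x0 i‖^2 := by
            refine Finset.sum_le_sum fun j _ => ?_
            have := hsmooth i j (x i) (x0 i)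
            nlinarith [norm_nonneg (b j)]
        _ = (m i : ℝ) * (L^2 * ‖x i - x0 i‖^2) := by
            rw [Finset.sum_const, Finset.card_univ, Fintype.card_fin, nsmul_eq_mul]
    have := mul_le_mul_of_nonneg_left (h1.trans h2) (le_of_lt (one_div_pos.2 hmi))
    calc (1/(m i:ℝ)) * ∑ j, ‖v i j - gradient (fi i) (x i)‖^2
        ≤ (1/(m i:ℝ)) * ((m i : ℝ) * (L^2 * ‖x i - x0 i‖^2)) := this
      _ = L^2 * ‖x i - x0 i‖^2 := by field_simp
  have key2 : ∀ i, L^2 * ‖x i - x0 i‖^2 ≤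
      4*L^2*‖x i - xbar‖^2 + 4*L^2*‖xbar - xstar‖^2 +
      4*L^2*‖x0 i - xbar0‖^2 + 4*L^2*‖xbar0 - xstar‖^2 := by
    intro i
    have tri : ‖x i - x0 i‖ ≤
        ‖x i - xbar‖ + ‖xbar - xstar‖ + ‖x0 i - xbar0‖ + ‖xbar0 - xstar‖ := by
      have heq : x i - x0 i =
          (x i - xbar) + (xbar - xstar) + -(x0 i - xbar0) + -(xbar0 - xstar) := by abel
      rw [heq]
      refine le_trans (norm_add_le _ _) ?_
      rw [norm_neg]
      refine add_le_add (le_trans (norm_add_le _ _) ?_) le_rfl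
      rw [norm_neg]
      exact add_le_add (norm_add_le _ _) le_rfl
    have hsq : ‖x i - x0 i‖^2 ≤ 4*(‖x i - xbar‖^2 + ‖xbar - xstar‖^2 +
        ‖x0 i - xbar0‖^2 + ‖xbar0 - xstar‖^2) := by
      nlinarith [norm_nonneg (x i - x0 i), norm_nonneg (x i - xbar),
        norm_nonneg (xbar - xstar), norm_nonneg (x0 i - xbar0),
        norm_nonneg (xbar0 - xstar),
        sq_nonneg (‖x i - xbar‖ - ‖xbar - xstar‖),
        sq_nonneg (‖x i - xbar‖ - ‖x0 i - xbar0‖),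
        sq_nonneg (‖x i - xbar‖ - ‖xbar0 - xstar‖),
        sq_nonneg (‖xbar - xstar‖ - ‖x0 i - xbar0‖),
        sq_nonneg (‖xbar - xstar‖ - ‖xbar0 - xstar‖),
        sq_nonneg (‖x0 i - xbar0‖ - ‖xbar0 - xstar‖)]
    have := mul_le_mul_of_nonneg_left hsq (sq_nonneg L)
    linarith [this]
  calc ∑ i, (1/(m i:ℝ)) * ∑ j, ‖v i j - gradient (fi i) (x i)‖^2
      ≤ ∑ i, (4*L^2*‖x i - xbar‖^2 + 4*L^2*‖xbar - xstar‖^2 +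
          4*L^2*‖x0 i - xbar0‖^2 + 4*L^2*‖xbar0 - xstar‖^2) :=
        Finset.sum_le_sum fun i _ => (key i).trans (key2 i)
    _ = 4 * L ^ 2 * ∑ i, ‖x i - xbar‖ ^ 2 +
        4 * (n : ℝ) * L ^ 2 * ‖xbar - xstar‖ ^ 2 +
        4 * L ^ 2 * ∑ i, ‖x0 i - xbar0‖ ^ 2 +
        4 * (n : ℝ) * L ^ 2 * ‖xbar0 - xstar‖ ^ 2 := by
      simp only [Finset.sum_add_distrib, ← Finset.mul_sum, Finset.sum_const,
        Finset.card_univ, Fintype.card_fin, nsmul_eq_mul]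
      ring
end

section
/- In the SVRG setup, for s = (s_1,…,s_n) ∈ S define ȳ(s) := (1/n)∑_{i=1}^n v_{i,s_i}, and let h := (1/n)∑_{i=1}^n ∇f_i(x_i) and f := (1/n)∑_{i=1}^n f_i. Then for every α ∈ ℝ and every x⋆ ∈ ℝ^p: (1/|S|)∑_{s∈S} ‖x̄ − αȳ(s) − x⋆‖² = ‖x̄ − α∇f(x̄) − x⋆‖² + 2α⟨x̄ − α∇f(x̄) − x⋆, ∇f(x̄) − h⟩ + α²‖∇f(x̄) − h‖² + (α²/n²)∑_{i=1}^n (1/m_i)∑_{j=1}^{m_i} ‖v_{i,j} − ∇f_i(x_i)‖². -/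
open RealInnerProductSpace

section Helpers

variable {V : Type*} [NormedAddCommGroup V] [InnerProductSpace ℝ V]
variable {n : ℕ} {m : Fin n → ℕ}

lemma svrg_grad_const_mul_sum [CompleteSpace V] {ι : Type*} [Fintype ι] (c : ℝ) (g : ι → V → ℝ)
    (hg : ∀ j, Differentiable ℝ (g j)) (z : V) :
    gradient (fun w => c * ∑ j, g j w) z = c • ∑ j, gradient (g j) z := by
  have hds : DifferentiableAt ℝ (fun w => ∑ j, g j w) z :=
    DifferentiableAt.fun_sum fun j _ => (hg j).differentiableAt
  have h1 : fderiv ℝ (fun w => c * ∑ j, g j w) z = c • ∑ j, fderiv ℝ (g j) z := by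
    rw [fderiv_const_mul hds c, fderiv_fun_sum fun j _ => (hg j).differentiableAt]
  simp only [gradient, h1, map_smul, map_sum]

lemma svrg_pi_sum_split {M : Type*} [AddCommMonoid M] (i : Fin n)
    (g : (∀ k, Fin (m k)) → M) :
    ∑ s, g s = ∑ j : Fin (m i), ∑ t : (∀ k : {k // k ≠ i}, Fin (m k)),
      g ((Equiv.piSplitAt i (fun k => Fin (m k))).symm (j, t)) := by
  rw [← Equiv.sum_comp (Equiv.piSplitAt i fun k => Fin (m k)).symm g, Fintype.sum_prod_type]

lemma svrg_split_apply_self (i : Fin n) (j : Fin (m i)) (t : ∀ k : {k // k ≠ i}, Fin (m k)) :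
    (Equiv.piSplitAt i (fun k => Fin (m k))).symm (j, t) i = j := by
  simp [Equiv.piSplitAt]

lemma svrg_split_apply_ne (i k : Fin n) (hk : k ≠ i) (j : Fin (m i))
    (t : ∀ k : {k // k ≠ i}, Fin (m k)) :
    (Equiv.piSplitAt i (fun k => Fin (m k))).symm (j, t) k = t ⟨k, hk⟩ := by
  simp [Equiv.piSplitAt, hk]

omit [InnerProductSpace ℝ V] in
lemma svrg_sum_coord (i : Fin n) (w : Fin (m i) → V) :
    ∑ s : ∀ k, Fin (m k), w (s i)
      = Fintype.card (∀ k : {k // k ≠ i}, Fin (m k)) • ∑ j, w j := by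
  rw [svrg_pi_sum_split i]
  simp only [svrg_split_apply_self, Finset.sum_const, Finset.card_univ]
  rw [← Finset.smul_sum]

lemma svrg_sum_cross (i k : Fin n) (hik : k ≠ i) (a : Fin (m i) → V) (b : Fin (m k) → V)
    (ha : ∑ j, a j = 0) :
    ∑ s : ∀ k', Fin (m k'), ⟪a (s i), b (s k)⟫ = 0 := by
  rw [svrg_pi_sum_split i]
  simp only [svrg_split_apply_self, svrg_split_apply_ne i k hik]
  rw [Finset.sum_comm]
  simp [← sum_inner, ha]

lemma svrg_card_split (i : Fin n) :
    Fintype.card (∀ k, Fin (m k))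
      = m i * Fintype.card (∀ k : {k // k ≠ i}, Fin (m k)) := by
  rw [Fintype.card_congr (Equiv.piSplitAt i fun k => Fin (m k)), Fintype.card_prod,
    Fintype.card_fin]

lemma svrg_core (hm : ∀ i, 0 < m i) (u : ∀ i, Fin (m i) → V)
    (hu : ∀ i, ∑ j, u i j = 0) (b : V) :
    ∑ s : ∀ i, Fin (m i), ‖b + ∑ i, u i (s i)‖ ^ 2
      = (Fintype.card (∀ i, Fin (m i)) : ℝ) *
        (‖b‖ ^ 2 + ∑ i, (1 / (m i : ℝ)) * ∑ j, ‖u i j‖ ^ 2) := by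
  have expand : ∀ s : ∀ i, Fin (m i),
      ‖b + ∑ i, u i (s i)‖ ^ 2
        = ‖b‖ ^ 2 + 2 * ∑ i, ⟪b, u i (s i)⟫
          + ∑ i, ∑ k, ⟪u i (s i), u k (s k)⟫ := by
    intro s
    rw [norm_add_sq_real, inner_sum, ← real_inner_self_eq_norm_sq (∑ i, u i (s i)),
      sum_inner]
    congr 1
    exact Finset.sum_congr rfl fun i _ => inner_sum _ _ _
  simp only [expand]
  rw [Finset.sum_add_distrib, Finset.sum_add_distrib, Finset.sum_const, Finset.card_univ]
  have lin : ∑ s : ∀ i, Fin (m i), 2 * ∑ i, ⟪b, u i (s i)⟫ = 0 := by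
    simp only [← Finset.mul_sum]
    rw [Finset.sum_comm]
    have : ∀ i : Fin n, ∑ s : ∀ k, Fin (m k), ⟪b, u i (s i)⟫ = 0 := by
      intro i
      have := svrg_sum_coord i (fun j => (⟪b, u i j⟫ : ℝ))
      rw [this, ← inner_sum, hu i, inner_zero_right, smul_zero]
    simp [this]
  rw [lin]
  have quad : ∑ s : ∀ i, Fin (m i), ∑ i, ∑ k, ⟪u i (s i), u k (s k)⟫
      = ∑ i, (Fintype.card (∀ k : {k // k ≠ i}, Fin (m k)) : ℝ) * ∑ j, ‖u i j‖ ^ 2 := by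
    rw [Finset.sum_comm]
    refine Finset.sum_congr rfl fun i _ => ?_
    rw [Finset.sum_comm]
    have diag : ∑ s : ∀ k, Fin (m k), ⟪u i (s i), u i (s i)⟫
        = (Fintype.card (∀ k : {k // k ≠ i}, Fin (m k)) : ℝ) * ∑ j, ‖u i j‖ ^ 2 := by
      have := svrg_sum_coord i (fun j => (⟪u i j, u i j⟫ : ℝ))
      rw [this, nsmul_eq_mul]
      simp [real_inner_self_eq_norm_sq]
    rw [Finset.sum_eq_single i]
    · exact diag
    · intro k _ hki
      exact svrg_sum_cross i k hki (u i) (u k) (hu i)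
    · simp
  rw [quad]
  have cards : ∀ i : Fin n,
      (Fintype.card (∀ k : {k // k ≠ i}, Fin (m k)) : ℝ)
        = (Fintype.card (∀ k, Fin (m k)) : ℝ) * (1 / (m i : ℝ)) := by
    intro i
    rw [svrg_card_split i]
    push_cast
    field_simp [(hm i).ne']
  simp only [cards]
  rw [mul_add, Finset.mul_sum, add_zero, nsmul_eq_mul]
  congr 1
  exact Finset.sum_congr rfl fun i _ => by ring

end Helpers

/-- Exact decomposition of the expected squared distance to a reference point
after one inexact (SVRG) descent step, the expectation being the uniform average
over the independent sample indices of all nodes. -/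
theorem svrg_expected_descent_decomposition {n p : ℕ} (hn : 0 < n)
    (m : Fin n → ℕ) (hm : ∀ i, 0 < m i) (L : ℝ)
    (f : (i : Fin n) → Fin (m i) → EuclideanSpace ℝ (Fin p) → ℝ)
    (hdiff : ∀ i j, Differentiable ℝ (f i j))
    (hsmooth : ∀ i j x y, ‖gradient (f i j) x - gradient (f i j) y‖ ≤ L * ‖x - y‖)
    (x x0 : Fin n → EuclideanSpace ℝ (Fin p))
    (α : ℝ) (xstar : EuclideanSpace ℝ (Fin p)) :
    let fi : Fin n → EuclideanSpace ℝ (Fin p) → ℝ :=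
      fun i z => (1 / (m i : ℝ)) * ∑ j, f i j z
    let F : EuclideanSpace ℝ (Fin p) → ℝ := fun z => (1 / (n : ℝ)) * ∑ i, fi i z
    let v : (i : Fin n) → Fin (m i) → EuclideanSpace ℝ (Fin p) :=
      fun i j => gradient (f i j) (x i) - gradient (f i j) (x0 i) +
        gradient (fi i) (x0 i)
    let xbar : EuclideanSpace ℝ (Fin p) := (1 / (n : ℝ)) • ∑ i, x i
    let ybar : ((i : Fin n) → Fin (m i)) → EuclideanSpace ℝ (Fin p) :=
      fun s => (1 / (n : ℝ)) • ∑ i, v i (s i)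
    let h : EuclideanSpace ℝ (Fin p) := (1 / (n : ℝ)) • ∑ i, gradient (fi i) (x i)
    (1 / (Fintype.card ((i : Fin n) → Fin (m i)) : ℝ)) *
        ∑ s : (i : Fin n) → Fin (m i), ‖xbar - α • ybar s - xstar‖ ^ 2 =
      ‖xbar - α • gradient F xbar - xstar‖ ^ 2 +
        2 * α * ⟪xbar - α • gradient F xbar - xstar, gradient F xbar - h⟫ +
        α ^ 2 * ‖gradient F xbar - h‖ ^ 2 +
        (α ^ 2 / (n : ℝ) ^ 2) *
          ∑ i, (1 / (m i : ℝ)) * ∑ j, ‖v i j - gradient (fi i) (x i)‖ ^ 2 := by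
  intro fi F v xbar ybar h
  have gradfi : ∀ (i : Fin n) (z : EuclideanSpace ℝ (Fin p)),
      gradient (fi i) z = (1 / (m i : ℝ)) • ∑ j, gradient (f i j) z := fun i z =>
    svrg_grad_const_mul_sum (1 / (m i : ℝ)) (f i) (hdiff i) z
  -- centered variables
  set u : ∀ i : Fin n, Fin (m i) → EuclideanSpace ℝ (Fin p) :=
    fun i j => v i j - gradient (fi i) (x i) with hu_def
  have hv_sum : ∀ i : Fin n, ∑ j, v i j = (m i : ℝ) • gradient (fi i) (x i) := by
    intro i
    have hmne : (m i : ℝ) ≠ 0 := Nat.cast_ne_zero.mpr (hm i).ne'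
    have hsm : ∀ z : EuclideanSpace ℝ (Fin p), (m i : ℝ) • gradient (fi i) z = ∑ j, gradient (f i j) z := by
      intro z
      rw [gradfi i z, smul_smul, mul_one_div, div_self hmne, one_smul]
    simp only [v]
    rw [Finset.sum_add_distrib, Finset.sum_sub_distrib, Finset.sum_const,
      Finset.card_univ, Fintype.card_fin, ← Nat.cast_smul_eq_nsmul ℝ, hsm, hsm]
    abel
  have hu : ∀ i : Fin n, ∑ j, u i j = 0 := by
    intro i
    simp only [hu_def]
    rw [Finset.sum_sub_distrib, hv_sum i, Finset.sum_const, Finset.card_univ,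
      Fintype.card_fin, ← Nat.cast_smul_eq_nsmul ℝ, sub_self]
  set w : ∀ i : Fin n, Fin (m i) → EuclideanSpace ℝ (Fin p) := fun i j => (-(α / (n : ℝ))) • u i j with hw_def
  have hw : ∀ i : Fin n, ∑ j, w i j = 0 := by
    intro i
    simp only [hw_def]
    rw [← Finset.smul_sum, hu i, smul_zero]
  set B : EuclideanSpace ℝ (Fin p) := xbar - α • h - xstar with hB_def
  have key : ∀ s : ∀ i : Fin n, Fin (m i),
      xbar - α • ybar s - xstar = B + ∑ i, w i (s i) := by
    intro s
    have hsum : ∑ i, w i (s i)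
        = (-(α / (n : ℝ))) • (∑ i, v i (s i) - ∑ i, gradient (fi i) (x i)) := by
      simp only [hw_def, hu_def]
      rw [← Finset.smul_sum, Finset.sum_sub_distrib]
    rw [hsum, hB_def]
    show xbar - α • ((1 / (n : ℝ)) • ∑ i, v i (s i)) - xstar
      = xbar - α • ((1 / (n : ℝ)) • ∑ i, gradient (fi i) (x i)) - xstar
        + (-(α / (n : ℝ))) • (∑ i, v i (s i) - ∑ i, gradient (fi i) (x i))
    module
  have hcard : (Fintype.card (∀ i : Fin n, Fin (m i)) : ℝ) ≠ 0 := by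
    have : Nonempty (∀ i : Fin n, Fin (m i)) := ⟨fun i => ⟨0, hm i⟩⟩
    exact Nat.cast_ne_zero.mpr Fintype.card_ne_zero
  have lhs_eq : (1 / (Fintype.card ((i : Fin n) → Fin (m i)) : ℝ)) *
        ∑ s : (i : Fin n) → Fin (m i), ‖xbar - α • ybar s - xstar‖ ^ 2
      = ‖B‖ ^ 2 + ∑ i, (1 / (m i : ℝ)) * ∑ j, ‖w i j‖ ^ 2 := by
    simp only [key]
    rw [svrg_core hm w hw B, ← mul_assoc, one_div,
      inv_mul_cancel₀ hcard, one_mul]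
  rw [lhs_eq]
  -- now identify the two sides
  have hB2 : B = (xbar - α • gradient F xbar - xstar) + α • (gradient F xbar - h) := by
    rw [hB_def]; module
  have first3 : ‖B‖ ^ 2
      = ‖xbar - α • gradient F xbar - xstar‖ ^ 2 +
        2 * α * ⟪xbar - α • gradient F xbar - xstar, gradient F xbar - h⟫ +
        α ^ 2 * ‖gradient F xbar - h‖ ^ 2 := by
    rw [hB2, norm_add_sq_real, real_inner_smul_right, norm_smul, mul_pow, Real.norm_eq_abs, sq_abs]
    ring_nf
  have last : ∑ i, (1 / (m i : ℝ)) * ∑ j, ‖w i j‖ ^ 2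
      = (α ^ 2 / (n : ℝ) ^ 2) *
        ∑ i, (1 / (m i : ℝ)) * ∑ j, ‖v i j - gradient (fi i) (x i)‖ ^ 2 := by
    have hwn : ∀ (i : Fin n) (j : Fin (m i)),
        ‖w i j‖ ^ 2 = (α ^ 2 / (n : ℝ) ^ 2) * ‖v i j - gradient (fi i) (x i)‖ ^ 2 := by
      intro i j
      simp only [hw_def, hu_def]
      rw [norm_smul, mul_pow, Real.norm_eq_abs, abs_neg, sq_abs]
      ring
    simp only [hwn]
    rw [Finset.mul_sum]
    exact Finset.sum_congr rfl fun i _ => by rw [← Finset.mul_sum]; ring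
  rw [first3, last]
end

section
/- In the SVRG setup, assume additionally that every component function f_{i,j} is μ-strongly convex with 0 < μ ≤ L, let x⋆ be the (unique) minimizer of f := (1/n)∑_{i=1}^n f_i, and for s ∈ S set ȳ(s) := (1/n)∑_{i=1}^n v_{i,s_i}. If 0 < α ≤ μ/(8L²), then (1/|S|)∑_{s∈S} ‖x̄ − αȳ(s) − x⋆‖² ≤ (1 − μα/2)‖x̄ − x⋆‖² + (3L²α/(2μn))∑_{i=1}^n ‖x_i − x̄‖² + (4L²α²/n²)∑_{i=1}^n ‖x⁰_i − x̄⁰‖² + (4L²α²/n)‖x̄⁰ − x⋆‖². -/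
open RealInnerProductSpace Finset

variable {H : Type*} [NormedAddCommGroup H] [InnerProductSpace ℝ H]

/-- marginal sum over a product fintype -/
lemma marginal_sum {n : ℕ} (m : Fin n → ℕ) (i : Fin n) {M : Type*} [AddCommMonoid M]
    (φ : Fin (m i) → M) :
    ∑ s : (k : Fin n) → Fin (m k), φ (s i)
      = Fintype.card ((j : {j // j ≠ i}) → Fin (m j)) • ∑ a, φ a := by
  rw [← Fintype.sum_equiv (Equiv.piSplitAt i (fun k => Fin (m k))).symm
      (fun pr => φ ((Equiv.piSplitAt i (fun k => Fin (m k))).symm pr i))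
      (fun s => φ (s i)) (fun pr => rfl)]
  simp only [Fintype.sum_prod_type, Equiv.piSplitAt_symm_apply, dif_pos rfl, eq_self_iff_true,
    dite_true]
  rw [Finset.sum_comm, Finset.sum_const]
  rfl

/-- cross terms vanish -/
lemma cross_zero {n : ℕ} (m : Fin n → ℕ) (i k : Fin n) (hik : i ≠ k)
    (zi : Fin (m i) → H) (zk : Fin (m k) → H) (hz : ∑ a, zi a = 0) :
    ∑ s : (l : Fin n) → Fin (m l), ⟪zi (s i), zk (s k)⟫ = 0 := by
  rw [← Fintype.sum_equiv (Equiv.piSplitAt i (fun l => Fin (m l))).symm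
      (fun pr => ⟪zi ((Equiv.piSplitAt i (fun l => Fin (m l))).symm pr i),
        zk ((Equiv.piSplitAt i (fun l => Fin (m l))).symm pr k)⟫)
      (fun s => ⟪zi (s i), zk (s k)⟫) (fun pr => rfl)]
  simp only [Fintype.sum_prod_type, Equiv.piSplitAt_symm_apply, dif_pos rfl, eq_self_iff_true,
    dite_true, dif_neg hik.symm]
  rw [Finset.sum_comm]
  have : ∀ g : (j : {j // j ≠ i}) → Fin (m j),
      ∑ a : Fin (m i), ⟪zi a, zk (g ⟨k, hik.symm⟩)⟫ = 0 := by
    intro g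
    rw [← sum_inner, hz, inner_zero_left]
  simp [this]

lemma card_split {n : ℕ} (m : Fin n → ℕ) (i : Fin n) :
    Fintype.card ((k : Fin n) → Fin (m k))
      = m i * Fintype.card ((j : {j // j ≠ i}) → Fin (m j)) := by
  rw [Fintype.card_congr (Equiv.piSplitAt i (fun k => Fin (m k))), Fintype.card_prod,
    Fintype.card_fin]

lemma sum_norm_sq_indep {n : ℕ} (m : Fin n → ℕ) (z : (i : Fin n) → Fin (m i) → H)
    (hz : ∀ i, ∑ j, z i j = 0) :
    ∑ s : (k : Fin n) → Fin (m k), ‖∑ i, z i (s i)‖ ^ 2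
      = ∑ i, Fintype.card ((j : {j // j ≠ i}) → Fin (m j)) • ∑ j, ‖z i j‖ ^ 2 := by
  have expand : ∀ s : (k : Fin n) → Fin (m k), ‖∑ i, z i (s i)‖ ^ 2
      = ∑ i, ∑ k, ⟪z i (s i), z k (s k)⟫ := by
    intro s
    rw [← real_inner_self_eq_norm_sq, sum_inner]
    exact Finset.sum_congr rfl fun i _ => inner_sum _ _ _
  simp only [expand]
  rw [Finset.sum_comm]
  refine Finset.sum_congr rfl fun i _ => ?_
  rw [Finset.sum_comm]
  have : ∀ k ∈ Finset.univ (α := Fin n), k ≠ i →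
      ∑ s : (l : Fin n) → Fin (m l), ⟪z i (s i), z k (s k)⟫ = 0 := by
    intro k _ hki
    exact cross_zero m i k (Ne.symm hki) (z i) (z k) (hz i)
  rw [Finset.sum_eq_single i this (by simp)]
  rw [← marginal_sum m i (fun a => ‖z i a‖ ^ 2)]
  refine Finset.sum_congr rfl fun s _ => ?_
  rw [real_inner_self_eq_norm_sq]

section grad
variable [CompleteSpace H]

lemma inner_gradient_eq_fderiv {h : H → ℝ} {z : H} (hd : DifferentiableAt ℝ h z) (w : H) :
    ⟪gradient h z, w⟫ = fderiv ℝ h z w := by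
  have h1 : HasFDerivAt h (InnerProductSpace.toDual ℝ H (gradient h z)) z :=
    hasGradientAt_iff_hasFDerivAt.mp hd.hasGradientAt
  rw [h1.fderiv]
  rfl

lemma hasGradientAt_const_mul_sum {ι : Type*} [Fintype ι] (c : ℝ) (g : ι → H → ℝ) (x : H)
    (hg : ∀ j, DifferentiableAt ℝ (g j) x) :
    HasGradientAt (fun z => c * ∑ j, g j z) (c • ∑ j, gradient (g j) x) x := by
  rw [hasGradientAt_iff_hasFDerivAt]
  have h1 : HasFDerivAt (fun z => ∑ j, g j z) (∑ j, fderiv ℝ (g j) x) x :=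
    HasFDerivAt.fun_sum fun j _ => (hg j).hasFDerivAt
  have h2 := h1.const_mul c
  convert h2 using 1
  · rfl
  rw [map_smul, map_sum]
  congr 1
  refine Finset.sum_congr rfl fun j _ => ?_
  have h3 : HasFDerivAt (g j) (InnerProductSpace.toDual ℝ H (gradient (g j) x)) x :=
    hasGradientAt_iff_hasFDerivAt.mp (hg j).hasGradientAt
  exact h3.fderiv.symm

lemma gradient_const_mul_sum {ι : Type*} [Fintype ι] (c : ℝ) (g : ι → H → ℝ) (x : H)
    (hg : ∀ j, DifferentiableAt ℝ (g j) x) :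
    gradient (fun z => c * ∑ j, g j z) x = c • ∑ j, gradient (g j) x :=
  (hasGradientAt_const_mul_sum c g x hg).gradient

end grad

section descent
variable [CompleteSpace H]

lemma descent_lemma_s8 {h : H → ℝ} {L : ℝ} (hL : 0 ≤ L) (hd : Differentiable ℝ h)
    (hl : ∀ a b, ‖gradient h a - gradient h b‖ ≤ L * ‖a - b‖) (x y : H) :
    h y ≤ h x + ⟪gradient h x, y - x⟫ + L / 2 * ‖y - x‖ ^ 2 := by
  set v := y - x with hv
  have hgradcont : Continuous (gradient h) := by
    have : LipschitzWith (Real.toNNReal L) (gradient h) := by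
      apply LipschitzWith.of_dist_le_mul
      intro a b
      rw [dist_eq_norm, dist_eq_norm]
      calc ‖gradient h a - gradient h b‖ ≤ L * ‖a - b‖ := hl a b
        _ = (Real.toNNReal L : ℝ) * ‖a - b‖ := by rw [Real.coe_toNNReal L hL]
    exact this.continuous
  have hc : ∀ t : ℝ, HasDerivAt (fun t : ℝ => x + t • v) v t := by
    intro t
    simpa using ((hasDerivAt_id t).smul_const v).const_add x
  set φ' : ℝ → ℝ := fun t => ⟪gradient h (x + t • v), v⟫ with hφ'
  have key : ∀ t ∈ Set.uIcc (0:ℝ) 1, HasDerivAt (fun t : ℝ => h (x + t • v)) (φ' t) t := by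
    intro t _
    have := (hd (x + t • v)).hasFDerivAt.comp_hasDerivAt t (hc t)
    simp only [hφ', inner_gradient_eq_fderiv (hd (x + t • v)) v]
    exact this
  have contφ' : Continuous φ' := by
    apply Continuous.inner
    · exact hgradcont.comp (by continuity)
    · exact continuous_const
  have ftc : ∫ t in (0:ℝ)..1, φ' t = h (x + (1:ℝ) • v) - h (x + (0:ℝ) • v) :=
    intervalIntegral.integral_eq_sub_of_hasDerivAt key (contφ'.intervalIntegrable 0 1)
  have hsimp : h (x + (1:ℝ) • v) = h y := by
    rw [one_smul, hv]; congr 1; abel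
  have hsimp0 : h (x + (0:ℝ) • v) = h x := by rw [zero_smul, add_zero]
  have contg : Continuous (fun t : ℝ => ⟪gradient h x, v⟫ + L * t * ‖v‖ ^ 2) := by
    fun_prop
  have bound : ∫ t in (0:ℝ)..1, φ' t
      ≤ ∫ t in (0:ℝ)..1, (⟪gradient h x, v⟫ + L * t * ‖v‖ ^ 2) := by
    apply intervalIntegral.integral_mono_on (by norm_num)
      (contφ'.intervalIntegrable 0 1)
      (contg.intervalIntegrable 0 1)
    intro t ht
    obtain ⟨ht0, ht1⟩ := ht
    have h1 : φ' t - ⟪gradient h x, v⟫ = ⟪gradient h (x + t • v) - gradient h x, v⟫ := by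
      rw [inner_sub_left]
    have h2 : ⟪gradient h (x + t • v) - gradient h x, v⟫ ≤ L * t * ‖v‖ ^ 2 := by
      calc ⟪gradient h (x + t • v) - gradient h x, v⟫
          ≤ ‖gradient h (x + t • v) - gradient h x‖ * ‖v‖ := real_inner_le_norm _ _
        _ ≤ (L * ‖x + t • v - x‖) * ‖v‖ := by
            apply mul_le_mul_of_nonneg_right (hl _ _) (norm_nonneg _)
        _ = L * t * ‖v‖ ^ 2 := by
            rw [add_sub_cancel_left, norm_smul, Real.norm_eq_abs, abs_of_nonneg ht0]
            ring
    linarith [h1, h2]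
  have intval : ∫ t in (0:ℝ)..1, (⟪gradient h x, v⟫ + L * t * ‖v‖ ^ 2)
      = ⟪gradient h x, v⟫ + L / 2 * ‖v‖ ^ 2 := by
    have hre : (fun t : ℝ => ⟪gradient h x, v⟫ + L * t * ‖v‖ ^ 2)
        = fun t : ℝ => ⟪gradient h x, v⟫ + (L * ‖v‖ ^ 2) * t := by
      ext t; ring
    rw [hre, intervalIntegral.integral_add (intervalIntegrable_const)
      (by apply Continuous.intervalIntegrable; fun_prop),
      intervalIntegral.integral_const_mul, integral_id]
    simp only [intervalIntegral.integral_const, smul_eq_mul, one_mul, sub_zero]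
    ring
  rw [hsimp, hsimp0] at ftc
  have := bound
  rw [ftc, intval] at this
  linarith

end descent

lemma young4 (a b c e : H) :
    ‖a + b + c + e‖ ^ 2 ≤ 8/3 * ‖a‖ ^ 2 + 8 * ‖b‖ ^ 2 + 4 * ‖c‖ ^ 2 + 4 * ‖e‖ ^ 2 := by
  have h1 : ‖a + b + c + e‖ ≤ ‖a‖ + ‖b‖ + ‖c‖ + ‖e‖ := by
    calc ‖a + b + c + e‖ ≤ ‖a + b + c‖ + ‖e‖ := norm_add_le _ _
      _ ≤ ‖a + b‖ + ‖c‖ + ‖e‖ := by linarith [norm_add_le (a+b) c]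
      _ ≤ ‖a‖ + ‖b‖ + ‖c‖ + ‖e‖ := by linarith [norm_add_le a b]
  have h2 : ‖a + b + c + e‖ ^ 2 ≤ (‖a‖ + ‖b‖ + ‖c‖ + ‖e‖) ^ 2 := by
    apply pow_le_pow_left₀ (norm_nonneg _) h1
  nlinarith [sq_nonneg (8/3*‖a‖ - 8*‖b‖), sq_nonneg (8/3*‖a‖ - 4*‖c‖),
    sq_nonneg (8/3*‖a‖ - 4*‖e‖), sq_nonneg (8*‖b‖ - 4*‖c‖), sq_nonneg (8*‖b‖ - 4*‖e‖),
    sq_nonneg (4*‖c‖ - 4*‖e‖)]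

lemma norm_sum_sq_le {ι : Type*} [Fintype ι] (u : ι → H) :
    ‖∑ i, u i‖ ^ 2 ≤ (Fintype.card ι : ℝ) * ∑ i, ‖u i‖ ^ 2 := by
  calc ‖∑ i, u i‖ ^ 2 ≤ (∑ i, ‖u i‖) ^ 2 := by
        apply pow_le_pow_left₀ (norm_nonneg _) (norm_sum_le _ _)
    _ ≤ (Fintype.card ι : ℝ) * ∑ i, ‖u i‖ ^ 2 := by
        simpa using sq_sum_le_card_mul_sum_sq (s := Finset.univ) (f := fun i => ‖u i‖)

lemma var_le_second_moment {M : ℕ} (w : Fin M → H) (c : H) (hc : ∑ j, w j = (M : ℝ) • c) :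
    ∑ j, ‖w j - c‖ ^ 2 ≤ ∑ j, ‖w j‖ ^ 2 := by
  have expand : ∑ j, ‖w j - c‖ ^ 2
      = ∑ j, ‖w j‖ ^ 2 - 2 * ⟪∑ j, w j, c⟫ + (M : ℝ) * ‖c‖ ^ 2 := by
    rw [sum_inner]
    simp only [@norm_sub_sq_real H]
    rw [Finset.sum_add_distrib, Finset.sum_sub_distrib, Finset.sum_const,
      Finset.card_univ, Finset.mul_sum]
    simp only [Fintype.card_fin, nsmul_eq_mul]
    try ring
  rw [expand, hc, real_inner_smul_left, real_inner_self_eq_norm_sq]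
  nlinarith [norm_nonneg c, sq_nonneg ‖c‖, Nat.cast_nonneg (α := ℝ) M,
    mul_nonneg (Nat.cast_nonneg (α := ℝ) M) (sq_nonneg ‖c‖)]

section avg
variable [CompleteSpace H]

lemma avg_differentiable {ι : Type*} [Fintype ι] (c : ℝ) (g : ι → H → ℝ)
    (hg : ∀ j, Differentiable ℝ (g j)) :
    Differentiable ℝ (fun z => c * ∑ j, g j z) := by
  apply Differentiable.const_mul
  exact Differentiable.fun_sum fun j _ => hg j

lemma avg_grad_lip {ι : Type*} [Fintype ι] {c : ℝ} (hcpos : 0 < c)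
    (hcard : c * (Fintype.card ι : ℝ) = 1)
    (g : ι → H → ℝ) (hg : ∀ j, Differentiable ℝ (g j)) {L : ℝ}
    (hL : ∀ j a b, ‖gradient (g j) a - gradient (g j) b‖ ≤ L * ‖a - b‖) (a b : H) :
    ‖gradient (fun z => c * ∑ j, g j z) a
      - gradient (fun z => c * ∑ j, g j z) b‖ ≤ L * ‖a - b‖ := by
  rw [gradient_const_mul_sum c g a (fun j => (hg j).differentiableAt),
    gradient_const_mul_sum c g b (fun j => (hg j).differentiableAt),
    ← smul_sub, ← Finset.sum_sub_distrib, norm_smul]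
  calc ‖c‖ * ‖∑ j, (gradient (g j) a - gradient (g j) b)‖
      ≤ c * ∑ j, ‖gradient (g j) a - gradient (g j) b‖ := by
        rw [Real.norm_eq_abs, abs_of_pos hcpos]
        exact mul_le_mul_of_nonneg_left (norm_sum_le _ _) hcpos.le
    _ ≤ c * ∑ _j : ι, L * ‖a - b‖ := by
        apply mul_le_mul_of_nonneg_left (Finset.sum_le_sum fun j _ => hL j a b) hcpos.le
    _ = L * ‖a - b‖ := by
        rw [Finset.sum_const, Finset.card_univ, nsmul_eq_mul, ← mul_assoc,
          mul_comm c (Fintype.card ι : ℝ), ← mul_assoc, mul_comm (Fintype.card ι : ℝ) c,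
          hcard, one_mul]

lemma avg_strong_convex {ι : Type*} [Fintype ι] {c : ℝ} (hcpos : 0 < c)
    (hcard : c * (Fintype.card ι : ℝ) = 1)
    (g : ι → H → ℝ) (hg : ∀ j, Differentiable ℝ (g j)) {μ : ℝ}
    (hsc : ∀ j a b, g j b ≥ g j a + ⟪gradient (g j) a, b - a⟫ + μ / 2 * ‖a - b‖ ^ 2)
    (a b : H) :
    c * ∑ j, g j b
      ≥ c * ∑ j, g j a
        + ⟪gradient (fun z => c * ∑ j, g j z) a, b - a⟫
        + μ / 2 * ‖a - b‖ ^ 2 := by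
  rw [gradient_const_mul_sum c g a (fun j => (hg j).differentiableAt),
    real_inner_smul_left, sum_inner]
  have hsum : ∑ j, g j b ≥ ∑ j, (g j a + ⟪gradient (g j) a, b - a⟫ + μ / 2 * ‖a - b‖ ^ 2) :=
    Finset.sum_le_sum fun j _ => hsc j a b
  rw [Finset.sum_add_distrib, Finset.sum_add_distrib, Finset.sum_const, Finset.card_univ,
    nsmul_eq_mul] at hsum
  have := mul_le_mul_of_nonneg_left hsum hcpos.le
  have hcancel : c * ((Fintype.card ι : ℝ) * (μ / 2 * ‖a - b‖ ^ 2)) = μ / 2 * ‖a - b‖ ^ 2 := by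
    rw [← mul_assoc, hcard, one_mul]
  calc c * ∑ j, g j a + c * ∑ j, ⟪gradient (g j) a, b - a⟫ + μ / 2 * ‖a - b‖ ^ 2
      = c * (∑ j, g j a + ∑ j, ⟪gradient (g j) a, b - a⟫
          + (Fintype.card ι : ℝ) * (μ / 2 * ‖a - b‖ ^ 2)) := by
        rw [mul_add, mul_add, hcancel]
    _ ≤ c * ∑ j, g j b := this

end avg

set_option maxHeartbeats 1000000 in
lemma final_scalar (n μ L α D S1 S0 Q gap IP GB V G2 E2 : ℝ)
    (hn : 1 ≤ n) (hμ : 0 < μ) (hμL : μ ≤ L) (hα0 : 0 < α) (h8 : 8 * L ^ 2 * α ≤ μ)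
    (hD : 0 ≤ D) (hS1 : 0 ≤ S1) (hS0 : 0 ≤ S0) (hQ : 0 ≤ Q) (hgap0 : 0 ≤ gap)
    (hgapD : μ / 2 * D ≤ gap)
    (hIP : gap + μ / 2 * D - L / (2 * n) * S1 ≤ IP)
    (hGB : GB ≤ 4 * G2 + 4 / 3 * E2)
    (hG2 : G2 ≤ 2 * L * gap) (hE2 : E2 ≤ L ^ 2 / n * S1) (hE2' : 0 ≤ E2)
    (hV : V ≤ L ^ 2 / n ^ 2 * (8 / 3 * S1 + 8 * n * D + 4 * n * Q + 4 * S0)) :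
    D - 2 * α * IP + α ^ 2 * GB + α ^ 2 * V
      ≤ (1 - μ * α / 2) * D + 3 * L ^ 2 * α / (2 * μ * n) * S1
        + 4 * L ^ 2 * α ^ 2 / n ^ 2 * S0 + 4 * L ^ 2 * α ^ 2 / n * Q := by
  have hn0 : (0:ℝ) < n := lt_of_lt_of_le one_pos hn
  have hL0 : (0:ℝ) < L := lt_of_lt_of_le hμ hμL
  have hα2 : (0:ℝ) ≤ α ^ 2 := sq_nonneg α
  have hμsq : μ ^ 2 ≤ L ^ 2 := by nlinarith
  have hμα : 8 * μ * α ≤ 1 := by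
    rw [← mul_le_mul_iff_left₀ hμ]
    calc 8 * μ * α * μ = (8 * μ ^ 2 * α) := by ring
      _ ≤ 8 * L ^ 2 * α := by nlinarith
      _ ≤ μ := h8
      _ = 1 * μ := (one_mul μ).symm
  have h8La : 8 * L * α ≤ 1 := by
    rw [← mul_le_mul_iff_left₀ hL0]
    calc 8 * L * α * L = 8 * L ^ 2 * α := by ring
      _ ≤ μ := h8
      _ ≤ L := hμL
      _ = 1 * L := (one_mul L).symm
  -- bounds on the three main contributions
  have hGB' : α ^ 2 * GB ≤ α ^ 2 * (8 * L * gap + 4 / 3 * (L ^ 2 / n) * S1) := by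
    apply mul_le_mul_of_nonneg_left _ hα2
    have t1 : 4 * G2 ≤ 4 * (2 * L * gap) := by linarith
    have t2 : 4 / 3 * E2 ≤ 4 / 3 * (L ^ 2 / n * S1) := by linarith
    have : 4 * (2 * L * gap) + 4 / 3 * (L ^ 2 / n * S1)
        = 8 * L * gap + 4 / 3 * (L ^ 2 / n) * S1 := by ring
    linarith
  have hV' : α ^ 2 * V ≤ α ^ 2 * (L ^ 2 / n ^ 2 * (8 / 3 * S1 + 8 * n * D + 4 * n * Q + 4 * S0)) :=
    mul_le_mul_of_nonneg_left hV hα2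
  have hIP' : -2 * α * IP ≤ -(2 * α * gap) - μ * α * D + L * α / n * S1 := by
    have h0 : 2 * α * (gap + μ / 2 * D - L / (2 * n) * S1) ≤ 2 * α * IP :=
      mul_le_mul_of_nonneg_left hIP (by positivity)
    have he : 2 * α * (gap + μ / 2 * D - L / (2 * n) * S1)
        = 2 * α * gap + μ * α * D - L * α / n * S1 := by
      field_simp
    linarith [h0, he.symm.le]
  -- gap and D terms
  have h1 : α ^ 2 * (8 * L * gap) ≤ α * gap := by
    have e : α ^ 2 * (8 * L * gap) = (8 * L * α) * (α * gap) := by ring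
    have t : (8 * L * α) * (α * gap) ≤ 1 * (α * gap) :=
      mul_le_mul_of_nonneg_right h8La (mul_nonneg hα0.le hgap0)
    rw [e]; linarith
  have h2 : α ^ 2 * (L ^ 2 / n ^ 2 * (8 * n * D)) ≤ μ * α * D := by
    have e : α ^ 2 * (L ^ 2 / n ^ 2 * (8 * n * D)) = (8 * L ^ 2 * α) * α * D / n := by
      field_simp
    have t1 : (8 * L ^ 2 * α) * α * D ≤ μ * α * D :=
      mul_le_mul_of_nonneg_right (mul_le_mul_of_nonneg_right h8 hα0.le) hD
    have t2 : (8 * L ^ 2 * α) * α * D / n ≤ (8 * L ^ 2 * α) * α * D := by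
      apply div_le_self _ hn
      positivity
    rw [e]; linarith
  have h3 : α * (μ / 2 * D) ≤ α * gap := mul_le_mul_of_nonneg_left hgapD hα0.le
  -- S1 terms
  have h4 : L * α / n * S1 ≤ L ^ 2 * α / (μ * n) * S1 := by
    apply mul_le_mul_of_nonneg_right _ hS1
    rw [div_le_div_iff₀ hn0 (by positivity)]
    have : L * α * (μ * n) = (μ * L) * (α * n) := by ring
    have t : (μ * L) * (α * n) ≤ (L * L) * (α * n) := by
      apply mul_le_mul_of_nonneg_right (mul_le_mul_of_nonneg_right hμL hL0.le)
      positivity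
    nlinarith
  have h5 : α ^ 2 * (4 / 3 * (L ^ 2 / n) * S1) ≤ L ^ 2 * α / (6 * μ * n) * S1 := by
    have e0 : α ^ 2 * (4 / 3 * (L ^ 2 / n) * S1) = α ^ 2 * (4 / 3 * (L ^ 2 / n)) * S1 := by
      ring
    rw [e0]
    apply mul_le_mul_of_nonneg_right _ hS1
    have e1 : α ^ 2 * (4 / 3 * (L ^ 2 / n)) = (4 / 3 * L ^ 2 * α ^ 2) / n := by ring
    have e2 : L ^ 2 * α / (6 * μ * n) = (L ^ 2 * α / (6 * μ)) / n := by ring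
    rw [e1, e2, div_le_div_iff₀ hn0 hn0]
    have core : 4 / 3 * L ^ 2 * α ^ 2 ≤ L ^ 2 * α / (6 * μ) := by
      rw [le_div_iff₀ (by positivity : (0:ℝ) < 6 * μ)]
      have t : (8 * μ * α) * (L ^ 2 * α) ≤ 1 * (L ^ 2 * α) :=
        mul_le_mul_of_nonneg_right hμα (by positivity)
      nlinarith
    nlinarith [mul_le_mul_of_nonneg_right core hn0.le]
  have h6 : α ^ 2 * (L ^ 2 / n ^ 2 * (8 / 3 * S1)) ≤ L ^ 2 * α / (3 * μ * n) * S1 := by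
    have e : α ^ 2 * (L ^ 2 / n ^ 2 * (8 / 3 * S1)) = (α ^ 2 * L ^ 2 * (8 / 3) / n ^ 2) * S1 := by
      ring
    rw [e]
    apply mul_le_mul_of_nonneg_right _ hS1
    rw [div_le_div_iff₀ (by positivity) (by positivity)]
    have t1 : (8 * μ * α) * (L ^ 2 * α * n) ≤ 1 * (L ^ 2 * α * n) :=
      mul_le_mul_of_nonneg_right hμα (by positivity)
    have t2 : L ^ 2 * α * n * 1 ≤ L ^ 2 * α * n * n :=
      mul_le_mul_of_nonneg_left hn (by positivity)
    nlinarith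
  have h7 : L ^ 2 * α / (μ * n) * S1 + L ^ 2 * α / (6 * μ * n) * S1
      + L ^ 2 * α / (3 * μ * n) * S1 = 3 * L ^ 2 * α / (2 * μ * n) * S1 := by
    field_simp
    ring
  have h8e : α ^ 2 * (L ^ 2 / n ^ 2 * (4 * n * Q)) = 4 * L ^ 2 * α ^ 2 / n * Q := by
    field_simp
  have h9e : α ^ 2 * (L ^ 2 / n ^ 2 * (4 * S0)) = 4 * L ^ 2 * α ^ 2 / n ^ 2 * S0 := by
    field_simp
  have hA : D - (2 * α * gap) - μ * α * D + α ^ 2 * (8 * L * gap)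
      + α ^ 2 * (L ^ 2 / n ^ 2 * (8 * n * D)) ≤ (1 - μ * α / 2) * D := by
    have e : (1 - μ * α / 2) * D = D - μ * α / 2 * D := by ring
    linarith [h1, h2, h3]
  have hB : L * α / n * S1 + α ^ 2 * (4 / 3 * (L ^ 2 / n) * S1)
      + α ^ 2 * (L ^ 2 / n ^ 2 * (8 / 3 * S1)) ≤ 3 * L ^ 2 * α / (2 * μ * n) * S1 := by
    linarith [h4, h5, h6, h7]
  have hexp : α ^ 2 * (L ^ 2 / n ^ 2 * (8 / 3 * S1 + 8 * n * D + 4 * n * Q + 4 * S0))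
      = α ^ 2 * (L ^ 2 / n ^ 2 * (8 / 3 * S1)) + α ^ 2 * (L ^ 2 / n ^ 2 * (8 * n * D))
        + α ^ 2 * (L ^ 2 / n ^ 2 * (4 * n * Q)) + α ^ 2 * (L ^ 2 / n ^ 2 * (4 * S0)) := by
    ring
  have hexp2 : α ^ 2 * (8 * L * gap + 4 / 3 * (L ^ 2 / n) * S1)
      = α ^ 2 * (8 * L * gap) + α ^ 2 * (4 / 3 * (L ^ 2 / n) * S1) := by ring
  linarith [hGB', hV', hIP', hA, hB, hexp, hexp2, h8e, h9e]

set_option maxHeartbeats 2000000 in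
/-- Refined bound on the expected optimality gap after one SVRG descent step
with step size `0 < α ≤ μ/(8L²)`. -/
theorem svrg_optimality_gap_bound {n p : ℕ} (hn : 0 < n)
    (m : Fin n → ℕ) (hm : ∀ i, 0 < m i) (μ L : ℝ)
    (hμ : 0 < μ) (hμL : μ ≤ L)
    (f : (i : Fin n) → Fin (m i) → EuclideanSpace ℝ (Fin p) → ℝ)
    (hdiff : ∀ i j, Differentiable ℝ (f i j))
    (hsmooth : ∀ i j x y, ‖gradient (f i j) x - gradient (f i j) y‖ ≤ L * ‖x - y‖)
    (hsc : ∀ i j x y,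
      f i j y ≥ f i j x + ⟪gradient (f i j) x, y - x⟫ + μ / 2 * ‖x - y‖ ^ 2)
    (x x0 : Fin n → EuclideanSpace ℝ (Fin p))
    (α : ℝ) (hα0 : 0 < α) (hα : α ≤ μ / (8 * L ^ 2))
    (xstar : EuclideanSpace ℝ (Fin p)) :
    let fi : Fin n → EuclideanSpace ℝ (Fin p) → ℝ :=
      fun i z => (1 / (m i : ℝ)) * ∑ j, f i j z
    let F : EuclideanSpace ℝ (Fin p) → ℝ := fun z => (1 / (n : ℝ)) * ∑ i, fi i z
    let v : (i : Fin n) → Fin (m i) → EuclideanSpace ℝ (Fin p) :=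
      fun i j => gradient (f i j) (x i) - gradient (f i j) (x0 i) +
        gradient (fi i) (x0 i)
    let xbar : EuclideanSpace ℝ (Fin p) := (1 / (n : ℝ)) • ∑ i, x i
    let xbar0 : EuclideanSpace ℝ (Fin p) := (1 / (n : ℝ)) • ∑ i, x0 i
    let ybar : ((i : Fin n) → Fin (m i)) → EuclideanSpace ℝ (Fin p) :=
      fun s => (1 / (n : ℝ)) • ∑ i, v i (s i)
    (∀ z, F xstar ≤ F z) →
      (1 / (Fintype.card ((i : Fin n) → Fin (m i)) : ℝ)) *
          ∑ s : (i : Fin n) → Fin (m i), ‖xbar - α • ybar s - xstar‖ ^ 2 ≤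
        (1 - μ * α / 2) * ‖xbar - xstar‖ ^ 2 +
          (3 * L ^ 2 * α / (2 * μ * (n : ℝ))) * ∑ i, ‖x i - xbar‖ ^ 2 +
          (4 * L ^ 2 * α ^ 2 / (n : ℝ) ^ 2) * ∑ i, ‖x0 i - xbar0‖ ^ 2 +
          (4 * L ^ 2 * α ^ 2 / (n : ℝ)) * ‖xbar0 - xstar‖ ^ 2 := by
  intro fi F v xbar xbar0 ybar hmin
  have hL0 : (0:ℝ) < L := lt_of_lt_of_le hμ hμL
  have hn1 : (1:ℝ) ≤ (n:ℝ) := by exact_mod_cast hn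
  have hn0 : (0:ℝ) < (n:ℝ) := lt_of_lt_of_le one_pos hn1
  have h8 : 8 * L ^ 2 * α ≤ μ := by
    have := (le_div_iff₀ (by positivity : (0:ℝ) < 8 * L ^ 2)).mp hα
    linarith
  -- basic properties of the averages
  have hmne : ∀ i, ((m i : ℝ)) ≠ 0 := fun i => by
    exact_mod_cast (hm i).ne'
  have hcpos : ∀ i, (0:ℝ) < 1 / (m i : ℝ) := fun i => by
    have : (0:ℝ) < (m i : ℝ) := by exact_mod_cast hm i
    positivity
  have hcard : ∀ i, (1 / (m i : ℝ)) * ((Fintype.card (Fin (m i)) : ℝ)) = 1 := fun i => by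
    rw [Fintype.card_fin]
    exact one_div_mul_cancel (hmne i)
  have hfid : ∀ i, Differentiable ℝ (fi i) := fun i =>
    avg_differentiable (1 / (m i : ℝ)) (f i) (hdiff i)
  have hfil : ∀ i a b, ‖gradient (fi i) a - gradient (fi i) b‖ ≤ L * ‖a - b‖ := fun i =>
    avg_grad_lip (hcpos i) (hcard i) (f i) (hdiff i) (hsmooth i)
  have hfisc : ∀ i a b, fi i b ≥ fi i a + ⟪gradient (fi i) a, b - a⟫ + μ / 2 * ‖a - b‖ ^ 2 :=
    fun i => avg_strong_convex (hcpos i) (hcard i) (f i) (hdiff i) (hsc i)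
  have hcposn : (0:ℝ) < 1 / (n : ℝ) := by positivity
  have hcardn : (1 / (n : ℝ)) * ((Fintype.card (Fin n) : ℝ)) = 1 := by
    rw [Fintype.card_fin]
    exact one_div_mul_cancel hn0.ne'
  have hFd : Differentiable ℝ F := avg_differentiable (1 / (n : ℝ)) fi hfid
  have hFl : ∀ a b, ‖gradient F a - gradient F b‖ ≤ L * ‖a - b‖ :=
    avg_grad_lip hcposn hcardn fi hfid hfil
  have hFsc : ∀ a b, F b ≥ F a + ⟪gradient F a, b - a⟫ + μ / 2 * ‖a - b‖ ^ 2 :=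
    avg_strong_convex hcposn hcardn fi hfid hfisc
  have hdesc_fi : ∀ i a b, fi i b ≤ fi i a + ⟪gradient (fi i) a, b - a⟫ + L / 2 * ‖b - a‖ ^ 2 :=
    fun i => descent_lemma_s8 hL0.le (hfid i) (hfil i)
  have hdesc_F : ∀ a b, F b ≤ F a + ⟪gradient F a, b - a⟫ + L / 2 * ‖b - a‖ ^ 2 :=
    descent_lemma_s8 hL0.le hFd hFl
  have hgradfi : ∀ i w, gradient (fi i) w = (1 / (m i : ℝ)) • ∑ j, gradient (f i j) w :=
    fun i w => gradient_const_mul_sum _ _ _ (fun j => (hdiff i j).differentiableAt)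
  have hgradF : ∀ w, gradient F w = (1 / (n : ℝ)) • ∑ i, gradient (fi i) w :=
    fun w => gradient_const_mul_sum _ _ _ (fun i => (hfid i).differentiableAt)
  have hgrad0 : gradient F xstar = 0 := by
    have hlm : IsLocalMin F xstar := Filter.Eventually.of_forall hmin
    have h0 : fderiv ℝ F xstar = 0 := hlm.fderiv_eq_zero
    have h1 : HasFDerivAt F (0 : EuclideanSpace ℝ (Fin p) →L[ℝ] ℝ) xstar := by
      rw [← h0]
      exact (hFd xstar).hasFDerivAt
    have h2 := hasFDerivAt_iff_hasGradientAt.mp h1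
    have h3 := h2.gradient
    rw [h3, map_zero]
  -- the stochastic gradients and their centering
  classical
  haveI : ∀ i, Nonempty (Fin (m i)) := fun i => ⟨⟨0, hm i⟩⟩
  haveI : Nonempty ((i : Fin n) → Fin (m i)) := ⟨fun i => Classical.arbitrary _⟩
  set gi : Fin n → EuclideanSpace ℝ (Fin p) := fun i => gradient (fi i) (x i) with hgi_def
  set gbar : EuclideanSpace ℝ (Fin p) := (1/(n:ℝ)) • ∑ i, gi i with hgbar_def
  set z : (i : Fin n) → Fin (m i) → EuclideanSpace ℝ (Fin p) :=
    fun i j => v i j - gi i with hzd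
  have hsumgrad : ∀ i w, ∑ j, gradient (f i j) w = (m i : ℝ) • gradient (fi i) w := by
    intro i w
    rw [hgradfi i w, smul_smul, mul_one_div, div_self (hmne i), one_smul]
  have hsumv : ∀ i, ∑ j, v i j = (m i : ℝ) • gi i := by
    intro i
    have h1 : ∑ j, v i j = ∑ j, gradient (f i j) (x i) - ∑ j, gradient (f i j) (x0 i)
        + (m i) • gradient (fi i) (x0 i) := by
      rw [Finset.sum_add_distrib, Finset.sum_sub_distrib, Finset.sum_const,
        Finset.card_univ, Fintype.card_fin]
    rw [h1, hsumgrad i (x i), hsumgrad i (x0 i), ← Nat.cast_smul_eq_nsmul ℝ (m i),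
      ← smul_sub, ← smul_add, sub_add_cancel, hgi_def]
  have hz0 : ∀ i, ∑ j, z i j = 0 := by
    intro i
    simp only [hzd]
    rw [Finset.sum_sub_distrib, Finset.sum_const, Finset.card_univ, Fintype.card_fin,
      hsumv i, ← Nat.cast_smul_eq_nsmul ℝ (m i), sub_self]
  have hybar_eq : ∀ s, ybar s = gbar + (1/(n:ℝ)) • ∑ i, z i (s i) := by
    intro s
    have h1 : ∑ i, z i (s i) = ∑ i, v i (s i) - ∑ i, gi i := by
      simp only [hzd]
      rw [Finset.sum_sub_distrib]
    have h2 : ybar s = (1/(n:ℝ)) • ∑ i, v i (s i) := rfl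
    rw [h1, smul_sub, h2, hgbar_def]
    abel
  -- expansion of the expected squared distance
  set d : EuclideanSpace ℝ (Fin p) := xbar - xstar with hd_def
  have hrearr : ∀ s, xbar - α • ybar s - xstar
      = (d - α • gbar) - α • ((1/(n:ℝ)) • ∑ i, z i (s i)) := by
    intro s
    rw [hybar_eq s, smul_add, hd_def]
    abel
  have keyS : ∀ s : (i : Fin n) → Fin (m i), ‖xbar - α • ybar s - xstar‖ ^ 2
      = ‖d - α • gbar‖ ^ 2
        - 2 * (α * (1/(n:ℝ))) * ⟪d - α • gbar, ∑ i, z i (s i)⟫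
        + α ^ 2 * (1/(n:ℝ)) ^ 2 * ‖∑ i, z i (s i)‖ ^ 2 := by
    intro s
    rw [hrearr s, @norm_sub_sq_real, real_inner_smul_right, real_inner_smul_right,
      norm_smul, norm_smul, Real.norm_eq_abs, Real.norm_eq_abs, abs_of_pos hα0,
      abs_of_pos hcposn]
    ring
  have hzmarg : ∑ s : (i : Fin n) → Fin (m i), ∑ i, z i (s i) = 0 := by
    rw [Finset.sum_comm]
    refine Finset.sum_eq_zero fun i _ => ?_
    rw [marginal_sum m i (z i), hz0 i, smul_zero]
  have hsum_inner : ∑ s : (i : Fin n) → Fin (m i), ⟪d - α • gbar, ∑ i, z i (s i)⟫ = 0 := by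
    rw [← inner_sum, hzmarg, inner_zero_right]
  have hortho := sum_norm_sq_indep m z hz0
  set N : ℕ := Fintype.card ((i : Fin n) → Fin (m i)) with hN_def
  have hNpos : 0 < N := Fintype.card_pos
  have hNne : ((N:ℝ)) ≠ 0 := by exact_mod_cast hNpos.ne'
  set Z : Fin n → ℝ := fun i => ∑ j, ‖z i j‖ ^ 2 with hZ_def
  have hsplit2 : ∑ s : (i : Fin n) → Fin (m i), ‖xbar - α • ybar s - xstar‖ ^ 2
      = (N:ℝ) * ‖d - α • gbar‖ ^ 2
        + α ^ 2 * (1/(n:ℝ)) ^ 2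
          * ∑ i, (Fintype.card ((j : {j // j ≠ i}) → Fin (m j)) : ℝ) * Z i := by
    rw [Finset.sum_congr rfl (fun s _ => keyS s), Finset.sum_add_distrib,
      Finset.sum_sub_distrib, Finset.sum_const, Finset.card_univ, ← Finset.mul_sum,
      ← Finset.mul_sum, hsum_inner, mul_zero, sub_zero, nsmul_eq_mul, hortho]
    congr 1
    rw [Finset.sum_congr rfl (fun i _ => by rw [nsmul_eq_mul] : ∀ i ∈ Finset.univ,
      (Fintype.card ((j : {j // j ≠ i}) → Fin (m j))) • Z i
        = (Fintype.card ((j : {j // j ≠ i}) → Fin (m j)) : ℝ) * Z i)]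
  have hNM : ∀ i, (1/(N:ℝ)) * (Fintype.card ((j : {j // j ≠ i}) → Fin (m j)) : ℝ)
      = 1/(m i : ℝ) := by
    intro i
    have hcs := card_split m i
    have hMpos : 0 < Fintype.card ((j : {j // j ≠ i}) → Fin (m j)) := Fintype.card_pos
    have hMne : ((Fintype.card ((j : {j // j ≠ i}) → Fin (m j)) : ℝ)) ≠ 0 := by
      exact_mod_cast hMpos.ne'
    rw [hN_def, hcs, Nat.cast_mul]
    rw [one_div, one_div, mul_inv, mul_assoc, inv_mul_cancel₀ hMne, mul_one]
  set V : ℝ := (1/(n:ℝ)) ^ 2 * ∑ i, (1/(m i : ℝ)) * Z i with hV_def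
  have keyE : (1 / (N : ℝ)) * ∑ s : (i : Fin n) → Fin (m i), ‖xbar - α • ybar s - xstar‖ ^ 2
      = ‖d - α • gbar‖ ^ 2 + α ^ 2 * V := by
    rw [hsplit2, mul_add, ← mul_assoc, one_div_mul_cancel hNne, one_mul]
    congr 1
    have hswap : (1/(N:ℝ)) * ∑ i, (Fintype.card ((j : {j // j ≠ i}) → Fin (m j)) : ℝ) * Z i
        = ∑ i, (1/(m i : ℝ)) * Z i := by
      rw [Finset.mul_sum]
      refine Finset.sum_congr rfl fun i _ => ?_
      rw [← mul_assoc, hNM i]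
    rw [hV_def, ← hswap]
    ring
  -- scalar abbreviations
  set G : EuclideanSpace ℝ (Fin p) := gradient F xbar with hG_def
  set e : EuclideanSpace ℝ (Fin p) := gbar - G with he_def
  set D : ℝ := ‖d‖ ^ 2 with hD_def
  set S1 : ℝ := ∑ i, ‖x i - xbar‖ ^ 2 with hS1_def
  set S0 : ℝ := ∑ i, ‖x0 i - xbar0‖ ^ 2 with hS0_def
  set Q : ℝ := ‖xbar0 - xstar‖ ^ 2 with hQ_def
  set gap : ℝ := F xbar - F xstar with hgap_def
  have hD0 : 0 ≤ D := by rw [hD_def]; positivity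
  have hS10 : 0 ≤ S1 := by
    rw [hS1_def]; exact Finset.sum_nonneg fun i _ => by positivity
  have hS00 : 0 ≤ S0 := by
    rw [hS0_def]; exact Finset.sum_nonneg fun i _ => by positivity
  have hQ0 : 0 ≤ Q := by rw [hQ_def]; positivity
  have hgap0 : 0 ≤ gap := by
    rw [hgap_def]
    linarith [hmin xbar]
  -- strong convexity: distance to minimizer is controlled by the gap
  have hgapD : μ / 2 * D ≤ gap := by
    have h1 := hFsc xstar xbar
    rw [hgrad0, inner_zero_left, norm_sub_rev xstar xbar, ← hd_def, ← hD_def] at h1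
    rw [hgap_def]
    linarith
  -- smoothness: gradient norm squared is controlled by the gap
  have hG2b : ‖G‖ ^ 2 ≤ 2 * L * gap := by
    have ht := hdesc_F xbar (xbar - (1/L) • G)
    have harg : (xbar - (1/L) • G) - xbar = -((1/L) • G) := by abel
    rw [harg, inner_neg_right, real_inner_smul_right, real_inner_self_eq_norm_sq,
      norm_neg, norm_smul, Real.norm_eq_abs, abs_of_pos (by positivity : (0:ℝ) < 1/L)]
      at ht
    have hmin' := hmin (xbar - (1/L) • G)
    have hid : L/2 * ((1/L) * ‖G‖) ^ 2 = ‖G‖ ^ 2 / (2*L) := by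
      field_simp
    have hhalf : (1/L) * ‖G‖ ^ 2 - ‖G‖ ^ 2 / (2*L) = ‖G‖ ^ 2 / (2*L) := by
      field_simp
      ring
    have hfin : ‖G‖ ^ 2 / (2*L) ≤ gap := by
      rw [hgap_def]
      linarith
    have := (div_le_iff₀ (by positivity : (0:ℝ) < 2*L)).mp hfin
    linarith
  -- gradient heterogeneity bound
  have hE2' : (0:ℝ) ≤ ‖e‖ ^ 2 := by positivity
  have hE2b : ‖e‖ ^ 2 ≤ L ^ 2 / (n:ℝ) * S1 := by
    have heq : e = (1/(n:ℝ)) • ∑ i, (gi i - gradient (fi i) xbar) := by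
      rw [he_def, hgbar_def, hG_def, hgradF xbar, ← smul_sub, ← Finset.sum_sub_distrib]
    have hnorme : ‖e‖ ≤ (1/(n:ℝ)) * ∑ i, (L * ‖x i - xbar‖) := by
      rw [heq, norm_smul, Real.norm_eq_abs, abs_of_pos hcposn]
      apply mul_le_mul_of_nonneg_left _ hcposn.le
      calc ‖∑ i, (gi i - gradient (fi i) xbar)‖
          ≤ ∑ i, ‖gi i - gradient (fi i) xbar‖ := norm_sum_le _ _
        _ ≤ ∑ i, (L * ‖x i - xbar‖) :=
            Finset.sum_le_sum fun i _ => hfil i (x i) xbar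
    have hsq : ‖e‖ ^ 2 ≤ ((1/(n:ℝ)) * ∑ i, (L * ‖x i - xbar‖)) ^ 2 := by
      apply pow_le_pow_left₀ (norm_nonneg e) hnorme
    have hcs : (∑ i, (L * ‖x i - xbar‖)) ^ 2 ≤ (n:ℝ) * ∑ i, (L * ‖x i - xbar‖) ^ 2 := by
      simpa using sq_sum_le_card_mul_sum_sq (s := Finset.univ)
        (f := fun i => L * ‖x i - xbar‖)
    have hterm : ∑ i, (L * ‖x i - xbar‖) ^ 2 = L ^ 2 * S1 := by
      rw [hS1_def, Finset.mul_sum]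
      exact Finset.sum_congr rfl fun i _ => by rw [mul_pow]
    have hTnn : (0:ℝ) ≤ ∑ i, (L * ‖x i - xbar‖) := by positivity
    have hmp : ((1/(n:ℝ)) * ∑ i, (L * ‖x i - xbar‖)) ^ 2
        = (1/(n:ℝ)) ^ 2 * (∑ i, (L * ‖x i - xbar‖)) ^ 2 := by rw [mul_pow]
    have hlast : (1/(n:ℝ)) ^ 2 * ((n:ℝ) * (L ^ 2 * S1)) = L ^ 2 / (n:ℝ) * S1 := by
      field_simp
    calc ‖e‖ ^ 2 ≤ ((1/(n:ℝ)) * ∑ i, (L * ‖x i - xbar‖)) ^ 2 := hsq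
      _ = (1/(n:ℝ)) ^ 2 * (∑ i, (L * ‖x i - xbar‖)) ^ 2 := hmp
      _ ≤ (1/(n:ℝ)) ^ 2 * ((n:ℝ) * (L ^ 2 * S1)) := by
          apply mul_le_mul_of_nonneg_left _ (by positivity)
          rw [← hterm]
          exact hcs
      _ = L ^ 2 / (n:ℝ) * S1 := hlast
  -- bound on the norm of the average gradient
  have hGBb : ‖gbar‖ ^ 2 ≤ 4 * ‖G‖ ^ 2 + 4/3 * ‖e‖ ^ 2 := by
    have hge : gbar = G + e := by rw [he_def]; abel
    have htri : ‖gbar‖ ≤ ‖G‖ + ‖e‖ := by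
      rw [hge]; exact norm_add_le _ _
    have hsq : ‖gbar‖ ^ 2 ≤ (‖G‖ + ‖e‖) ^ 2 := by
      apply pow_le_pow_left₀ (norm_nonneg _) htri
    nlinarith [sq_nonneg (3 * ‖G‖ - ‖e‖), norm_nonneg G, norm_nonneg e]
  -- inner product bound
  have hIPb : gap + μ / 2 * D - L / (2 * (n:ℝ)) * S1 ≤ ⟪gbar, d⟫ := by
    have hper : ∀ i, (fi i xbar - fi i xstar) + μ/2 * ‖x i - xstar‖ ^ 2
        - L/2 * ‖x i - xbar‖ ^ 2 ≤ ⟪gi i, d⟫ := by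
      intro i
      have hgieq : gi i = gradient (fi i) (x i) := rfl
      have hdec : d = (xbar - x i) + (x i - xstar) := by rw [hd_def]; abel
      have hinner : ⟪gi i, d⟫ = ⟪gi i, xbar - x i⟫ + ⟪gi i, x i - xstar⟫ := by
        rw [hdec, inner_add_right]
      have ha := hdesc_fi i (x i) xbar
      have hb := hfisc i (x i) xstar
      rw [← hgieq] at ha hb
      have hflip : ⟪gi i, xstar - x i⟫ = -⟪gi i, x i - xstar⟫ := by
        rw [← inner_neg_right, neg_sub]
      have hsqf : ‖xbar - x i‖ ^ 2 = ‖x i - xbar‖ ^ 2 := by rw [norm_sub_rev]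
      rw [hinner]
      rw [hflip] at hb
      rw [hsqf] at ha
      linarith
    have hsum : ∑ i, ((fi i xbar - fi i xstar) + μ/2 * ‖x i - xstar‖ ^ 2
        - L/2 * ‖x i - xbar‖ ^ 2) ≤ ∑ i, ⟪gi i, d⟫ :=
      Finset.sum_le_sum fun i _ => hper i
    have hsum_split : ∑ i, ((fi i xbar - fi i xstar) + μ/2 * ‖x i - xstar‖ ^ 2
        - L/2 * ‖x i - xbar‖ ^ 2)
        = (∑ i, fi i xbar - ∑ i, fi i xstar) + μ/2 * (∑ i, ‖x i - xstar‖ ^ 2)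
          - L/2 * S1 := by
      rw [Finset.sum_sub_distrib, Finset.sum_add_distrib, Finset.sum_sub_distrib,
        ← Finset.mul_sum, ← Finset.mul_sum, hS1_def]
    have hip_eq : ⟪gbar, d⟫ = (1/(n:ℝ)) * ∑ i, ⟪gi i, d⟫ := by
      rw [hgbar_def, real_inner_smul_left, sum_inner]
    have hscale : (n:ℝ) • d = ∑ i, (x i - xstar) := by
      have hl : (n:ℝ) • d = ∑ i, x i - (n:ℝ) • xstar := by
        rw [hd_def]
        have hxbar : xbar = (1/(n:ℝ)) • ∑ i, x i := rfl
        rw [hxbar, smul_sub, smul_smul, mul_one_div, div_self hn0.ne', one_smul]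
      have hr : ∑ i, (x i - xstar) = ∑ i, x i - (n:ℝ) • xstar := by
        rw [Finset.sum_sub_distrib, Finset.sum_const, Finset.card_univ, Fintype.card_fin,
          ← Nat.cast_smul_eq_nsmul ℝ]
      rw [hl, hr]
    have hC : (n:ℝ) * D ≤ ∑ i, ‖x i - xstar‖ ^ 2 := by
      have hj := norm_sum_sq_le (fun i => x i - xstar)
      rw [← hscale, norm_smul, Real.norm_eq_abs, abs_of_pos hn0, mul_pow,
        Fintype.card_fin, ← hD_def] at hj
      have := (mul_le_mul_iff_right₀ hn0).mp (by linarith [hj] : (n:ℝ) * ((n:ℝ) * D) ≤ (n:ℝ) * ∑ i, ‖x i - xstar‖ ^ 2)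
      linarith [this]
    have hmono := mul_le_mul_of_nonneg_left (le_of_eq_of_le hsum_split.symm hsum) hcposn.le
    rw [← hip_eq] at hmono
    have e0 : gap = (1/(n:ℝ)) * ∑ i, fi i xbar - (1/(n:ℝ)) * ∑ i, fi i xstar := rfl
    have e1 : (1/(n:ℝ)) * ((∑ i, fi i xbar - ∑ i, fi i xstar)
        + μ/2 * (∑ i, ‖x i - xstar‖ ^ 2) - L/2 * S1)
        = ((1/(n:ℝ)) * ∑ i, fi i xbar - (1/(n:ℝ)) * ∑ i, fi i xstar)
          + μ/(2*(n:ℝ)) * (∑ i, ‖x i - xstar‖ ^ 2) - L/(2*(n:ℝ)) * S1 := by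
      field_simp
    have e2 : μ/(2*(n:ℝ)) * ((n:ℝ) * D) ≤ μ/(2*(n:ℝ)) * (∑ i, ‖x i - xstar‖ ^ 2) :=
      mul_le_mul_of_nonneg_left hC (by positivity)
    have e3 : μ/(2*(n:ℝ)) * ((n:ℝ) * D) = μ/2 * D := by
      field_simp
    rw [e1] at hmono
    rw [e0]
    linarith
  -- variance bound
  have hZb : ∀ i, (1/(m i : ℝ)) * Z i ≤ L ^ 2 * ‖x i - x0 i‖ ^ 2 := by
    intro i
    have hveq : ∀ j, v i j = gradient (f i j) (x i) - gradient (f i j) (x0 i)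
        + gradient (fi i) (x0 i) := fun j => rfl
    have hzeq : ∀ j, z i j = (gradient (f i j) (x i) - gradient (f i j) (x0 i))
        - (gi i - gradient (fi i) (x0 i)) := by
      intro j
      simp only [hzd]
      rw [hveq j]
      abel
    have hcc : ∑ j, (gradient (f i j) (x i) - gradient (f i j) (x0 i))
        = (m i : ℝ) • (gi i - gradient (fi i) (x0 i)) := by
      rw [Finset.sum_sub_distrib, hsumgrad i (x i), hsumgrad i (x0 i), ← smul_sub]
    have hvar := var_le_second_moment
      (fun j => gradient (f i j) (x i) - gradient (f i j) (x0 i))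
      (gi i - gradient (fi i) (x0 i)) hcc
    have hZeq : Z i = ∑ j, ‖(gradient (f i j) (x i) - gradient (f i j) (x0 i))
        - (gi i - gradient (fi i) (x0 i))‖ ^ 2 := by
      rw [hZ_def]
      exact Finset.sum_congr rfl fun j _ => by rw [hzeq j]
    have hwb : ∑ j, ‖gradient (f i j) (x i) - gradient (f i j) (x0 i)‖ ^ 2
        ≤ (m i : ℝ) * (L ^ 2 * ‖x i - x0 i‖ ^ 2) := by
      calc ∑ j, ‖gradient (f i j) (x i) - gradient (f i j) (x0 i)‖ ^ 2
          ≤ ∑ _j : Fin (m i), (L * ‖x i - x0 i‖) ^ 2 :=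
            Finset.sum_le_sum fun j _ =>
              pow_le_pow_left₀ (norm_nonneg _) (hsmooth i j (x i) (x0 i)) 2
        _ = (m i : ℝ) * (L ^ 2 * ‖x i - x0 i‖ ^ 2) := by
            rw [Finset.sum_const, Finset.card_univ, Fintype.card_fin, nsmul_eq_mul,
              mul_pow]
    have hZle : Z i ≤ (m i : ℝ) * (L ^ 2 * ‖x i - x0 i‖ ^ 2) := by
      rw [hZeq]
      exact le_trans hvar hwb
    calc (1/(m i : ℝ)) * Z i
        ≤ (1/(m i : ℝ)) * ((m i : ℝ) * (L ^ 2 * ‖x i - x0 i‖ ^ 2)) :=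
          mul_le_mul_of_nonneg_left hZle (hcpos i).le
      _ = L ^ 2 * ‖x i - x0 i‖ ^ 2 := by
          rw [← mul_assoc, one_div_mul_cancel (hmne i), one_mul]
  have h4s : ∀ i, ‖x i - x0 i‖ ^ 2
      ≤ 8/3 * ‖x i - xbar‖ ^ 2 + 8 * D + 4 * Q + 4 * ‖x0 i - xbar0‖ ^ 2 := by
    intro i
    have hy := young4 (x i - xbar) (xbar - xstar) (xstar - xbar0) (xbar0 - x0 i)
    have hesum : (x i - xbar) + (xbar - xstar) + (xstar - xbar0) + (xbar0 - x0 i)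
        = x i - x0 i := by abel
    rw [hesum, norm_sub_rev xstar xbar0, norm_sub_rev xbar0 (x0 i), ← hd_def, ← hD_def,
      ← hQ_def] at hy
    linarith
  have hVb : V ≤ L ^ 2 / (n:ℝ) ^ 2 * (8/3 * S1 + 8 * (n:ℝ) * D + 4 * (n:ℝ) * Q + 4 * S0) := by
    have hstep : ∑ i, (1/(m i : ℝ)) * Z i
        ≤ ∑ i, (L ^ 2 * (8/3 * ‖x i - xbar‖ ^ 2 + 8 * D + 4 * Q + 4 * ‖x0 i - xbar0‖ ^ 2)) :=
      Finset.sum_le_sum fun i _ => le_trans (hZb i)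
        (mul_le_mul_of_nonneg_left (h4s i) (by positivity))
    have hsumeq : ∑ i, (L ^ 2 * (8/3 * ‖x i - xbar‖ ^ 2 + 8 * D + 4 * Q + 4 * ‖x0 i - xbar0‖ ^ 2))
        = L ^ 2 * (8/3 * S1 + 8 * (n:ℝ) * D + 4 * (n:ℝ) * Q + 4 * S0) := by
      rw [← Finset.mul_sum]
      congr 1
      rw [Finset.sum_add_distrib, Finset.sum_add_distrib, Finset.sum_add_distrib,
        ← Finset.mul_sum, ← Finset.mul_sum, ← Finset.mul_sum, Finset.sum_const,
        Finset.sum_const, Finset.card_univ, Fintype.card_fin, nsmul_eq_mul, nsmul_eq_mul,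
        hS1_def, hS0_def]
      ring_nf
      rw [← Finset.sum_mul]
    have hVle : V ≤ (1/(n:ℝ)) ^ 2 * (L ^ 2 * (8/3 * S1 + 8 * (n:ℝ) * D + 4 * (n:ℝ) * Q + 4 * S0)) := by
      rw [hV_def]
      apply mul_le_mul_of_nonneg_left _ (by positivity)
      rw [← hsumeq]
      exact hstep
    have hfin : (1/(n:ℝ)) ^ 2 * (L ^ 2 * (8/3 * S1 + 8 * (n:ℝ) * D + 4 * (n:ℝ) * Q + 4 * S0))
        = L ^ 2 / (n:ℝ) ^ 2 * (8/3 * S1 + 8 * (n:ℝ) * D + 4 * (n:ℝ) * Q + 4 * S0) := by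
      ring
    linarith [hVle, hfin.le]
  -- final expansion and conclusion
  have hexpand : ‖d - α • gbar‖ ^ 2 = D - 2 * α * ⟪gbar, d⟫ + α ^ 2 * ‖gbar‖ ^ 2 := by
    rw [@norm_sub_sq_real, real_inner_smul_right, norm_smul, Real.norm_eq_abs,
      abs_of_pos hα0, real_inner_comm d gbar, hD_def]
    ring
  rw [keyE, hexpand]
  exact final_scalar (n:ℝ) μ L α D S1 S0 Q gap ⟪gbar, d⟫ (‖gbar‖ ^ 2) V (‖G‖ ^ 2) (‖e‖ ^ 2)
    hn1 hμ hμL hα0 h8 hD0 hS10 hS00 hQ0 hgap0 hgapD hIPb hGBb hG2b hE2b hE2' hVb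
end

section
/- Let W = {w_{ir}} ∈ ℝ^{n×n} be doubly stochastic, let f_1,…,f_n : ℝ^p → ℝ be differentiable and L-smooth, let α ∈ ℝ, and let x, y ∈ (ℝ^p)^n be n-tuples with x̄ := (1/n)∑_i x_i. Define x⁺_i := ∑_{r=1}^n w_{ir} x_r − α y_i for each i. Then ∑_{i=1}^n ‖∇f_i(x⁺_i) − ∇f_i(x_i)‖² ≤ 8L² ∑_{i=1}^n ‖x_i − x̄‖² + 2α²L² ∑_{i=1}^n ‖y_i‖². -/
/-- Bound on the change of local gradients after one consensus + descent update. -/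
theorem gradient_difference_bound {n p : ℕ}
    (W : Matrix (Fin n) (Fin n) ℝ)
    (hW_nonneg : ∀ i r, 0 ≤ W i r)
    (hW_row : ∀ i, ∑ r, W i r = 1)
    (hW_col : ∀ r, ∑ i, W i r = 1)
    (L : ℝ) (f : Fin n → EuclideanSpace ℝ (Fin p) → ℝ)
    (hdiff : ∀ i, Differentiable ℝ (f i))
    (hsmooth : ∀ i x y, ‖gradient (f i) x - gradient (f i) y‖ ≤ L * ‖x - y‖)
    (α : ℝ) (x y : Fin n → EuclideanSpace ℝ (Fin p)) :
    let xbar : EuclideanSpace ℝ (Fin p) := (1 / (n : ℝ)) • ∑ i, x i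
    let xp : Fin n → EuclideanSpace ℝ (Fin p) :=
      fun i => (∑ r, W i r • x r) - α • y i
    ∑ i, ‖gradient (f i) (xp i) - gradient (f i) (x i)‖ ^ 2 ≤
      8 * L ^ 2 * ∑ i, ‖x i - xbar‖ ^ 2 + 2 * α ^ 2 * L ^ 2 * ∑ i, ‖y i‖ ^ 2 := by
  intro xbar xp
  have sub2 : ∀ (u w : EuclideanSpace ℝ (Fin p)), ‖u - w‖^2 ≤ 2*‖u‖^2 + 2*‖w‖^2 := by
    intro u w
    have h := norm_sub_le u w
    nlinarith [norm_nonneg (u - w), mul_self_le_mul_self (norm_nonneg (u - w)) h,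
      sq_nonneg (‖u‖ - ‖w‖)]
  have key : ∀ i, xp i - x i =
      ((∑ r, W i r • (x r - xbar)) - (x i - xbar)) - α • y i := by
    intro i
    have h : ∑ r, W i r • (x r - xbar) = (∑ r, W i r • x r) - xbar := by
      simp only [smul_sub, Finset.sum_sub_distrib, ← Finset.sum_smul, hW_row, one_smul]
    rw [h]
    show ((∑ r, W i r • x r) - α • y i) - x i = _
    abel
  have jensen : ∀ i, ‖∑ r, W i r • (x r - xbar)‖^2 ≤ ∑ r, W i r * ‖x r - xbar‖^2 := by
    intro i
    have h1 : ‖∑ r, W i r • (x r - xbar)‖ ≤ ∑ r, W i r * ‖x r - xbar‖ := by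
      calc ‖∑ r, W i r • (x r - xbar)‖ ≤ ∑ r, ‖W i r • (x r - xbar)‖ := norm_sum_le _ _
        _ = ∑ r, W i r * ‖x r - xbar‖ := by
            refine Finset.sum_congr rfl fun r _ => ?_
            rw [norm_smul, Real.norm_eq_abs, abs_of_nonneg (hW_nonneg i r)]
    have h2 : (∑ r, W i r * ‖x r - xbar‖)^2 ≤
        (∑ r, W i r) * ∑ r, W i r * ‖x r - xbar‖^2 := by
      have hcs := Finset.sum_mul_sq_le_sq_mul_sq Finset.univ
        (fun r => Real.sqrt (W i r)) (fun r => Real.sqrt (W i r) * ‖x r - xbar‖)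
      have e1 : ∀ r : Fin n, Real.sqrt (W i r) * (Real.sqrt (W i r) * ‖x r - xbar‖)
          = W i r * ‖x r - xbar‖ := by
        intro r
        rw [← mul_assoc, Real.mul_self_sqrt (hW_nonneg i r)]
      have e2 : ∀ r : Fin n, (Real.sqrt (W i r))^2 = W i r := fun r =>
        Real.sq_sqrt (hW_nonneg i r)
      have e3 : ∀ r : Fin n, (Real.sqrt (W i r) * ‖x r - xbar‖)^2
          = W i r * ‖x r - xbar‖^2 := by
        intro r
        rw [mul_pow, e2]
      simpa only [e1, e2, e3] using hcs
    calc ‖∑ r, W i r • (x r - xbar)‖^2 ≤ (∑ r, W i r * ‖x r - xbar‖)^2 :=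
          pow_le_pow_left₀ (norm_nonneg _) h1 2
      _ ≤ (∑ r, W i r) * ∑ r, W i r * ‖x r - xbar‖^2 := h2
      _ = ∑ r, W i r * ‖x r - xbar‖^2 := by rw [hW_row i, one_mul]
  have step : ∀ i, ‖xp i - x i‖^2 ≤
      4 * (∑ r, W i r * ‖x r - xbar‖^2) + 4 * ‖x i - xbar‖^2 + 2 * (α^2 * ‖y i‖^2) := by
    intro i
    rw [key i]
    have h1 := sub2 ((∑ r, W i r • (x r - xbar)) - (x i - xbar)) (α • y i)
    have h2 := sub2 (∑ r, W i r • (x r - xbar)) (x i - xbar)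
    have h3 : ‖α • y i‖^2 = α^2 * ‖y i‖^2 := by
      rw [norm_smul, Real.norm_eq_abs, mul_pow, sq_abs]
    nlinarith [jensen i]
  have swap : ∑ i, ∑ r, W i r * ‖x r - xbar‖^2 = ∑ r, ‖x r - xbar‖^2 := by
    rw [Finset.sum_comm]
    refine Finset.sum_congr rfl fun r _ => ?_
    rw [← Finset.sum_mul, hW_col r, one_mul]
  calc ∑ i, ‖gradient (f i) (xp i) - gradient (f i) (x i)‖^2
      ≤ ∑ i, L^2 * ‖xp i - x i‖^2 := by
        refine Finset.sum_le_sum fun i _ => ?_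
        have h := pow_le_pow_left₀ (norm_nonneg _) (hsmooth i (xp i) (x i)) 2
        calc ‖gradient (f i) (xp i) - gradient (f i) (x i)‖^2
            ≤ (L * ‖xp i - x i‖)^2 := h
          _ = L^2 * ‖xp i - x i‖^2 := by ring
    _ ≤ ∑ i, L^2 * (4 * (∑ r, W i r * ‖x r - xbar‖^2) + 4 * ‖x i - xbar‖^2
          + 2 * (α^2 * ‖y i‖^2)) := by
        refine Finset.sum_le_sum fun i _ => ?_
        exact mul_le_mul_of_nonneg_left (step i) (sq_nonneg L)
    _ = L^2 * ∑ i, (4 * (∑ r, W i r * ‖x r - xbar‖^2) + 4 * ‖x i - xbar‖^2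
          + 2 * (α^2 * ‖y i‖^2)) := (Finset.mul_sum _ _ _).symm
    _ = L^2 * (8 * (∑ i, ‖x i - xbar‖^2) + 2 * α^2 * ∑ i, ‖y i‖^2) := by
        have hlast : ∑ i, 2 * (α^2 * ‖y i‖^2) = 2 * α^2 * ∑ i, ‖y i‖^2 := by
          rw [Finset.mul_sum]; exact Finset.sum_congr rfl (fun i _ => by ring)
        rw [Finset.sum_add_distrib, Finset.sum_add_distrib, ← Finset.mul_sum, swap,
          ← Finset.mul_sum, hlast]
        ring
    _ ≤ 8 * L^2 * ∑ i, ‖x i - xbar‖^2 + 2 * α^2 * L^2 * ∑ i, ‖y i‖^2 := le_of_eq (by ring)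
end

section
/- Let f_1,…,f_n : ℝ^p → ℝ be differentiable and L-smooth, and let x⋆ ∈ ℝ^p satisfy ∑_{i=1}^n ∇f_i(x⋆) = 0. Let x, y, v ∈ (ℝ^p)^n be n-tuples with averages x̄ := (1/n)∑_i x_i, ȳ := (1/n)∑_i y_i, v̄ := (1/n)∑_i v_i, and suppose ȳ = v̄. Then, with h := (1/n)∑_{i=1}^n ∇f_i(x_i), one has ∑_{i=1}^n ‖y_i‖² ≤ 4∑_{i=1}^n ‖y_i − ȳ‖² + 4L²∑_{i=1}^n ‖x_i − x̄‖² + 4nL²‖x̄ − x⋆‖² + 4n‖v̄ − h‖². -/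
private lemma four_split {E : Type*} [NormedAddCommGroup E] (a b c d : E) :
    ‖a + b + c + d‖ ^ 2 ≤ 4 * (‖a‖ ^ 2 + ‖b‖ ^ 2 + ‖c‖ ^ 2 + ‖d‖ ^ 2) := by
  have h1 : ‖a + b + c + d‖ ≤ ‖a‖ + ‖b‖ + ‖c‖ + ‖d‖ := by
    calc ‖a + b + c + d‖ ≤ ‖a + b + c‖ + ‖d‖ := norm_add_le _ _
      _ ≤ ‖a + b‖ + ‖c‖ + ‖d‖ := by gcongr; exact norm_add_le _ _
      _ ≤ ‖a‖ + ‖b‖ + ‖c‖ + ‖d‖ := by gcongr; exact norm_add_le _ _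
  nlinarith [norm_nonneg a, norm_nonneg b, norm_nonneg c, norm_nonneg d,
    norm_nonneg (a + b + c + d), sq_nonneg (‖a‖ - ‖b‖), sq_nonneg (‖a‖ - ‖c‖),
    sq_nonneg (‖a‖ - ‖d‖), sq_nonneg (‖b‖ - ‖c‖), sq_nonneg (‖b‖ - ‖d‖),
    sq_nonneg (‖c‖ - ‖d‖)]

/-- Bound on the total norm of the gradient trackers in terms of tracking error,
consensus error, optimality gap and gradient-estimation variance. -/
theorem tracker_norm_bound {n p : ℕ}
    (L : ℝ) (f : Fin n → EuclideanSpace ℝ (Fin p) → ℝ)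
    (hdiff : ∀ i, Differentiable ℝ (f i))
    (hsmooth : ∀ i x y, ‖gradient (f i) x - gradient (f i) y‖ ≤ L * ‖x - y‖)
    (xstar : EuclideanSpace ℝ (Fin p))
    (hstar : ∑ i, gradient (f i) xstar = 0)
    (x y v : Fin n → EuclideanSpace ℝ (Fin p)) :
    let xbar : EuclideanSpace ℝ (Fin p) := (1 / (n : ℝ)) • ∑ i, x i
    let ybar : EuclideanSpace ℝ (Fin p) := (1 / (n : ℝ)) • ∑ i, y i
    let vbar : EuclideanSpace ℝ (Fin p) := (1 / (n : ℝ)) • ∑ i, v i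
    let h : EuclideanSpace ℝ (Fin p) := (1 / (n : ℝ)) • ∑ i, gradient (f i) (x i)
    ybar = vbar →
      ∑ i, ‖y i‖ ^ 2 ≤
        4 * ∑ i, ‖y i - ybar‖ ^ 2 + 4 * L ^ 2 * ∑ i, ‖x i - xbar‖ ^ 2 +
          4 * (n : ℝ) * L ^ 2 * ‖xbar - xstar‖ ^ 2 +
          4 * (n : ℝ) * ‖vbar - h‖ ^ 2 := by
  intro xbar ybar vbar h hyv
  rcases Nat.eq_zero_or_pos n with hn | hn
  · subst hn; simp
  have hn' : (0:ℝ) < n := by exact_mod_cast hn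
  set G : Fin n → EuclideanSpace ℝ (Fin p) → EuclideanSpace ℝ (Fin p) :=
    fun i => gradient (f i) with hG
  set g : EuclideanSpace ℝ (Fin p) := (1/(n:ℝ)) • ∑ i, G i xbar with hg
  have hnorm_inv : ‖(1/(n:ℝ))‖ = 1/(n:ℝ) := by
    rw [Real.norm_eq_abs, abs_of_pos (by positivity)]
  -- bound on ‖g‖ (term D)
  have hD : ‖g‖ ≤ L * ‖xbar - xstar‖ := by
    have hgeq : g = (1/(n:ℝ)) • ∑ i, (G i xbar - G i xstar) := by
      rw [hg, Finset.sum_sub_distrib, hstar, sub_zero]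
    rw [hgeq, norm_smul, hnorm_inv]
    have h1 : ‖∑ i, (G i xbar - G i xstar)‖ ≤ ∑ _i : Fin n, L * ‖xbar - xstar‖ :=
      (norm_sum_le _ _).trans (Finset.sum_le_sum fun i _ => hsmooth i _ _)
    simp only [Finset.sum_const, Finset.card_univ, Fintype.card_fin, nsmul_eq_mul] at h1
    calc (1/(n:ℝ)) * ‖∑ i, (G i xbar - G i xstar)‖
        ≤ (1/(n:ℝ)) * ((n:ℝ) * (L * ‖xbar - xstar‖)) := by
          apply mul_le_mul_of_nonneg_left h1 (by positivity)
      _ = L * ‖xbar - xstar‖ := by field_simp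
  have hD2 : ‖g‖ ^ 2 ≤ L ^ 2 * ‖xbar - xstar‖ ^ 2 := by
    calc ‖g‖ ^ 2 ≤ (L * ‖xbar - xstar‖) ^ 2 := pow_le_pow_left₀ (norm_nonneg g) hD 2
      _ = L ^ 2 * ‖xbar - xstar‖ ^ 2 := by ring
  -- bound on ‖h - g‖ (term C)
  have hC : (n:ℝ) * ‖h - g‖ ^ 2 ≤ L ^ 2 * ∑ i, ‖x i - xbar‖ ^ 2 := by
    have hhg : h - g = (1/(n:ℝ)) • ∑ i, (G i (x i) - G i xbar) := by
      simp only [h, hg, Finset.sum_sub_distrib, smul_sub]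
      rfl
    have h1 : ‖h - g‖ ≤ (1/(n:ℝ)) * ∑ i, L * ‖x i - xbar‖ := by
      rw [hhg, norm_smul, hnorm_inv]
      apply mul_le_mul_of_nonneg_left _ (by positivity)
      exact (norm_sum_le _ _).trans (Finset.sum_le_sum fun i _ => hsmooth i _ _)
    have hS : (∑ i, L * ‖x i - xbar‖) ^ 2 ≤ (n:ℝ) * ∑ i, (L * ‖x i - xbar‖) ^ 2 := by
      have := sq_sum_le_card_mul_sum_sq (s := (Finset.univ : Finset (Fin n)))
        (f := fun i => L * ‖x i - xbar‖)
      simpa using this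
    have hSnn : (0:ℝ) ≤ ∑ i, L * ‖x i - xbar‖ :=
      Finset.sum_nonneg fun i _ => le_trans (norm_nonneg _) (hsmooth i _ _)
    have h2 : ‖h - g‖ ^ 2 ≤ (1/(n:ℝ))^2 * (∑ i, L * ‖x i - xbar‖) ^ 2 := by
      rw [← mul_pow]
      exact pow_le_pow_left₀ (norm_nonneg _) h1 2
    have h3 : ∑ i, (L * ‖x i - xbar‖) ^ 2 = L ^ 2 * ∑ i, ‖x i - xbar‖ ^ 2 := by
      rw [Finset.mul_sum]; exact Finset.sum_congr rfl fun i _ => by ring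
    calc (n:ℝ) * ‖h - g‖ ^ 2
        ≤ (n:ℝ) * ((1/(n:ℝ))^2 * ((n:ℝ) * ∑ i, (L * ‖x i - xbar‖) ^ 2)) := by
          apply mul_le_mul_of_nonneg_left _ (by positivity)
          exact h2.trans (mul_le_mul_of_nonneg_left hS (by positivity))
      _ = ∑ i, (L * ‖x i - xbar‖) ^ 2 := by field_simp
      _ = L ^ 2 * ∑ i, ‖x i - xbar‖ ^ 2 := h3
  -- pointwise split
  have hsplit : ∀ i : Fin n, ‖y i‖ ^ 2 ≤
      4 * (‖y i - ybar‖ ^ 2 + ‖vbar - h‖ ^ 2 + ‖h - g‖ ^ 2 + ‖g‖ ^ 2) := by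
    intro i
    have hyi : y i = (y i - ybar) + (vbar - h) + (h - g) + g := by
      rw [← hyv]; abel
    calc ‖y i‖ ^ 2 = ‖(y i - ybar) + (vbar - h) + (h - g) + g‖ ^ 2 := by rw [← hyi]
      _ ≤ 4 * (‖y i - ybar‖ ^ 2 + ‖vbar - h‖ ^ 2 + ‖h - g‖ ^ 2 + ‖g‖ ^ 2) :=
          four_split _ _ _ _
  have hsum : ∑ i, ‖y i‖ ^ 2 ≤
      4 * ∑ i, ‖y i - ybar‖ ^ 2 + 4 * (n:ℝ) * ‖vbar - h‖ ^ 2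
        + 4 * (n:ℝ) * ‖h - g‖ ^ 2 + 4 * (n:ℝ) * ‖g‖ ^ 2 := by
    calc ∑ i, ‖y i‖ ^ 2
        ≤ ∑ i, 4 * (‖y i - ybar‖ ^ 2 + ‖vbar - h‖ ^ 2 + ‖h - g‖ ^ 2 + ‖g‖ ^ 2) :=
          Finset.sum_le_sum fun i _ => hsplit i
      _ = 4 * ∑ i, ‖y i - ybar‖ ^ 2 + 4 * (n:ℝ) * ‖vbar - h‖ ^ 2
          + 4 * (n:ℝ) * ‖h - g‖ ^ 2 + 4 * (n:ℝ) * ‖g‖ ^ 2 := by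
          simp [Finset.sum_add_distrib, Finset.mul_sum, Finset.sum_const,
            Finset.card_univ, mul_comm, mul_add]
          ring
  nlinarith [hsum, hC, hD2, hn']
end

section
/- If 0 < α ≤ (1−σ²)²/(105·Q·L), then the spectral radius of G_α satisfies ρ(G_α) < 1. -/
/-- The spectral radius of a real square matrix: the maximum modulus of its
complex eigenvalues. -/
noncomputable def specRad {d : ℕ} (A : Matrix (Fin d) (Fin d) ℝ) : ℝ :=
  sSup ((fun z : ℂ => ‖z‖) '' spectrum ℂ (A.map Complex.ofReal))

/-- The matrix `G_α` governing the inner-loop dynamics of GT-SVRG. -/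
noncomputable def Gmat (L μ σ α : ℝ) : Matrix (Fin 3) (Fin 3) ℝ :=
  !![(1 + σ ^ 2) / 2, 0, 2 * α ^ 2 / (1 - σ ^ 2);
     2 * L ^ 2 * α / μ, 1 - μ * α / 2, 0;
     100 * L ^ 2 / (1 - σ ^ 2), 70 * L ^ 2 / (1 - σ ^ 2),
       (1 + σ ^ 2) / 2 + 40 * L ^ 2 * α ^ 2 / (1 - σ ^ 2)]

/-- Gershgorin bound after conjugating by a positive diagonal matrix: if all the
weighted row sums are `< 1`, the spectral radius is `< 1`. -/
lemma specRad_lt_one_of_weights (G : Matrix (Fin 3) (Fin 3) ℝ) (d : Fin 3 → ℝ)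
    (hd : ∀ i, 0 < d i) (hG : ∀ i j, 0 ≤ G i j)
    (hrow : ∀ k : Fin 3, ∑ j, (d k)⁻¹ * G k j * d j < 1) :
    specRad G < 1 := by
  classical
  set S : Fin 3 → ℝ := fun k => ∑ j, (d k)⁻¹ * G k j * d j with hS
  set r : ℝ := max (max (S 0) (S 1)) (S 2) with hr
  have hSk_le_r : ∀ k, S k ≤ r := by
    intro k
    fin_cases k
    · exact le_trans (le_max_left _ _) (le_max_left _ _)
    · exact le_trans (le_max_right _ _) (le_max_left _ _)
    · exact le_max_right _ _
  have hS0 : 0 ≤ S 0 := Finset.sum_nonneg fun j _ =>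
    mul_nonneg (mul_nonneg (inv_nonneg.2 (hd 0).le) (hG 0 j)) (hd j).le
  have hr0 : 0 ≤ r := le_trans hS0 (hSk_le_r 0)
  have hr1 : r < 1 := max_lt (max_lt (hrow 0) (hrow 1)) (hrow 2)
  refine lt_of_le_of_lt (Real.sSup_le ?_ hr0) hr1
  rintro x ⟨w, hw, rfl⟩
  -- set up the conjugation
  set e : Fin 3 → ℂ := fun i => (d i : ℂ) with he_def
  have he : ∀ i, e i ≠ 0 := fun i => by
    simp only [he_def, ne_eq, Complex.ofReal_eq_zero]
    exact (hd i).ne'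
  have h1 : Matrix.diagonal e * Matrix.diagonal (fun i => (e i)⁻¹) = 1 := by
    rw [Matrix.diagonal_mul_diagonal]
    have : (fun i => e i * (e i)⁻¹) = fun _ => (1 : ℂ) := funext fun i => mul_inv_cancel₀ (he i)
    rw [this, Matrix.diagonal_one]
  have h2 : Matrix.diagonal (fun i => (e i)⁻¹) * Matrix.diagonal e = 1 := by
    rw [Matrix.diagonal_mul_diagonal]
    have : (fun i => (e i)⁻¹ * e i) = fun _ => (1 : ℂ) := funext fun i => inv_mul_cancel₀ (he i)
    rw [this, Matrix.diagonal_one]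
  set u : (Matrix (Fin 3) (Fin 3) ℂ)ˣ :=
    ⟨Matrix.diagonal e, Matrix.diagonal (fun i => (e i)⁻¹), h1, h2⟩ with hu
  set Gc : Matrix (Fin 3) (Fin 3) ℂ := G.map Complex.ofReal with hGc
  set M : Matrix (Fin 3) (Fin 3) ℂ :=
    ((u⁻¹ : (Matrix (Fin 3) (Fin 3) ℂ)ˣ) : Matrix (Fin 3) (Fin 3) ℂ) * Gc * (u : Matrix (Fin 3) (Fin 3) ℂ) with hM
  have hwM : w ∈ spectrum ℂ M := by
    rw [hM, spectrum.units_conjugate']; exact hw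
  have hEig : Module.End.HasEigenvalue (Matrix.toLin' M) w := by
    rw [Module.End.hasEigenvalue_iff_mem_spectrum]
    rwa [show Matrix.toLin' M = (Matrix.toLinAlgEquiv' M : (Fin 3 → ℂ) →ₗ[ℂ] (Fin 3 → ℂ)) from rfl,
      AlgEquiv.spectrum_eq]
  obtain ⟨k, hk⟩ := eigenvalue_mem_ball hEig
  have hMe : ∀ i j, M i j = (e i)⁻¹ * (Gc i j * e j) := by
    intro i j
    show (Matrix.diagonal (fun i => (e i)⁻¹) * Gc * Matrix.diagonal e) i j = _
    rw [Matrix.mul_assoc, Matrix.diagonal_mul, Matrix.mul_diagonal]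
  have hnorm : ∀ i j, ‖M i j‖ = (d i)⁻¹ * G i j * d j := by
    intro i j
    rw [hMe, norm_mul, norm_mul, norm_inv]
    simp only [he_def, hGc, Matrix.map_apply, Complex.norm_real, Real.norm_eq_abs,
      abs_of_pos (hd i), abs_of_pos (hd j), abs_of_nonneg (hG i j)]
    ring
  have hsum : ∑ j ∈ Finset.univ.erase k, ‖M k j‖ = S k - ‖M k k‖ := by
    rw [Finset.sum_erase_eq_sub (Finset.mem_univ k)]
    congr 1
    exact Finset.sum_congr rfl fun j _ => hnorm k j
  rw [Metric.mem_closedBall, dist_eq_norm] at hk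
  have hb : ‖w‖ - ‖M k k‖ ≤ ‖w - M k k‖ := norm_sub_norm_le w (M k k)
  show ‖w‖ ≤ r
  have : ‖w‖ ≤ S k := by
    rw [hsum] at hk
    linarith
  exact le_trans this (hSk_le_r k)

set_option maxHeartbeats 1000000 in
/-- If `0 < α ≤ (1−σ²)²/(105·Q·L)` with `Q = L/μ`, then `ρ(G_α) < 1`. -/
theorem specRad_Gmat_lt_one (L μ σ α : ℝ)
    (hμ : 0 < μ) (hμL : μ ≤ L) (hσ0 : 0 < σ) (hσ1 : σ < 1)
    (hα0 : 0 < α) (hα : α ≤ (1 - σ ^ 2) ^ 2 / (105 * (L / μ) * L)) :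
    specRad (Gmat L μ σ α) < 1 := by
  have hL : 0 < L := lt_of_lt_of_le hμ hμL
  set s : ℝ := 1 - σ ^ 2 with hs
  have hs0 : 0 < s := by nlinarith
  have hs1 : s < 1 := by nlinarith
  clear_value s
  have hrw : s ^ 2 / (105 * (L / μ) * L) = s ^ 2 * μ / (105 * L ^ 2) := by
    field_simp
  rw [hrw] at hα
  have hLα : 105 * L ^ 2 * α ≤ s ^ 2 * μ := by
    rw [le_div_iff₀ (by positivity)] at hα; linarith
  have hA : 11025 * (L ^ 4 * α ^ 2) ≤ s ^ 4 * μ ^ 2 := by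
    have := mul_le_mul hLα hLα (by positivity) (by positivity)
    nlinarith [this]
  have hss : s ^ 2 ≤ 1 := by nlinarith
  have hμ2 : μ ^ 2 ≤ L ^ 2 := by nlinarith
  have hμα : μ * α ≤ 1 / 105 := by
    have h1 : μ * (105 * L ^ 2 * α) ≤ μ * (s ^ 2 * μ) := mul_le_mul_of_nonneg_left hLα hμ.le
    have h2 : μ * (s ^ 2 * μ) ≤ L ^ 2 := by nlinarith [sq_nonneg μ]
    nlinarith [mul_pos hL hL]
  apply specRad_lt_one_of_weights _ ![μ ^ 2 / (8 * L ^ 2), 1, 167 * L ^ 2 / s ^ 2]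
  · intro i; fin_cases i <;> simp <;> positivity
  · intro i j
    fin_cases i <;> fin_cases j <;> simp [Gmat, ← hs] <;> first
      | positivity
      | nlinarith
  · intro k
    have hx : 0 < L ^ 4 * α ^ 2 := by positivity
    fin_cases k <;> rw [Fin.sum_univ_three] <;> simp [Gmat, ← hs]
    · -- row 0
      have e1 : 8 * L ^ 2 / μ ^ 2 * ((1 + σ ^ 2) / 2) * (μ ^ 2 / (8 * L ^ 2)) = (1 + σ ^ 2) / 2 := by
        field_simp
      have e2 : 8 * L ^ 2 / μ ^ 2 * (2 * α ^ 2 / s) * (167 * L ^ 2 / s ^ 2) < s / 2 := by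
        rw [div_mul_div_comm, div_mul_div_comm, div_lt_div_iff₀ (by positivity) (by positivity)]
        linarith [hA, hx]
      rw [e1]
      linarith [e2]
    · -- row 1
      have e : 2 * L ^ 2 * α / μ * (μ ^ 2 / (8 * L ^ 2)) = μ * α / 4 := by
        field_simp; ring
      rw [e]
      linarith [mul_pos hμ hα0]
    · -- row 2
      have h4 : s ^ 2 * μ ^ 2 ≤ L ^ 2 := by
        have := mul_le_mul hss hμ2 (sq_nonneg μ) zero_le_one
        linarith
      have h5 : s ^ 4 * μ ^ 2 ≤ s ^ 2 * L ^ 2 := by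
        have h := mul_le_mul_of_nonneg_left h4 (sq_nonneg s)
        have heq : s ^ 2 * (s ^ 2 * μ ^ 2) = s ^ 4 * μ ^ 2 := by ring
        linarith
      have e3 : s ^ 2 / (167 * L ^ 2) * ((1 + σ ^ 2) / 2 + 40 * L ^ 2 * α ^ 2 / s) * (167 * L ^ 2 / s ^ 2)
          = (1 + σ ^ 2) / 2 + 40 * L ^ 2 * α ^ 2 / s := by
        field_simp
      have hb1 : s ^ 2 / (167 * L ^ 2) * (100 * L ^ 2 / s) * (μ ^ 2 / (8 * L ^ 2)) ≤ 100 / 1336 * s := by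
        rw [div_mul_div_comm, div_mul_div_comm, div_le_iff₀ (by positivity)]
        have h4' := mul_le_mul_of_nonneg_left hμ2 (by positivity : (0:ℝ) ≤ 100 * L ^ 2 * s ^ 2)
        nlinarith [h4']
      have hb2 : s ^ 2 / (167 * L ^ 2) * (70 * L ^ 2 / s) = 70 / 167 * s := by
        field_simp
      have h7 : 11025 * (L ^ 2 * α ^ 2) ≤ s ^ 2 := by
        have hL2 : 0 < L ^ 2 := by positivity
        rw [← mul_le_mul_iff_of_pos_right hL2]
        have heq : 11025 * (L ^ 2 * α ^ 2) * L ^ 2 = 11025 * (L ^ 4 * α ^ 2) := by ring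
        linarith [hA, h5, heq]
      have hb3 : 40 * L ^ 2 * α ^ 2 / s ≤ 40 / 11025 * s := by
        rw [div_le_iff₀ hs0]
        nlinarith [h7]
      rw [e3, hb2]
      linarith [hb1, hb3]
end

section
/- If α > 0 satisfies α² ≤ (1−σ²)⁴/(17920·Q²·L²), then det(I₃ − G_α) ≥ μα(1−σ²)²/32, where I₃ is the 3×3 identity matrix. -/
set_option maxHeartbeats 1000000 in
/-- If `α² ≤ (1−σ²)⁴/(17920·Q²·L²)` with `Q = L/μ`, then
`det(I − G_α) ≥ μα(1−σ²)²/32`. -/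
theorem det_one_sub_Gmat_lower_bound (L μ σ α : ℝ)
    (hμ : 0 < μ) (hμL : μ ≤ L) (hσ0 : 0 < σ) (hσ1 : σ < 1)
    (hα0 : 0 < α)
    (hα : α ^ 2 ≤ (1 - σ ^ 2) ^ 4 / (17920 * (L / μ) ^ 2 * L ^ 2)) :
    μ * α * (1 - σ ^ 2) ^ 2 / 32 ≤ (1 - Gmat L μ σ α).det := by
  set t : ℝ := 1 - σ ^ 2 with ht_def
  clear_value t
  have ht0 : 0 < t := by nlinarith
  have ht1 : t ≤ 1 := by nlinarith
  have hL : 0 < L := lt_of_lt_of_le hμ hμL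
  -- clear denominators in hα
  have hα' : 17920 * L ^ 4 * α ^ 2 ≤ μ ^ 2 * t ^ 4 := by
    rw [le_div_iff₀ (by positivity)] at hα
    have h := mul_le_mul_of_nonneg_right hα (sq_nonneg μ)
    have e : α ^ 2 * (17920 * (L / μ) ^ 2 * L ^ 2) * μ ^ 2 = 17920 * L ^ 4 * α ^ 2 := by
      field_simp
    rw [e] at h; nlinarith [h]
  -- compute the determinant
  have hdet : (1 - Gmat L μ σ α).det =
      (μ ^ 2 * α * t ^ 4 / 8 - 10 * μ ^ 2 * L ^ 2 * α ^ 3 * t ^ 2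
        - 280 * L ^ 4 * α ^ 3 - 100 * μ ^ 2 * L ^ 2 * α ^ 3) / (μ * t ^ 2) := by
    have h1 : (1 - Gmat L μ σ α) =
        !![t / 2, 0, -(2 * α ^ 2 / t);
           -(2 * L ^ 2 * α / μ), μ * α / 2, 0;
           -(100 * L ^ 2 / t), -(70 * L ^ 2 / t), t / 2 - 40 * L ^ 2 * α ^ 2 / t] := by
      rw [Matrix.one_fin_three, Gmat]
      ext i j
      fin_cases i <;> fin_cases j <;>
        simp [Matrix.sub_apply, Matrix.vecHead, Matrix.vecTail, ht_def] <;> ring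
    rw [h1, Matrix.det_fin_three]
    norm_num [Matrix.cons_val_zero, Matrix.cons_val_one, Matrix.head_cons,
      Matrix.cons_val_two, Matrix.tail_cons]
    field_simp
    ring
  have h2 : μ ^ 2 ≤ L ^ 2 := by nlinarith
  have ht2 : t ^ 2 ≤ 1 := by nlinarith
  have h3 : μ ^ 2 * t ^ 2 ≤ L ^ 2 := by nlinarith [mul_le_mul_of_nonneg_left ht2 (sq_nonneg μ)]
  rw [hdet, le_div_iff₀ (by positivity)]
  nlinarith [mul_le_mul_of_nonneg_right hα' hα0.le,
    mul_nonneg (sq_nonneg L) (mul_nonneg (pow_pos hα0 3).le (sub_nonneg.mpr h3)),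
    mul_nonneg (sq_nonneg L) (mul_nonneg (pow_pos hα0 3).le (sub_nonneg.mpr h2)),
    mul_nonneg (sq_nonneg (μ * t ^ 2)) hα0.le]
end

section
/- Let α := (1−σ²)²/(200·Q·L). Then the matrix I₃ − G_α is invertible and the spectral radius of (I₃ − G_α)⁻¹ H_α satisfies ρ((I₃ − G_α)⁻¹ H_α) ≤ 0.85. -/
/-- The matrix `H_α` acting on the initial conditions of each inner loop. -/
noncomputable def Hmat (L μ σ α : ℝ) : Matrix (Fin 3) (Fin 3) ℝ :=
  !![0, 0, 0;
     4 * L ^ 2 * α ^ 2, 4 * L ^ 2 * α ^ 2, 0;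
     60 * L ^ 2 / (1 - σ ^ 2), 60 * L ^ 2 / (1 - σ ^ 2), 0]

/-- `20000 L⁴ (1-σ²) • (1 - G_α)`, a matrix with polynomial entries. -/
noncomputable def BpMat (L μ σ : ℝ) : Matrix (Fin 3) (Fin 3) ℝ :=
  !![10000 * L ^ 4 * (1 - σ ^ 2) ^ 2, 0, -((1 - σ ^ 2) ^ 4 * μ ^ 2);
     -(200 * L ^ 4 * (1 - σ ^ 2) ^ 3), 50 * L ^ 2 * (1 - σ ^ 2) ^ 3 * μ ^ 2, 0;
     -(2000000 * L ^ 6), -(1400000 * L ^ 6),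
       10000 * L ^ 4 * (1 - σ ^ 2) ^ 2 - 20 * L ^ 2 * (1 - σ ^ 2) ^ 4 * μ ^ 2]

/-- `20000 L⁴ (1-σ²) • H_α`, a matrix with polynomial entries. -/
noncomputable def HpMat (L μ σ : ℝ) : Matrix (Fin 3) (Fin 3) ℝ :=
  !![0, 0, 0;
     2 * L ^ 2 * (1 - σ ^ 2) ^ 5 * μ ^ 2, 2 * L ^ 2 * (1 - σ ^ 2) ^ 5 * μ ^ 2, 0;
     1200000 * L ^ 6, 1200000 * L ^ 6, 0]

lemma Bp_eq (L μ σ : ℝ) (hLne : L ≠ 0) (hμne : μ ≠ 0) (hsne : 1 - σ ^ 2 ≠ 0) :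
    (1 : Matrix (Fin 3) (Fin 3) ℝ) - Gmat L μ σ ((1 - σ ^ 2) ^ 2 * μ / (200 * L ^ 2)) =
      (20000 * L ^ 4 * (1 - σ ^ 2))⁻¹ • BpMat L μ σ := by
  ext i j
  fin_cases i <;> fin_cases j <;>
    simp [Gmat, BpMat, Matrix.one_apply, Matrix.smul_apply, smul_eq_mul] <;>
    field_simp <;> ring

lemma Hp_eq (L μ σ : ℝ) (hLne : L ≠ 0) (hsne : 1 - σ ^ 2 ≠ 0) :
    Hmat L μ σ ((1 - σ ^ 2) ^ 2 * μ / (200 * L ^ 2)) =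
      (20000 * L ^ 4 * (1 - σ ^ 2))⁻¹ • HpMat L μ σ := by
  ext i j
  fin_cases i <;> fin_cases j <;>
    simp [Hmat, HpMat, Matrix.vecHead, Matrix.vecTail, Matrix.smul_apply, smul_eq_mul] <;>
    field_simp <;> ring

lemma detBp_eq (L μ σ : ℝ) : (BpMat L μ σ).det =
    8000000000000 * (1 - σ ^ 2) ^ 7 * μ ^ 2 * L ^ 8 *
      (59 * L ^ 2 / 100000 - (1 - σ ^ 2) ^ 2 * μ ^ 2 / 800000 - μ ^ 2 / 80000) := by
  simp [Matrix.det_fin_three, BpMat, Matrix.vecHead, Matrix.vecTail]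
  ring

set_option maxHeartbeats 1000000 in
lemma det_poly (L μ σ : ℝ) (z : ℂ) :
    (z • ((BpMat L μ σ).map Complex.ofReal) - (HpMat L μ σ).map Complex.ofReal).det
      = z ^ 2 * (((8000000000000 * (1 - σ ^ 2) ^ 7 * μ ^ 2 * L ^ 8 *
          (59 * L ^ 2 / 100000 - (1 - σ ^ 2) ^ 2 * μ ^ 2 / 800000 - μ ^ 2 / 80000) : ℝ) : ℂ) * z
        - ((8000000000000 * (1 - σ ^ 2) ^ 7 * μ ^ 2 * L ^ 8 *
          ((1 - σ ^ 2) ^ 2 * L ^ 2 / 40000 + 3 * L ^ 2 / 100000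
            - (1 - σ ^ 2) ^ 4 * μ ^ 2 / 20000000 - 3 * (1 - σ ^ 2) ^ 2 * μ ^ 2 / 20000000
            + 3 * μ ^ 2 / 400000) : ℝ) : ℂ)) := by
  simp [Matrix.det_fin_three, BpMat, HpMat, Matrix.vecHead, Matrix.vecTail,
    Matrix.smul_apply, Matrix.sub_apply, Matrix.map_apply, smul_eq_mul]
  push_cast
  ring

lemma map_inv_smul_ofReal (c : ℝ) (M : Matrix (Fin 3) (Fin 3) ℝ) :
    ((c⁻¹ • M).map Complex.ofReal) = ((c : ℂ))⁻¹ • (M.map Complex.ofReal) := by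
  ext i j
  simp only [Matrix.map_apply, Matrix.smul_apply, smul_eq_mul]
  push_cast
  ring

lemma smul_rearr (c w : ℂ) (M N : Matrix (Fin 3) (Fin 3) ℂ) :
    w • (c⁻¹ • M) - c⁻¹ • N = c⁻¹ • (w • M - N) := by
  rw [smul_sub, smul_comm]

set_option maxHeartbeats 1000000 in
/-- With `α = (1−σ²)²/(200·Q·L)` and `Q = L/μ`, the matrix `I − G_α` is
invertible and `ρ((I − G_α)⁻¹ H_α) ≤ 0.85`. -/
theorem specRad_inv_mul_Hmat_le (L μ σ : ℝ)
    (hμ : 0 < μ) (hμL : μ ≤ L) (hσ0 : 0 < σ) (hσ1 : σ < 1) :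
    let α : ℝ := (1 - σ ^ 2) ^ 2 / (200 * (L / μ) * L)
    IsUnit (1 - Gmat L μ σ α) ∧
      specRad ((1 - Gmat L μ σ α)⁻¹ * Hmat L μ σ α) ≤ 0.85 := by
  intro α
  have hL : 0 < L := lt_of_lt_of_le hμ hμL
  have hLne : L ≠ 0 := hL.ne'
  have hμne : μ ≠ 0 := hμ.ne'
  have hs0 : 0 < 1 - σ ^ 2 := by nlinarith
  have hsne : (1 - σ ^ 2) ≠ 0 := hs0.ne'
  have hα : α = (1 - σ ^ 2) ^ 2 * μ / (200 * L ^ 2) := by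
    show (1 - σ ^ 2) ^ 2 / (200 * (L / μ) * L) = _
    field_simp
  have hc : (0:ℝ) < 20000 * L ^ 4 * (1 - σ ^ 2) :=
    mul_pos (mul_pos (by norm_num) (pow_pos hL 4)) hs0
  have hcne : (20000 * L ^ 4 * (1 - σ ^ 2)) ≠ 0 := hc.ne'
  -- basic inequalities
  have hμ2 : μ ^ 2 ≤ L ^ 2 := by nlinarith
  have hs2 : (1 - σ ^ 2) ^ 2 ≤ 1 := by nlinarith
  have hsm2 : (1 - σ ^ 2) ^ 2 * μ ^ 2 ≤ L ^ 2 := by nlinarith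
  have hsm4 : (1 - σ ^ 2) ^ 4 * μ ^ 2 ≤ L ^ 2 := by nlinarith
  have hsL2 : (1 - σ ^ 2) ^ 2 * L ^ 2 ≤ L ^ 2 := by nlinarith
  have hL2 : (0:ℝ) < L ^ 2 := by positivity
  have hμ2p : (0:ℝ) < μ ^ 2 := by positivity
  have hsm2p : (0:ℝ) ≤ (1 - σ ^ 2) ^ 2 * μ ^ 2 := by positivity
  have hsm4p : (0:ℝ) ≤ (1 - σ ^ 2) ^ 4 * μ ^ 2 := by positivity
  have hsL2p : (0:ℝ) ≤ (1 - σ ^ 2) ^ 2 * L ^ 2 := by positivity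
  have hK : (0:ℝ) < 8000000000000 * (1 - σ ^ 2) ^ 7 * μ ^ 2 * L ^ 8 := by positivity
  have hP : (0:ℝ) < 59 * L ^ 2 / 100000 - (1 - σ ^ 2) ^ 2 * μ ^ 2 / 800000
      - μ ^ 2 / 80000 := by linarith
  have hN : (0:ℝ) < (1 - σ ^ 2) ^ 2 * L ^ 2 / 40000 + 3 * L ^ 2 / 100000
      - (1 - σ ^ 2) ^ 4 * μ ^ 2 / 20000000 - 3 * (1 - σ ^ 2) ^ 2 * μ ^ 2 / 20000000
      + 3 * μ ^ 2 / 400000 := by linarith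
  have hPN : (1 - σ ^ 2) ^ 2 * L ^ 2 / 40000 + 3 * L ^ 2 / 100000
      - (1 - σ ^ 2) ^ 4 * μ ^ 2 / 20000000 - 3 * (1 - σ ^ 2) ^ 2 * μ ^ 2 / 20000000
      + 3 * μ ^ 2 / 400000 ≤
      0.85 * (59 * L ^ 2 / 100000 - (1 - σ ^ 2) ^ 2 * μ ^ 2 / 800000
        - μ ^ 2 / 80000) := by linarith
  have hd : (0:ℝ) < 8000000000000 * (1 - σ ^ 2) ^ 7 * μ ^ 2 * L ^ 8 *
      (59 * L ^ 2 / 100000 - (1 - σ ^ 2) ^ 2 * μ ^ 2 / 800000 - μ ^ 2 / 80000) :=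
    mul_pos hK hP
  have hn : (0:ℝ) < 8000000000000 * (1 - σ ^ 2) ^ 7 * μ ^ 2 * L ^ 8 *
      ((1 - σ ^ 2) ^ 2 * L ^ 2 / 40000 + 3 * L ^ 2 / 100000
        - (1 - σ ^ 2) ^ 4 * μ ^ 2 / 20000000 - 3 * (1 - σ ^ 2) ^ 2 * μ ^ 2 / 20000000
        + 3 * μ ^ 2 / 400000) :=
    mul_pos hK hN
  have hnd : 8000000000000 * (1 - σ ^ 2) ^ 7 * μ ^ 2 * L ^ 8 *
      ((1 - σ ^ 2) ^ 2 * L ^ 2 / 40000 + 3 * L ^ 2 / 100000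
        - (1 - σ ^ 2) ^ 4 * μ ^ 2 / 20000000 - 3 * (1 - σ ^ 2) ^ 2 * μ ^ 2 / 20000000
        + 3 * μ ^ 2 / 400000) ≤
      0.85 * (8000000000000 * (1 - σ ^ 2) ^ 7 * μ ^ 2 * L ^ 8 *
        (59 * L ^ 2 / 100000 - (1 - σ ^ 2) ^ 2 * μ ^ 2 / 800000 - μ ^ 2 / 80000)) := by
    calc 8000000000000 * (1 - σ ^ 2) ^ 7 * μ ^ 2 * L ^ 8 *
        ((1 - σ ^ 2) ^ 2 * L ^ 2 / 40000 + 3 * L ^ 2 / 100000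
          - (1 - σ ^ 2) ^ 4 * μ ^ 2 / 20000000 - 3 * (1 - σ ^ 2) ^ 2 * μ ^ 2 / 20000000
          + 3 * μ ^ 2 / 400000)
        ≤ 8000000000000 * (1 - σ ^ 2) ^ 7 * μ ^ 2 * L ^ 8 *
          (0.85 * (59 * L ^ 2 / 100000 - (1 - σ ^ 2) ^ 2 * μ ^ 2 / 800000
            - μ ^ 2 / 80000)) := mul_le_mul_of_nonneg_left hPN hK.le
      _ = 0.85 * (8000000000000 * (1 - σ ^ 2) ^ 7 * μ ^ 2 * L ^ 8 *
          (59 * L ^ 2 / 100000 - (1 - σ ^ 2) ^ 2 * μ ^ 2 / 800000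
            - μ ^ 2 / 80000)) := by ring
  -- invertibility of 1 - G
  have hdetB : (1 - Gmat L μ σ α).det =
      ((20000 * L ^ 4 * (1 - σ ^ 2))⁻¹) ^ 3 *
      (8000000000000 * (1 - σ ^ 2) ^ 7 * μ ^ 2 * L ^ 8 *
        (59 * L ^ 2 / 100000 - (1 - σ ^ 2) ^ 2 * μ ^ 2 / 800000 - μ ^ 2 / 80000)) := by
    rw [hα, Bp_eq L μ σ hLne hμne hsne, Matrix.det_smul, detBp_eq]
    norm_num
  have hdetUnit : IsUnit (1 - Gmat L μ σ α).det := by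
    rw [hdetB]
    exact isUnit_iff_ne_zero.2
      (mul_ne_zero (pow_ne_zero _ (inv_ne_zero hcne)) hd.ne')
  have hUnit : IsUnit (1 - Gmat L μ σ α) :=
    (Matrix.isUnit_iff_isUnit_det _).2 hdetUnit
  refine ⟨hUnit, ?_⟩
  rw [specRad]
  apply Real.sSup_le _ (by norm_num)
  rintro x ⟨z, hz, rfl⟩
  show ‖z‖ ≤ 0.85
  set A₀ := (1 - Gmat L μ σ α)⁻¹ * Hmat L μ σ α with hA₀def
  have hBH : (1 - Gmat L μ σ α) * A₀ = Hmat L μ σ α := by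
    rw [hA₀def, ← Matrix.mul_assoc, Matrix.mul_nonsing_inv _ hdetUnit, Matrix.one_mul]
  have hBH' : ((1 - Gmat L μ σ α).map Complex.ofReal) * (A₀.map Complex.ofReal)
      = (Hmat L μ σ α).map Complex.ofReal := by
    ext i j
    have h2 := congrFun (congrFun hBH i) j
    rw [Matrix.mul_apply, Fin.sum_univ_three] at h2
    simp only [Matrix.map_apply, Matrix.mul_apply, Fin.sum_univ_three,
      ← Complex.ofReal_mul, ← Complex.ofReal_add]
    exact_mod_cast h2
  have hdet0 : (algebraMap ℂ (Matrix (Fin 3) (Fin 3) ℂ) z - A₀.map Complex.ofReal).det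
      = 0 := by
    by_contra h
    exact (spectrum.mem_iff.mp hz)
      ((Matrix.isUnit_iff_isUnit_det _).2 (isUnit_iff_ne_zero.2 h))
  have hprod : ((1 - Gmat L μ σ α).map Complex.ofReal) *
      (algebraMap ℂ (Matrix (Fin 3) (Fin 3) ℂ) z - A₀.map Complex.ofReal)
      = z • ((1 - Gmat L μ σ α).map Complex.ofReal)
        - (Hmat L μ σ α).map Complex.ofReal := by
    rw [Matrix.mul_sub, hBH', Algebra.algebraMap_eq_smul_one, mul_smul_comm, mul_one]
  have hdetP : (z • ((1 - Gmat L μ σ α).map Complex.ofReal)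
      - (Hmat L μ σ α).map Complex.ofReal).det = 0 := by
    rw [← hprod, Matrix.det_mul, hdet0, mul_zero]
  rw [hα, Bp_eq L μ σ hLne hμne hsne, Hp_eq L μ σ hLne hsne,
    map_inv_smul_ofReal, map_inv_smul_ofReal, smul_rearr, Matrix.det_smul,
    det_poly] at hdetP
  have hcCne : ((20000 * L ^ 4 * (1 - σ ^ 2) : ℝ) : ℂ) ≠ 0 :=
    Complex.ofReal_ne_zero.2 hcne
  have hfact : z ^ 2 * (((8000000000000 * (1 - σ ^ 2) ^ 7 * μ ^ 2 * L ^ 8 *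
      (59 * L ^ 2 / 100000 - (1 - σ ^ 2) ^ 2 * μ ^ 2 / 800000 - μ ^ 2 / 80000) : ℝ) : ℂ) * z
      - ((8000000000000 * (1 - σ ^ 2) ^ 7 * μ ^ 2 * L ^ 8 *
        ((1 - σ ^ 2) ^ 2 * L ^ 2 / 40000 + 3 * L ^ 2 / 100000
          - (1 - σ ^ 2) ^ 4 * μ ^ 2 / 20000000 - 3 * (1 - σ ^ 2) ^ 2 * μ ^ 2 / 20000000
          + 3 * μ ^ 2 / 400000) : ℝ) : ℂ)) = 0 := by
    rcases mul_eq_zero.mp hdetP with h | h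
    · exact absurd h (pow_ne_zero _ (inv_ne_zero hcCne))
    · exact h
  rcases mul_eq_zero.mp hfact with h0 | h1
  · have hz0 : z = 0 := pow_eq_zero_iff (two_ne_zero) |>.mp h0
    rw [hz0]
    simp only [norm_zero]
    norm_num
  · have hdne : ((8000000000000 * (1 - σ ^ 2) ^ 7 * μ ^ 2 * L ^ 8 *
        (59 * L ^ 2 / 100000 - (1 - σ ^ 2) ^ 2 * μ ^ 2 / 800000 - μ ^ 2 / 80000) : ℝ) : ℂ)
        ≠ 0 := Complex.ofReal_ne_zero.2 hd.ne'
    have hzv : z = ((8000000000000 * (1 - σ ^ 2) ^ 7 * μ ^ 2 * L ^ 8 *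
        ((1 - σ ^ 2) ^ 2 * L ^ 2 / 40000 + 3 * L ^ 2 / 100000
          - (1 - σ ^ 2) ^ 4 * μ ^ 2 / 20000000 - 3 * (1 - σ ^ 2) ^ 2 * μ ^ 2 / 20000000
          + 3 * μ ^ 2 / 400000) : ℝ) : ℂ) /
        ((8000000000000 * (1 - σ ^ 2) ^ 7 * μ ^ 2 * L ^ 8 *
        (59 * L ^ 2 / 100000 - (1 - σ ^ 2) ^ 2 * μ ^ 2 / 800000 - μ ^ 2 / 80000) : ℝ) : ℂ) := by
      rw [eq_div_iff hdne]
      linear_combination h1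
    rw [hzv, ← Complex.ofReal_div, Complex.norm_real, Real.norm_eq_abs,
      abs_of_pos (div_pos hn hd), div_le_iff₀ hd]
    linarith
end

section
/- Let α := (1−σ²)²/(200·Q·L). Then the spectral radius of G_α satisfies ρ(G_α) ≤ 1 − (1−σ²)²/(800·Q²). -/
open Finset in
theorem specRad_key {d : ℕ} (A : Matrix (Fin d) (Fin d) ℝ) (w : Fin d → ℝ) (θ : ℝ)
    (hw : ∀ i, 0 < w i)
    (h : ∀ i, ∑ j, |A i j| * w j ≤ θ * w i) :
    ∀ z ∈ spectrum ℂ (A.map Complex.ofReal), ‖z‖ ≤ θ := by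
  intro z hz
  rw [spectrum.mem_iff, Matrix.isUnit_iff_isUnit_det] at hz
  have hdet : ((algebraMap ℂ (Matrix (Fin d) (Fin d) ℂ)) z - A.map Complex.ofReal).det = 0 := by
    by_contra hne; exact hz (isUnit_iff_ne_zero.mpr hne)
  obtain ⟨v, hv0, hv⟩ := Matrix.exists_mulVec_eq_zero_iff.mpr hdet
  have heig : ∀ i, z * v i = ∑ j, (A i j : ℂ) * v j := by
    intro i
    have := congrFun hv i
    simp [Matrix.sub_mulVec, Matrix.algebraMap_eq_diagonal, Matrix.mulVec, dotProduct,
      Matrix.map_apply, Matrix.diagonal_apply, sub_mul, Finset.sum_sub_distrib, ite_mul,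
      Finset.sum_ite_eq, Pi.algebraMap_apply, Algebra.algebraMap_self_apply] at this
    linear_combination this
  obtain ⟨j0, hj0⟩ := Function.ne_iff.mp hv0
  have hne : (Finset.univ : Finset (Fin d)).Nonempty := ⟨j0, Finset.mem_univ j0⟩
  obtain ⟨i, -, hi⟩ := Finset.exists_max_image Finset.univ
    (fun j => ‖v j‖ / w j) hne
  have hvi : 0 < ‖v i‖ := by
    have h1 : 0 < ‖v j0‖ / w j0 := div_pos (by simpa using hj0) (hw j0)
    have h2 : 0 < ‖v i‖ / w i := lt_of_lt_of_le h1 (hi j0 (Finset.mem_univ j0))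
    by_contra hc
    push_neg at hc
    have : ‖v i‖ = 0 := le_antisymm hc (norm_nonneg _)
    rw [this, zero_div] at h2; exact lt_irrefl 0 h2
  -- bound each |v j|
  have hbound : ∀ j, ‖v j‖ ≤ w j * (‖v i‖ / w i) := by
    intro j
    have := hi j (Finset.mem_univ j)
    have hwj := (hw j).ne'
    calc ‖v j‖ = w j * (‖v j‖ / w j) := by
          field_simp
      _ ≤ w j * (‖v i‖ / w i) := by
          exact mul_le_mul_of_nonneg_left this (le_of_lt (hw j))
  have hmain : ‖z‖ * ‖v i‖ ≤ θ * ‖v i‖ := by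
    calc ‖z‖ * ‖v i‖ = ‖z * v i‖ := (norm_mul _ _).symm
      _ = ‖∑ j, (A i j : ℂ) * v j‖ := by rw [heig i]
      _ ≤ ∑ j, ‖(A i j : ℂ) * v j‖ := by
          exact norm_sum_le _ _
      _ = ∑ j, |A i j| * ‖v j‖ := by
          simp [norm_mul, Complex.norm_real]
      _ ≤ ∑ j, |A i j| * (w j * (‖v i‖ / w i)) := by
          apply Finset.sum_le_sum
          intro j _
          exact mul_le_mul_of_nonneg_left (hbound j) (abs_nonneg _)
      _ = (∑ j, |A i j| * w j) * (‖v i‖ / w i) := by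
          rw [Finset.sum_mul]; congr 1; ext j; ring
      _ ≤ (θ * w i) * (‖v i‖ / w i) := by
          exact mul_le_mul_of_nonneg_right (h i)
            (div_nonneg (norm_nonneg _) (hw i).le)
      _ = θ * ‖v i‖ := by
          have := (hw i).ne'; field_simp
  exact le_of_mul_le_mul_right hmain hvi

theorem specRad_le {d : ℕ} (A : Matrix (Fin d) (Fin d) ℝ) (w : Fin d → ℝ) (θ : ℝ)
    (hθ : 0 ≤ θ) (hw : ∀ i, 0 < w i)
    (h : ∀ i, ∑ j, |A i j| * w j ≤ θ * w i) : specRad A ≤ θ := by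
  apply Real.sSup_le _ hθ
  rintro x ⟨z, hz, rfl⟩
  exact specRad_key A w θ hw h z hz

set_option maxHeartbeats 1000000 in
/-- With `α = (1−σ²)²/(200·Q·L)` and `Q = L/μ`,
`ρ(G_α) ≤ 1 − (1−σ²)²/(800·Q²)`. -/
theorem specRad_Gmat_bound (L μ σ : ℝ)
    (hμ : 0 < μ) (hμL : μ ≤ L) (hσ0 : 0 < σ) (hσ1 : σ < 1) :
    specRad (Gmat L μ σ ((1 - σ ^ 2) ^ 2 / (200 * (L / μ) * L))) ≤
      1 - (1 - σ ^ 2) ^ 2 / (800 * (L / μ) ^ 2) := by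
  have hL : 0 < L := lt_of_lt_of_le hμ hμL
  have hs : 0 < 1 - σ ^ 2 := by nlinarith
  have hs1 : 1 - σ ^ 2 < 1 := by nlinarith
  have hQ1 : 1 ≤ L / μ := (one_le_div hμ).mpr hμL
  set Q := L / μ with hQdef
  set s := 1 - σ ^ 2 with hsdef
  have hQ0 : (0:ℝ) < Q := lt_of_lt_of_le zero_lt_one hQ1
  have h4 : (1:ℝ) ≤ Q ^ 2 := by nlinarith
  have h5 : s ^ 2 ≤ 1 := by nlinarith
  refine specRad_le _ ![1, 8 * Q ^ 2, 3000 * Q ^ 2 * L ^ 2 / s ^ 2] _ ?_ ?_ ?_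
  · have h6 : s ^ 2 / (800 * Q ^ 2) ≤ 1 / 800 :=
      div_le_div₀ (by norm_num) h5 (by norm_num) (by nlinarith)
    linarith
  · intro i
    fin_cases i <;> simp <;> positivity
  · intro i
    have hσ2 : σ ^ 2 = 1 - s := by rw [hsdef]; ring
    have hLQ : L = Q * μ := by rw [hQdef]; field_simp
    have hs' : (0:ℝ) < 1 - σ ^ 2 := hs
    fin_cases i <;>
      simp [Gmat, Fin.sum_univ_three]
    · rw [abs_of_nonneg (by positivity), abs_of_nonneg (div_nonneg (by positivity) hs'.le), hσ2]
      have e1 : 2 * (s ^ 2 / (200 * Q * L)) ^ 2 / (1 - (1 - s)) * (3000 * Q ^ 2 * L ^ 2 / s ^ 2)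
          = (3/20) * s := by
        have hsne : s ≠ 0 := hs.ne'
        rw [show (1:ℝ) - (1 - s) = s by ring]
        field_simp
        ring
      rw [e1]
      have h1 : s ^ 2 / (800 * Q ^ 2) ≤ s / 800 :=
        div_le_div₀ hs.le (by nlinarith) (by norm_num) (by nlinarith)
      linarith
    · have e2 : 2 * L ^ 2 * (s ^ 2 / (200 * Q * L)) / μ = s ^ 2 / 100 := by
        rw [hLQ]; field_simp; ring
      have h2 : μ * (s ^ 2 / (200 * Q * L)) / 2 = s ^ 2 / (400 * Q ^ 2) := by
        rw [hLQ]; field_simp; ring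
      have h3 : s ^ 2 / (400 * Q ^ 2) ≤ 1 / 400 :=
        div_le_div₀ (by norm_num) (by nlinarith) (by norm_num) (by nlinarith)
      rw [e2, h2, abs_of_nonneg (by positivity), abs_of_nonneg (by linarith)]
      have hQne : Q ≠ 0 := ne_of_gt hQ0
      field_simp
      ring_nf
      exact le_rfl
    · have e3 : 40 * L ^ 2 * (s ^ 2 / (200 * Q * L)) ^ 2 / (1 - σ ^ 2)
          = s ^ 3 / (1000 * Q ^ 2) := by
        rw [show (1 - σ ^ 2) = s from hsdef.symm]; field_simp; ring
      rw [e3, abs_of_nonneg (div_nonneg (by positivity) hs'.le),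
        abs_of_nonneg (div_nonneg (by positivity) hs'.le),
        abs_of_nonneg (by positivity), hσ2]
      rw [show (1:ℝ) - (1 - s) = s by ring]
      rw [← sub_nonneg]
      have key : (1 - s ^ 2 / (800 * Q ^ 2)) * (3000 * Q ^ 2 * L ^ 2 / s ^ 2) -
          (100 * L ^ 2 / s + 70 * L ^ 2 / s * (8 * Q ^ 2) +
            ((1 + (1 - s)) / 2 + s ^ 3 / (1000 * Q ^ 2)) * (3000 * Q ^ 2 * L ^ 2 / s ^ 2))
          = L ^ 2 / s * (940 * Q ^ 2 - 100 - 3 * s ^ 2 - 15 / 4 * s) := by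
        have hsne : (s:ℝ) ≠ 0 := ne_of_gt hs
        have hQne : (Q:ℝ) ≠ 0 := ne_of_gt hQ0
        field_simp
        ring
      rw [key]
      apply mul_nonneg (by positivity)
      clear_value Q s
      linarith
end

section
/- Let α := (1−σ²)²/(200·Q·L). Then there exists K₀ ∈ ℕ such that for every K ≥ K₀ the spectral radius of G_α^K + (I₃ − G_α)⁻¹H_α satisfies ρ(G_α^K + (I₃ − G_α)⁻¹H_α) ≤ 0.9. -/
attribute [local instance] Matrix.linftyOpNormedAddCommGroup Matrix.linftyOpNormedRing
  Matrix.linftyOpNormedAlgebra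


private lemma norm3_le {A : Matrix (Fin 3) (Fin 3) ℝ} {r : ℝ}
    (h : ∀ i, |A i 0| + |A i 1| + |A i 2| ≤ r) :
    ‖A.map (Complex.ofReal)‖ ≤ r := by
  have h0 : 0 ≤ r := le_trans (by positivity) (h 0)
  rw [Matrix.linfty_opNorm_def, ← Real.coe_toNNReal r h0, NNReal.coe_le_coe]
  refine Finset.sup_le fun i _ => ?_
  rw [← NNReal.coe_le_coe, Real.coe_toNNReal _ h0, NNReal.coe_sum]
  simpa [Fin.sum_univ_three, Matrix.map_apply, Real.norm_eq_abs] using h i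

private lemma specRad_le_conj (M P Pi : Matrix (Fin 3) (Fin 3) ℝ)
    (h1 : P * Pi = 1) (h2 : Pi * P = 1) {r : ℝ} (hr : 0 ≤ r)
    (h : ‖(Pi * M * P).map Complex.ofReal‖ ≤ r) : specRad M ≤ r := by
  apply Real.sSup_le _ hr
  rintro x ⟨z, hz, rfl⟩
  have e1 : (Pi.map ⇑Complex.ofRealHom) * (P.map ⇑Complex.ofRealHom) = 1 := by
    rw [← Matrix.map_mul, h2]; simp
  have e2 : (P.map ⇑Complex.ofRealHom) * (Pi.map ⇑Complex.ofRealHom) = 1 := by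
    rw [← Matrix.map_mul, h1]; simp
  set u : (Matrix (Fin 3) (Fin 3) ℂ)ˣ :=
    ⟨Pi.map ⇑Complex.ofRealHom, P.map ⇑Complex.ofRealHom, e1, e2⟩ with hu
  have hz' : z ∈ spectrum ℂ ((Pi * M * P).map Complex.ofReal) := by
    have heq : (Pi * M * P).map Complex.ofReal
        = (u : Matrix (Fin 3) (Fin 3) ℂ) * (M.map ⇑Complex.ofRealHom)
          * ((u⁻¹ : (Matrix (Fin 3) (Fin 3) ℂ)ˣ) : Matrix (Fin 3) (Fin 3) ℂ) := by
      show (Pi * M * P).map ⇑Complex.ofRealHom = _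
      rw [Matrix.map_mul, Matrix.map_mul, hu]
      rfl
    rw [heq, spectrum.units_conjugate]
    exact hz
  calc ‖z‖ = ‖z‖ := rfl
    _ ≤ _ := spectrum.norm_le_norm_of_mem hz'
    _ ≤ r := h

private lemma conjPowAux {X P Pi : Matrix (Fin 3) (Fin 3) ℝ}
    (h1 : P * Pi = 1) (h2 : Pi * P = 1) (K : ℕ) :
    Pi * X ^ K * P = (Pi * X * P) ^ K := by
  induction K with
  | zero => simp [h2]
  | succ n ih =>
      rw [pow_succ, pow_succ, ← ih]
      simp only [mul_assoc]
      rw [← mul_assoc P Pi (X * P), h1, one_mul]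

set_option maxHeartbeats 2000000 in
private theorem gt_aux (L μ σ α : ℝ)
    (hμ : 0 < μ) (hμL : μ ≤ L) (hσ0 : 0 < σ) (hσ1 : σ < 1)
    (hαdef : α = (1 - σ ^ 2) ^ 2 / (200 * (L / μ) * L)) :
    ∃ K₀ : ℕ, ∀ K ≥ K₀,
      specRad (Gmat L μ σ α ^ K + (1 - Gmat L μ σ α)⁻¹ * Hmat L μ σ α) ≤ 0.9 := by
  have hL : 0 < L := lt_of_lt_of_le hμ hμL
  have hμ' : μ ≠ 0 := ne_of_gt hμ
  have hL' : L ≠ 0 := ne_of_gt hL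
  have hα : α = (1 - σ^2)^2 * μ / (200 * L^2) := by
    rw [hαdef, show 200*(L/μ)*L = 200*L^2/μ by field_simp, div_div_eq_mul_div]
  have hs0 : 0 < 1 - σ ^ 2 := by nlinarith
  have hs1 : 1 - σ ^ 2 ≤ 1 := by nlinarith [sq_nonneg σ]
  have hs' : (1 : ℝ) - σ ^ 2 ≠ 0 := ne_of_gt hs0
  have hμ2 : μ^2 ≤ L^2 := by nlinarith
  have hs2 : (1 - σ^2)^2 ≤ 1 := by nlinarith [sq_nonneg σ, sq_nonneg (σ^2)]
  have hdenpos : 0 < 472 * L^2 - (10 + (1 - σ^2)^2) * μ^2 := by nlinarith [mul_pos hμ hμ]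
  have hden' : 472 * L^2 - (10 + (1 - σ^2)^2) * μ^2 ≠ 0 := ne_of_gt hdenpos
  have hden'' : 472 * L^2 - μ^2 * (10 + (1 - σ^2)^2) ≠ 0 := by intro h; exact hden' (by linarith)
  have hden''' : L^2 * 472 - μ^2 * (10 + (1 - σ^2)^2) ≠ 0 := by intro h; exact hden' (by linarith)
  have hv2 : 0 ≤ 600*L^2 - 10*(1-σ^2)^2*μ^2 + 500*(1-σ^2)^2*L^2 - (1-σ^2)^4*μ^2 := by
    nlinarith [sq_nonneg ((1-σ^2)^2), mul_nonneg (sq_nonneg (1-σ^2)) (sq_nonneg μ),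
      mul_nonneg (sq_nonneg ((1-σ^2)^2)) (sq_nonneg μ)]
  set B : Matrix (Fin 3) (Fin 3) ℝ :=
    !![μ^2*(150 + 7*(1-σ^2)^2) / (25*(472*L^2 - (10 + (1-σ^2)^2)*μ^2)),
       μ^2*(150 + 7*(1-σ^2)^2) / (25*(472*L^2 - (10 + (1-σ^2)^2)*μ^2)), 0;
       (600*L^2 - 10*(1-σ^2)^2*μ^2 + 500*(1-σ^2)^2*L^2 - (1-σ^2)^4*μ^2)
         / (25*(472*L^2 - (10 + (1-σ^2)^2)*μ^2)),
       (600*L^2 - 10*(1-σ^2)^2*μ^2 + 500*(1-σ^2)^2*L^2 - (1-σ^2)^4*μ^2)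
         / (25*(472*L^2 - (10 + (1-σ^2)^2)*μ^2)), 0;
       400*L^4*(150 + 7*(1-σ^2)^2)
         / ((1-σ^2)^2*(472*L^2 - (10 + (1-σ^2)^2)*μ^2)),
       400*L^4*(150 + 7*(1-σ^2)^2)
         / ((1-σ^2)^2*(472*L^2 - (10 + (1-σ^2)^2)*μ^2)), 0] with hB
  set D : Matrix (Fin 3) (Fin 3) ℝ :=
    Matrix.diagonal ![1, 8*L^2/μ^2, 2000*L^4/((1-σ^2)^2*μ^2)] with hD
  set Di : Matrix (Fin 3) (Fin 3) ℝ :=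
    Matrix.diagonal ![1, μ^2/(8*L^2), (1-σ^2)^2*μ^2/(2000*L^4)] with hDi
  have hDDi : D * Di = 1 := by
    rw [hD, hDi, Matrix.diagonal_mul_diagonal]
    ext i j
    rw [Matrix.diagonal_apply, Matrix.one_apply]
    fin_cases i <;> fin_cases j <;> simp <;> field_simp
  have hDiD : Di * D = 1 := by
    rw [hD, hDi, Matrix.diagonal_mul_diagonal]
    ext i j
    rw [Matrix.diagonal_apply, Matrix.one_apply]
    fin_cases i <;> fin_cases j <;> simp <;> field_simp
  have hIG : 1 - Gmat L μ σ α =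
    !![1 - (1 + σ ^ 2) / 2, 0, -(2 * α ^ 2 / (1 - σ ^ 2));
       -(2 * L ^ 2 * α / μ), μ * α / 2, 0;
       -(100 * L ^ 2 / (1 - σ ^ 2)), -(70 * L ^ 2 / (1 - σ ^ 2)),
         1 - ((1 + σ ^ 2) / 2 + 40 * L ^ 2 * α ^ 2 / (1 - σ ^ 2))] := by
    rw [Gmat, Matrix.one_fin_three]
    ext i j
    fin_cases i <;> fin_cases j <;>
      simp [Matrix.sub_apply, Matrix.vecHead, Matrix.vecTail] <;> ring
  have hGB : (1 - Gmat L μ σ α) * B = Hmat L μ σ α := by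
    rw [hIG, hB, Matrix.mul_fin_three, Hmat]
    ext i j
    fin_cases i <;> fin_cases j <;>
      · simp only [Matrix.cons_val, Matrix.cons_val_zero, Matrix.cons_val_one,
          Matrix.head_cons, Matrix.empty_val', Matrix.cons_val_fin_one, Matrix.head_fin_const,
          Matrix.cons_val_two, Matrix.tail_cons, Matrix.of_apply, Fin.reduceFinMk, hα]
        field_simp [hs', hμ', hL', hden']
        try ring
        try tauto
  have hdet : (1 - Gmat L μ σ α).det
      = (1-σ^2)^4 * μ^2 * (472 * L^2 - (10 + (1 - σ^2)^2) * μ^2) / (800000 * L^2 * L^2) := by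
    rw [hIG, Matrix.det_fin_three]
    simp only [Matrix.cons_val, Matrix.cons_val_zero, Matrix.cons_val_one, Matrix.cons_val_two,
      Function.comp_apply, Fin.succ_zero_eq_one, Fin.succ_one_eq_two, Matrix.head_cons, Matrix.tail_cons, Matrix.vecHead, Matrix.vecTail, Matrix.empty_val',
      Matrix.cons_val_fin_one, Matrix.head_fin_const, Matrix.of_apply, Fin.reduceFinMk, hα]
    field_simp [hs', hμ', hL', hden']
    ring
  have hdetU : IsUnit (1 - Gmat L μ σ α).det := by
    rw [hdet]
    exact isUnit_iff_ne_zero.mpr (by positivity)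
  have hBeq : (1 - Gmat L μ σ α)⁻¹ * Hmat L μ σ α = B := by
    calc (1 - Gmat L μ σ α)⁻¹ * Hmat L μ σ α
        = (1 - Gmat L μ σ α)⁻¹ * ((1 - Gmat L μ σ α) * B) := by rw [hGB]
      _ = ((1 - Gmat L μ σ α)⁻¹ * (1 - Gmat L μ σ α)) * B := by rw [mul_assoc]
      _ = B := by rw [Matrix.nonsing_inv_mul _ hdetU, one_mul]
  -- conjugated matrices
  have hG' : Di * Gmat L μ σ α * D =
    !![1 - (1-σ^2)/2, 0, (1-σ^2)/10;
       (1-σ^2)^2*μ^2/(800*L^2), 1 - (1-σ^2)^2*μ^2/(400*L^2), 0;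
       (1-σ^2)*μ^2/(20*L^2), 7*(1-σ^2)/25, 1 - (1-σ^2)/2 + (1-σ^2)^3*μ^2/(1000*L^2)] := by
    rw [hD, hDi]
    ext i j
    rw [Matrix.mul_diagonal, Matrix.diagonal_mul]
    fin_cases i <;> fin_cases j <;>
      · simp only [Gmat, Matrix.cons_val, Matrix.cons_val_zero, Matrix.cons_val_one,
          Matrix.head_cons, Matrix.empty_val', Matrix.cons_val_fin_one, Matrix.head_fin_const,
          Matrix.cons_val_two, Matrix.tail_cons, Matrix.of_apply, Fin.reduceFinMk, hα]
        field_simp [hs', hμ', hL']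
        try ring
        try tauto
  have hB' : Di * B * D =
    !![μ^2*(150 + 7*(1-σ^2)^2)/(25*(472*L^2 - (10 + (1-σ^2)^2)*μ^2)),
       8*L^2*(150 + 7*(1-σ^2)^2)/(25*(472*L^2 - (10 + (1-σ^2)^2)*μ^2)), 0;
       μ^2*(600*L^2 - 10*(1-σ^2)^2*μ^2 + 500*(1-σ^2)^2*L^2 - (1-σ^2)^4*μ^2)
         /(200*L^2*(472*L^2 - (10 + (1-σ^2)^2)*μ^2)),
       (600*L^2 - 10*(1-σ^2)^2*μ^2 + 500*(1-σ^2)^2*L^2 - (1-σ^2)^4*μ^2)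
         /(25*(472*L^2 - (10 + (1-σ^2)^2)*μ^2)), 0;
       μ^2*(150 + 7*(1-σ^2)^2)/(5*(472*L^2 - (10 + (1-σ^2)^2)*μ^2)),
       8*L^2*(150 + 7*(1-σ^2)^2)/(5*(472*L^2 - (10 + (1-σ^2)^2)*μ^2)), 0] := by
    rw [hB, hD, hDi]
    ext i j
    rw [Matrix.mul_diagonal, Matrix.diagonal_mul]
    fin_cases i <;> fin_cases j <;>
      · simp only [Matrix.cons_val, Matrix.cons_val_zero, Matrix.cons_val_one,
          Matrix.head_cons, Matrix.empty_val', Matrix.cons_val_fin_one, Matrix.head_fin_const,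
          Matrix.cons_val_two, Matrix.tail_cons, Matrix.of_apply, Fin.reduceFinMk]
        field_simp [hs', hμ', hL', hden']
        try ring
        try tauto
  -- norm bounds
  set c : ℝ := 1 - (1-σ^2)^2*μ^2/(800*L^2) with hc
  have hc0 : 0 ≤ c := by
    rw [hc]
    have h1 : (1-σ^2)^2*μ^2/(800*L^2) ≤ 1 := by
      rw [div_le_one (by positivity)]
      nlinarith
    linarith
  have hc1 : c < 1 := by
    rw [hc]
    have h1 : 0 < (1-σ^2)^2*μ^2/(800*L^2) := by positivity
    linarith
  have hGn : ‖(Di * Gmat L μ σ α * D).map Complex.ofReal‖ ≤ c := by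
    rw [hG']
    apply norm3_le
    intro i
    fin_cases i
    · show |1 - (1-σ^2)/2| + |(0:ℝ)| + |(1-σ^2)/10| ≤ c
      rw [abs_of_nonneg (by nlinarith), abs_of_nonneg (le_refl (0:ℝ)),
        abs_of_nonneg (by positivity), hc, ← sub_nonneg,
        show (1 - (1-σ^2)^2*μ^2/(800*L^2)) - (1 - (1-σ^2)/2 + 0 + (1-σ^2)/10)
          = ((1-σ^2)*(320*L^2 - (1-σ^2)*μ^2))/(800*L^2) by field_simp; ring]
      apply div_nonneg _ (by positivity)
      nlinarith
    · show |(1-σ^2)^2*μ^2/(800*L^2)| + |1 - (1-σ^2)^2*μ^2/(400*L^2)| + |(0:ℝ)| ≤ c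
      rw [abs_of_nonneg (by positivity),
        abs_of_nonneg (by
          have h1 : (1-σ^2)^2*μ^2/(400*L^2) ≤ 1 := by
            rw [div_le_one (by positivity)]
            nlinarith
          linarith),
        abs_of_nonneg (le_refl (0:ℝ)), hc]
      apply le_of_eq
      field_simp
      ring
    · show |(1-σ^2)*μ^2/(20*L^2)| + |7*(1-σ^2)/25| + |1 - (1-σ^2)/2 + (1-σ^2)^3*μ^2/(1000*L^2)| ≤ c
      rw [abs_of_nonneg (by positivity), abs_of_nonneg (by positivity),
        abs_of_nonneg (by
          have h1 : 0 ≤ (1-σ^2)^3*μ^2/(1000*L^2) := by positivity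
          nlinarith [h1]), hc, ← sub_nonneg,
        show (1 - (1-σ^2)^2*μ^2/(800*L^2)) - ((1-σ^2)*μ^2/(20*L^2) + 7*(1-σ^2)/25
            + (1 - (1-σ^2)/2 + (1-σ^2)^3*μ^2/(1000*L^2)))
          = ((1-σ^2)*(880*L^2 - 200*μ^2 - 4*(1-σ^2)^2*μ^2 - 5*(1-σ^2)*μ^2))/(4000*L^2) by
          field_simp; ring]
      apply div_nonneg _ (by positivity)
      exact mul_nonneg hs0.le (by nlinarith)
  have hBn : ‖(Di * B * D).map Complex.ofReal‖ ≤ 4/5 := by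
    rw [hB']
    apply norm3_le
    intro i
    fin_cases i
    · show |μ^2*(150 + 7*(1-σ^2)^2)/(25*(472*L^2 - (10 + (1-σ^2)^2)*μ^2))|
        + |8*L^2*(150 + 7*(1-σ^2)^2)/(25*(472*L^2 - (10 + (1-σ^2)^2)*μ^2))| + |(0:ℝ)| ≤ 4/5
      rw [abs_of_nonneg (by positivity), abs_of_nonneg (by positivity),
        abs_of_nonneg (le_refl (0:ℝ)), ← sub_nonneg,
        show (4:ℝ)/5 - (μ^2*(150 + 7*(1-σ^2)^2)/(25*(472*L^2 - (10 + (1-σ^2)^2)*μ^2))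
            + 8*L^2*(150 + 7*(1-σ^2)^2)/(25*(472*L^2 - (10 + (1-σ^2)^2)*μ^2)) + 0)
          = (20*(472*L^2 - (10 + (1-σ^2)^2)*μ^2) - (150 + 7*(1-σ^2)^2)*(μ^2 + 8*L^2))
            /(25*(472*L^2 - (10 + (1-σ^2)^2)*μ^2)) by field_simp; ring]
      apply div_nonneg _ (by positivity)
      nlinarith
    · show |μ^2*(600*L^2 - 10*(1-σ^2)^2*μ^2 + 500*(1-σ^2)^2*L^2 - (1-σ^2)^4*μ^2)
          /(200*L^2*(472*L^2 - (10 + (1-σ^2)^2)*μ^2))|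
        + |(600*L^2 - 10*(1-σ^2)^2*μ^2 + 500*(1-σ^2)^2*L^2 - (1-σ^2)^4*μ^2)
          /(25*(472*L^2 - (10 + (1-σ^2)^2)*μ^2))| + |(0:ℝ)| ≤ 4/5
      rw [abs_of_nonneg (div_nonneg (mul_nonneg (sq_nonneg μ) hv2) (by positivity)),
        abs_of_nonneg (div_nonneg hv2 (by positivity)),
        abs_of_nonneg (le_refl (0:ℝ)), ← sub_nonneg,
        show (4:ℝ)/5 - (μ^2*(600*L^2 - 10*(1-σ^2)^2*μ^2 + 500*(1-σ^2)^2*L^2 - (1-σ^2)^4*μ^2)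
            /(200*L^2*(472*L^2 - (10 + (1-σ^2)^2)*μ^2))
            + (600*L^2 - 10*(1-σ^2)^2*μ^2 + 500*(1-σ^2)^2*L^2 - (1-σ^2)^4*μ^2)
            /(25*(472*L^2 - (10 + (1-σ^2)^2)*μ^2)) + 0)
          = (160*L^2*(472*L^2 - (10 + (1-σ^2)^2)*μ^2)
              - (600*L^2 - 10*(1-σ^2)^2*μ^2 + 500*(1-σ^2)^2*L^2 - (1-σ^2)^4*μ^2)*(μ^2 + 8*L^2))
            /(200*L^2*(472*L^2 - (10 + (1-σ^2)^2)*μ^2)) by field_simp; ring]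
      apply div_nonneg _ (by positivity)
      nlinarith [mul_le_mul_of_nonneg_left hμ2 (le_of_lt (mul_pos hL hL)),
        mul_le_mul_of_nonneg_left hs2 (mul_nonneg (sq_nonneg μ) (sq_nonneg L)),
        mul_nonneg (mul_nonneg (sq_nonneg (1-σ^2)) (sq_nonneg μ)) (sq_nonneg μ),
        mul_nonneg (mul_nonneg (sq_nonneg ((1-σ^2)^2)) (sq_nonneg μ)) (sq_nonneg μ),
        mul_nonneg (mul_nonneg (sq_nonneg ((1-σ^2)^2)) (sq_nonneg μ)) (sq_nonneg L),
        mul_le_mul_of_nonneg_left hμ2 (le_of_lt (mul_pos hμ hμ)),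
        mul_nonneg (mul_nonneg (sq_nonneg (1-σ^2)) (sq_nonneg μ)) (sq_nonneg L)]
    · show |μ^2*(150 + 7*(1-σ^2)^2)/(5*(472*L^2 - (10 + (1-σ^2)^2)*μ^2))|
        + |8*L^2*(150 + 7*(1-σ^2)^2)/(5*(472*L^2 - (10 + (1-σ^2)^2)*μ^2))| + |(0:ℝ)| ≤ 4/5
      rw [abs_of_nonneg (by positivity), abs_of_nonneg (by positivity),
        abs_of_nonneg (le_refl (0:ℝ)), ← sub_nonneg,
        show (4:ℝ)/5 - (μ^2*(150 + 7*(1-σ^2)^2)/(5*(472*L^2 - (10 + (1-σ^2)^2)*μ^2))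
            + 8*L^2*(150 + 7*(1-σ^2)^2)/(5*(472*L^2 - (10 + (1-σ^2)^2)*μ^2)) + 0)
          = (4*(472*L^2 - (10 + (1-σ^2)^2)*μ^2) - (150 + 7*(1-σ^2)^2)*(μ^2 + 8*L^2))
            /(5*(472*L^2 - (10 + (1-σ^2)^2)*μ^2)) by field_simp; ring]
      apply div_nonneg _ (by positivity)
      nlinarith
  -- conclusion
  obtain ⟨n, hn⟩ := exists_pow_lt_of_lt_one (show (0:ℝ) < 1/10 by norm_num) hc1
  refine ⟨n + 1, fun K hK => ?_⟩
  have hK1 : 0 < K := lt_of_lt_of_le (Nat.succ_pos n) hK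
  rw [hBeq]
  apply specRad_le_conj _ D Di hDDi hDiD (by norm_num : (0:ℝ) ≤ 0.9)
  have hsplit : Di * (Gmat L μ σ α ^ K + B) * D
      = Di * Gmat L μ σ α ^ K * D + Di * B * D := by
    rw [Matrix.mul_add, Matrix.add_mul]
  rw [hsplit, conjPowAux hDDi hDiD K]
  have hmadd : (((Di * Gmat L μ σ α * D) ^ K) + Di * B * D).map Complex.ofReal
      = ((Di * Gmat L μ σ α * D) ^ K).map Complex.ofReal
        + (Di * B * D).map Complex.ofReal := by
    ext i j
    simp [Matrix.map_apply]
  rw [hmadd]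
  have hmpow : ((Di * Gmat L μ σ α * D) ^ K).map Complex.ofReal
      = ((Di * Gmat L μ σ α * D).map Complex.ofReal) ^ K :=
    map_pow (Complex.ofRealHom.mapMatrix) (Di * Gmat L μ σ α * D) K
  have h1 : ‖((Di * Gmat L μ σ α * D) ^ K).map Complex.ofReal‖ ≤ c ^ K := by
    rw [hmpow]
    exact le_trans (norm_pow_le' _ hK1) (pow_le_pow_left₀ (norm_nonneg _) hGn K)
  have h2 : c ^ K ≤ c ^ n := by
    calc c ^ K = c ^ n * c ^ (K - n) := by rw [← pow_add]; congr 1; omega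
      _ ≤ c ^ n * 1 := by
          apply mul_le_mul_of_nonneg_left _ (pow_nonneg hc0 n)
          exact pow_le_one₀ hc0 (le_of_lt hc1)
      _ = c ^ n := mul_one _
  calc ‖((Di * Gmat L μ σ α * D) ^ K).map Complex.ofReal + (Di * B * D).map Complex.ofReal‖
      ≤ ‖((Di * Gmat L μ σ α * D) ^ K).map Complex.ofReal‖
        + ‖(Di * B * D).map Complex.ofReal‖ := norm_add_le _ _
    _ ≤ 1/10 + 4/5 := add_le_add (le_trans h1 (le_trans h2 (le_of_lt hn))) hBn
    _ ≤ 0.9 := by norm_num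

/-- With `α = (1−σ²)²/(200·Q·L)` and `Q = L/μ`, for all sufficiently large inner
loop lengths `K`, the outer-loop iteration matrix `G_α^K + (I − G_α)⁻¹H_α` has
spectral radius at most `0.9`. -/
theorem specRad_outer_loop_matrix_le (L μ σ : ℝ)
    (hμ : 0 < μ) (hμL : μ ≤ L) (hσ0 : 0 < σ) (hσ1 : σ < 1) :
    let α : ℝ := (1 - σ ^ 2) ^ 2 / (200 * (L / μ) * L)
    ∃ K₀ : ℕ, ∀ K ≥ K₀,
      specRad (Gmat L μ σ α ^ K + (1 - Gmat L μ σ α)⁻¹ * Hmat L μ σ α) ≤ 0.9 := by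
  intro α
  exact gt_aux L μ σ α hμ hμL hσ0 hσ1 rfl
end
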